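/- arXiv:1508.07451 — 8 statements merged into one kernel-verified Lean document; each statement's English description precedes it below -/
import Mathlib

section
/- Let (G, a, b) be an atomic chiral rotation pair. Then either Subgroup.zpowers a is core-free in G or Subgroup.zpowers b is core-free in G (i.e., at least one of these cyclic subgroups has trivial normal core). -/
/-- A rotation pair of type `(p, q)`: the group is generated by `a` and `b`,
`a` has order `p`, `b` has order `q`, `p, q ≥ 2`, `(a*b)^2 = 1`, and the cyclic
subgroups generated by `a` and `b` intersect trivially. -/
def IsRotPair {G : Type*} [Group G] (a b : G) (p q : ℕ) : Prop :=
  Subgroup.closure ({a, b} : Set G) = ⊤ ∧ orderOf a = p ∧ orderOf b = q ∧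
    2 ≤ p ∧ 2 ≤ q ∧ (a * b) ^ 2 = 1 ∧
    Subgroup.zpowers a ⊓ Subgroup.zpowers b = ⊥

/-- Tightness: every element is `a ^ i * b ^ j` for some integers `i, j`. -/
def IsTight {G : Type*} [Group G] (a b : G) : Prop :=
  ∀ g : G, ∃ i j : ℤ, g = a ^ i * b ^ j

/-- Orientably regular: some group automorphism inverts both generators. -/
def IsOrientablyRegular {G : Type*} [Group G] (a b : G) : Prop :=
  ∃ φ : G ≃* G, φ a = a⁻¹ ∧ φ b = b⁻¹

/-- Chiral: no group automorphism inverts both generators. -/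
def IsChiral {G : Type*} [Group G] (a b : G) : Prop :=
  ¬ IsOrientablyRegular a b

/-- `(G, a, b)` covers `(H, a', b')` if a homomorphism sends `a ↦ a'`, `b ↦ b'`. -/
def Covers {G H : Type*} [Group G] [Group H] (a b : G) (a' b' : H) : Prop :=
  ∃ f : G →* H, f a = a' ∧ f b = b'

open Subgroup QuotientGroup

section Helpers

variable {G H H' : Type*} [Group G] [Group H] [Group H']

lemma rotPair_swap {a b : G} {p q : ℕ} (h : IsRotPair a b p q) : IsRotPair b a q p := by
  obtain ⟨hcl, hpa, hpb, hp2, hq2, hrel, hinf⟩ := h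
  refine ⟨by rwa [Set.pair_comm], hpb, hpa, hq2, hp2, ?_, by rwa [inf_comm]⟩
  have h2 : (b * a) ^ 2 = a⁻¹ * ((a * b) ^ 2) * a := by rw [pow_two, pow_two]; group
  rw [h2, hrel]; group

lemma tight_swap {a b : G} (h : IsTight a b) : IsTight b a := by
  intro g
  obtain ⟨i, j, hij⟩ := h g⁻¹
  exact ⟨-j, -i, by rw [zpow_neg, zpow_neg, ← mul_inv_rev, ← hij, inv_inv]⟩

lemma orientablyRegular_congr (e : H ≃* H') {a b : H}
    (h : IsOrientablyRegular (e a) (e b)) : IsOrientablyRegular a b := by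
  obtain ⟨φ, h1, h2⟩ := h
  refine ⟨(e.trans φ).trans e.symm, ?_, ?_⟩
  · simp only [MulEquiv.trans_apply, h1, ← map_inv, MulEquiv.symm_apply_apply]
  · simp only [MulEquiv.trans_apply, h2, ← map_inv, MulEquiv.symm_apply_apply]

lemma rotPair_congr (e : H ≃* H') {a b : H} {p q : ℕ} (h : IsRotPair a b p q) :
    IsRotPair (e a) (e b) p q := by
  obtain ⟨hcl, hpa, hpb, hp2, hq2, hrel, hinf⟩ := h
  refine ⟨?_, by rw [e.orderOf_eq, hpa],
    by rw [e.orderOf_eq, hpb], hp2, hq2, ?_, ?_⟩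
  · have himg : ({e a, e b} : Set H') = e.toMonoidHom '' {a, b} := by
      simp [Set.image_insert_eq]
    rw [himg, ← MonoidHom.map_closure, hcl]
    exact Subgroup.map_top_of_surjective _ e.surjective
  · rw [← map_mul, ← map_pow, hrel, map_one]
  · ext x
    simp only [Subgroup.mem_inf, Subgroup.mem_bot]
    constructor
    · rintro ⟨hxa, hxb⟩
      obtain ⟨i, hi⟩ := Subgroup.mem_zpowers_iff.mp hxa
      obtain ⟨j, hj⟩ := Subgroup.mem_zpowers_iff.mp hxb
      rw [← map_zpow] at hi hj
      have hab : a ^ i = b ^ j := e.injective (hi.trans hj.symm)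
      have hmem : a ^ i ∈ Subgroup.zpowers a ⊓ Subgroup.zpowers b :=
        ⟨Subgroup.mem_zpowers_iff.mpr ⟨i, rfl⟩, Subgroup.mem_zpowers_iff.mpr ⟨j, hab.symm⟩⟩
      rw [hinf, Subgroup.mem_bot] at hmem
      rw [← hi, hmem, map_one]
    · rintro rfl
      exact ⟨one_mem _, one_mem _⟩

lemma tight_congr (e : H ≃* H') {a b : H} (h : IsTight a b) : IsTight (e a) (e b) := by
  intro g
  obtain ⟨i, j, hij⟩ := h (e.symm g)
  refine ⟨i, j, ?_⟩
  have h2 := congrArg e hij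
  simpa [map_mul, map_zpow] using h2

lemma covers_congr {a b : G} {a' b' : H} (e : H ≃* H') (h : Covers a b a' b') :
    Covers a b (e a') (e b') := by
  obtain ⟨f, h1, h2⟩ := h
  exact ⟨e.toMonoidHom.comp f, by simp [h1], by simp [h2]⟩

lemma tight_quot {a b : G} (N : Subgroup G) [N.Normal] (h : IsTight a b) :
    IsTight ((mk' N) a) ((mk' N) b) := by
  intro g
  obtain ⟨g0, rfl⟩ := mk'_surjective N g
  obtain ⟨i, j, hij⟩ := h g0
  exact ⟨i, j, by rw [hij, map_mul, map_zpow, map_zpow]⟩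

lemma quot_rotPair [Finite G] {a b : G} {p q : ℕ} {N : Subgroup G} [N.Normal]
    (hNa : N ≤ Subgroup.zpowers a) (hrot : IsRotPair a b p q) (haN : a ∉ N) :
    IsRotPair ((mk' N) a) ((mk' N) b) (orderOf ((mk' N) a)) q ∧
      (N ≠ ⊥ → orderOf ((mk' N) a) < p) := by
  obtain ⟨hcl, hpa, hpb, hp2, hq2, hrel, hinf⟩ := hrot
  have hbq : ∀ k : ℤ, ((mk' N) b) ^ k = 1 → b ^ k = 1 := by
    intro k hk
    rw [← map_zpow] at hk
    have hmem : b ^ k ∈ N := by rwa [← QuotientGroup.ker_mk' N, MonoidHom.mem_ker]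
    have h2 : b ^ k ∈ Subgroup.zpowers a ⊓ Subgroup.zpowers b :=
      ⟨hNa hmem, zpow_mem (Subgroup.mem_zpowers b) k⟩
    rwa [hinf, Subgroup.mem_bot] at h2
  constructor
  · refine ⟨?_, rfl, ?_, ?_, hq2, ?_, ?_⟩
    · have himg : ({(mk' N) a, (mk' N) b} : Set (G ⧸ N)) = (mk' N) '' {a, b} := by
        simp [Set.image_insert_eq]
      rw [himg, ← MonoidHom.map_closure, hcl]
      exact Subgroup.map_top_of_surjective _ (mk'_surjective N)
    · -- orderOf (mk b) = q
      refine Nat.dvd_antisymm (hpb ▸ orderOf_map_dvd _ b) ?_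
      rw [← hpb]
      apply orderOf_dvd_of_pow_eq_one
      have h2 := hbq (orderOf ((mk' N) b) : ℤ) (by
        rw [zpow_natCast]; exact pow_orderOf_eq_one _)
      rwa [zpow_natCast] at h2
    · -- 2 ≤ orderOf (mk a)
      have ha1 : (mk' N) a ≠ 1 := by
        rw [Ne, ← MonoidHom.mem_ker, QuotientGroup.ker_mk']
        exact haN
      have h0 : orderOf ((mk' N) a) ≠ 0 := (orderOf_pos _).ne'
      have h1 : orderOf ((mk' N) a) ≠ 1 := by
        rw [Ne, orderOf_eq_one_iff]
        exact ha1
      omega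
    · rw [← map_mul, ← map_pow, hrel, map_one]
    · ext x
      simp only [Subgroup.mem_inf, Subgroup.mem_bot]
      constructor
      · rintro ⟨hxa, hxb⟩
        obtain ⟨i, hi⟩ := Subgroup.mem_zpowers_iff.mp hxa
        obtain ⟨j, hj⟩ := Subgroup.mem_zpowers_iff.mp hxb
        have h1 : (mk' N) (a ^ i * b ^ (-j)) = 1 := by
          rw [map_mul, map_zpow, map_zpow, zpow_neg, hi, hj, mul_inv_cancel]
        have h2 : a ^ i * b ^ (-j) ∈ N := by rwa [← QuotientGroup.ker_mk' N, MonoidHom.mem_ker]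
        have h3 : b ^ (-j) ∈ Subgroup.zpowers a := by
          have h4 := mul_mem (zpow_mem (Subgroup.mem_zpowers a) (-i)) (hNa h2)
          have heq : a ^ (-i) * (a ^ i * b ^ (-j)) = b ^ (-j) := by group
          rwa [heq] at h4
        have h5 : b ^ (-j) ∈ Subgroup.zpowers a ⊓ Subgroup.zpowers b :=
          ⟨h3, zpow_mem (Subgroup.mem_zpowers b) _⟩
        rw [hinf, Subgroup.mem_bot, zpow_neg, inv_eq_one] at h5
        rw [← hj, ← map_zpow, h5, map_one]
      · rintro rfl
        exact ⟨one_mem _, one_mem _⟩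
  · -- strict inequality
    intro hN
    obtain ⟨⟨n, hnN⟩, hn1⟩ := Subgroup.ne_bot_iff_exists_ne_one.mp hN
    have hn1' : n ≠ 1 := by simpa [Subtype.ext_iff] using hn1
    obtain ⟨k, hk⟩ := Subgroup.mem_zpowers_iff.mp (hNa hnN)
    have hk1 : ((mk' N) a) ^ k = 1 := by
      rw [← map_zpow, hk, ← MonoidHom.mem_ker, QuotientGroup.ker_mk']
      exact hnN
    have hdvd : (orderOf ((mk' N) a) : ℤ) ∣ k := orderOf_dvd_iff_zpow_eq_one.mpr hk1
    have hdvd' : orderOf ((mk' N) a) ∣ p := hpa ▸ orderOf_map_dvd _ a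
    have hne : orderOf ((mk' N) a) ≠ p := by
      intro heq
      have : a ^ k = 1 := orderOf_dvd_iff_zpow_eq_one.mp (by rw [hpa, ← heq]; exact hdvd)
      exact hn1' (by rw [← hk, this])
    exact Nat.lt_of_le_of_ne (Nat.le_of_dvd (by omega) hdvd') hne

lemma combine_aux {K : Type*} [Group K] (f : G →* K) (hinj : Function.Injective f)
    (Φ : K ≃* K) (hmap : f.range.map (Φ : K →* K) = f.range) {x y : G}
    (hxy : Φ (f x) = f y) :
    (((MonoidHom.ofInjective hinj).trans
        ((Φ.subgroupMap f.range).trans (MulEquiv.subgroupCongr hmap))).trans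
      (MonoidHom.ofInjective hinj).symm) x = y := by
  have h1 : ((Φ.subgroupMap f.range).trans (MulEquiv.subgroupCongr hmap))
      ((MonoidHom.ofInjective hinj) x) = (MonoidHom.ofInjective hinj) y := by
    apply Subtype.ext
    rw [MulEquiv.trans_apply, MulEquiv.subgroupCongr_apply, MulEquiv.coe_subgroupMap_apply,
      MonoidHom.ofInjective_apply, MonoidHom.ofInjective_apply]
    exact hxy
  rw [MulEquiv.trans_apply, MulEquiv.trans_apply, h1, MulEquiv.symm_apply_apply]

end Helpers

/-- An atomic chiral rotation pair of type `(p, q)`: a tight chiral rotation pair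
covering no tight chiral rotation pair of type `(p', q)` with `p' < p` nor one of
type `(p, q')` with `q' < q`. -/
def IsAtomicPair {G : Type*} [Group G] (a b : G) (p q : ℕ) : Prop :=
  IsRotPair a b p q ∧ IsTight a b ∧ IsChiral a b ∧
  (∀ (H : Type) (instH : Group H) (_ : Finite H) (a' b' : H) (p' : ℕ), p' < p →
      @IsRotPair H instH a' b' p' q → @IsTight H instH a' b' → @IsChiral H instH a' b' →
      ¬ @Covers G H _ instH a b a' b') ∧
  (∀ (H : Type) (instH : Group H) (_ : Finite H) (a' b' : H) (q' : ℕ), q' < q →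
      @IsRotPair H instH a' b' p q' → @IsTight H instH a' b' → @IsChiral H instH a' b' →
      ¬ @Covers G H _ instH a b a' b')

/-- In an atomic chiral rotation pair, `zpowers a` or `zpowers b` is core-free. -/
theorem atomic_core_free {G : Type*} [Group G] [Finite G] (a b : G) (p q : ℕ)
    (h : IsAtomicPair a b p q) :
    (Subgroup.zpowers a).normalCore = ⊥ ∨ (Subgroup.zpowers b).normalCore = ⊥ := by
  by_contra hcon
  push_neg at hcon
  obtain ⟨hA, hB⟩ := hcon
  obtain ⟨hrot, htight, hchiral, hatomA, hatomB⟩ := h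
  obtain ⟨hcl, hpa, hpb, hp2, hq2, hrel, hinf⟩ := id hrot
  set N := (Subgroup.zpowers a).normalCore with hN
  set M := (Subgroup.zpowers b).normalCore with hM
  have hNa : N ≤ Subgroup.zpowers a := Subgroup.normalCore_le _
  have hMb : M ≤ Subgroup.zpowers b := Subgroup.normalCore_le _
  -- Case: a ∈ N (so ⟨a⟩ is normal)
  by_cases haN : a ∈ N
  · have h1 : b * a * b⁻¹ ∈ Subgroup.zpowers a :=
      hNa ((Subgroup.normalCore_normal _).conj_mem a haN b)
    obtain ⟨k, hk⟩ := Subgroup.mem_zpowers_iff.mp h1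
    have hbab : b * a * b = a⁻¹ := by
      apply eq_inv_of_mul_eq_one_right
      calc a * (b * a * b) = (a * b) ^ 2 := by rw [pow_two]; group
        _ = 1 := hrel
    have hinvv : b⁻¹ * a⁻¹ * b⁻¹ = a := by rw [← hbab]; group
    have h3 : a * (b * a * b⁻¹) = b⁻¹ * b⁻¹ := by
      calc a * (b * a * b⁻¹) = (b⁻¹ * a⁻¹ * b⁻¹) * (b * a * b⁻¹) := by rw [hinvv]
        _ = b⁻¹ * b⁻¹ := by group
    have h5 : b⁻¹ * b⁻¹ = a ^ (k + 1) := by rw [← h3, ← hk]; group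
    have hmem : b⁻¹ * b⁻¹ ∈ Subgroup.zpowers a ⊓ Subgroup.zpowers b := by
      constructor
      · exact h5 ▸ zpow_mem (Subgroup.mem_zpowers a) (k + 1)
      · have hb2' : b⁻¹ * b⁻¹ = b ^ (-2 : ℤ) := by group
        rw [hb2']
        exact zpow_mem (Subgroup.mem_zpowers b) _
    rw [hinf, Subgroup.mem_bot] at hmem
    have hb2 : b⁻¹ = b := by
      have h6 := eq_inv_of_mul_eq_one_left hmem
      rwa [inv_inv] at h6
    refine hchiral ⟨MulAut.conj b, ?_, ?_⟩
    · show b * a * b⁻¹ = a⁻¹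
      rw [hb2, hbab]
    · show b * b * b⁻¹ = b⁻¹
      have hbb1 : b * b = 1 := by
        calc b * b = (b⁻¹ * b⁻¹)⁻¹ := by rw [mul_inv_rev, inv_inv]
          _ = 1 := by rw [hmem, inv_one]
      rw [hb2, hbb1, one_mul]
  -- Case: b ∈ M
  by_cases hbM : b ∈ M
  · have h1 : a * b * a⁻¹ ∈ Subgroup.zpowers b :=
      hMb ((Subgroup.normalCore_normal _).conj_mem b hbM a)
    obtain ⟨k, hk⟩ := Subgroup.mem_zpowers_iff.mp h1
    have haba : a * b * a = b⁻¹ := by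
      apply eq_inv_of_mul_eq_one_left
      calc (a * b * a) * b = (a * b) ^ 2 := by rw [pow_two]; group
        _ = 1 := hrel
    have hbab : b * a * b = a⁻¹ := by
      apply eq_inv_of_mul_eq_one_right
      calc a * (b * a * b) = (a * b) ^ 2 := by rw [pow_two]; group
        _ = 1 := hrel
    have h3 : b * (a * b * a⁻¹) = a⁻¹ * a⁻¹ := by
      calc b * (a * b * a⁻¹) = (b * a * b) * a⁻¹ := by group
        _ = a⁻¹ * a⁻¹ := by rw [hbab]
    have h5 : a⁻¹ * a⁻¹ = b ^ (k + 1) := by rw [← h3, ← hk]; group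
    have hmem : a⁻¹ * a⁻¹ ∈ Subgroup.zpowers a ⊓ Subgroup.zpowers b := by
      constructor
      · have ha2' : a⁻¹ * a⁻¹ = a ^ (-2 : ℤ) := by group
        rw [ha2']
        exact zpow_mem (Subgroup.mem_zpowers a) _
      · exact h5 ▸ zpow_mem (Subgroup.mem_zpowers b) (k + 1)
    rw [hinf, Subgroup.mem_bot] at hmem
    have ha2 : a⁻¹ = a := by
      have h6 := eq_inv_of_mul_eq_one_left hmem
      rwa [inv_inv] at h6
    refine hchiral ⟨MulAut.conj a, ?_, ?_⟩
    · show a * a * a⁻¹ = a⁻¹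
      have haa1 : a * a = 1 := by
        calc a * a = (a⁻¹ * a⁻¹)⁻¹ := by rw [mul_inv_rev, inv_inv]
          _ = 1 := by rw [hmem, inv_one]
      rw [ha2, haa1, one_mul]
    · show a * b * a⁻¹ = b⁻¹
      rw [ha2, haba]
  -- Main case: both quotients exist
  obtain ⟨rotA, hltA'⟩ := quot_rotPair hNa hrot haN
  have hltA : orderOf ((mk' N) a) < p := hltA' hA
  have tightA := tight_quot (a := a) (b := b) N htight
  have regA : IsOrientablyRegular ((mk' N) a) ((mk' N) b) := by
    by_contra hchA
    let e : Shrink.{0} (G ⧸ N) ≃* (G ⧸ N) := Shrink.mulEquiv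
    refine hatomA (Shrink.{0} (G ⧸ N)) _ (Finite.of_equiv _ (equivShrink _))
      (e.symm ((mk' N) a)) (e.symm ((mk' N) b)) (orderOf ((mk' N) a)) hltA
      (rotPair_congr e.symm rotA) (tight_congr e.symm tightA)
      (fun hreg => hchA (orientablyRegular_congr e.symm hreg)) ?_
    exact covers_congr e.symm ⟨mk' N, rfl, rfl⟩
  obtain ⟨rotB', hltB'⟩ := quot_rotPair hMb (rotPair_swap hrot) hbM
  have hltB : orderOf ((mk' M) b) < q := hltB' hB
  have rotB : IsRotPair ((mk' M) a) ((mk' M) b) p (orderOf ((mk' M) b)) := rotPair_swap rotB'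
  have tightB := tight_quot (a := a) (b := b) M htight
  have regB : IsOrientablyRegular ((mk' M) a) ((mk' M) b) := by
    by_contra hchB
    let e : Shrink.{0} (G ⧸ M) ≃* (G ⧸ M) := Shrink.mulEquiv
    refine hatomB (Shrink.{0} (G ⧸ M)) _ (Finite.of_equiv _ (equivShrink _))
      (e.symm ((mk' M) a)) (e.symm ((mk' M) b)) (orderOf ((mk' M) b)) hltB
      (rotPair_congr e.symm rotB) (tight_congr e.symm tightB)
      (fun hreg => hchB (orientablyRegular_congr e.symm hreg)) ?_
    exact covers_congr e.symm ⟨mk' M, rfl, rfl⟩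
  -- Combine the two regular quotients into an automorphism of G
  obtain ⟨φ, hφa, hφb⟩ := regA
  obtain ⟨ψ, hψa, hψb⟩ := regB
  set f : G →* (G ⧸ N) × (G ⧸ M) := (mk' N).prod (mk' M) with hf
  have hker : f.ker = ⊥ := by
    rw [hf, MonoidHom.ker_prod, QuotientGroup.ker_mk', QuotientGroup.ker_mk', eq_bot_iff, ← hinf]
    exact inf_le_inf hNa hMb
  have hinj : Function.Injective f := (MonoidHom.ker_eq_bot_iff f).mp hker
  set Φ : ((G ⧸ N) × (G ⧸ M)) ≃* ((G ⧸ N) × (G ⧸ M)) := φ.prodCongr ψ with hΦ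
  have hΦa : Φ (f a) = f a⁻¹ := by
    show (φ ((mk' N) a), ψ ((mk' M) a)) = ((mk' N) a⁻¹, (mk' M) a⁻¹)
    rw [hφa, hψa, map_inv, map_inv]
  have hΦb : Φ (f b) = f b⁻¹ := by
    show (φ ((mk' N) b), ψ ((mk' M) b)) = ((mk' N) b⁻¹, (mk' M) b⁻¹)
    rw [hφb, hψb, map_inv, map_inv]
  have hrange : f.range = Subgroup.closure {f a, f b} := by
    rw [MonoidHom.range_eq_map, ← hcl, MonoidHom.map_closure]
    congr 1
    simp [Set.image_insert_eq]
  have hmap : f.range.map (Φ : _ →* _) = f.range := by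
    rw [hrange, MonoidHom.map_closure]
    have himg : (Φ : _ →* _) '' ({f a, f b} : Set _) = {(f a)⁻¹, (f b)⁻¹} := by
      simp only [Set.image_insert_eq, Set.image_singleton, MonoidHom.coe_coe]
      rw [hΦa, hΦb, map_inv, map_inv]
    rw [himg]
    have hset : ({(f a)⁻¹, (f b)⁻¹} : Set _) = ({f a, f b} : Set _)⁻¹ := by
      ext x
      simp [Set.mem_inv, inv_eq_iff_eq_inv, eq_comm]
    rw [hset, Subgroup.closure_inv]
  exact hchiral ⟨_, combine_aux f hinj Φ hmap hΦa, combine_aux f hinj Φ hmap hΦb⟩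
end

section
/- Let (G, a, b) be a tight chiral rotation pair of type (p, q) with q ≥ p. Then there exists an integer q' dividing q with 2 ≤ q' < p such that the subgroup Subgroup.zpowers (b^q') is normal in G. -/
/-- A tight chiral rotation pair of type `(p, q)` with `q ≥ p` has a normal subgroup
`zpowers (b ^ q')` for some divisor `q'` of `q` with `2 ≤ q' < p`. -/
theorem tight_chiral_normal_subgroup {G : Type*} [Group G] [Finite G] (a b : G)
    (p q : ℕ) (hpair : IsRotPair a b p q) (htight : IsTight a b)
    (hchiral : IsChiral a b) (hpq : p ≤ q) :
    ∃ q' : ℕ, q' ∣ q ∧ 2 ≤ q' ∧ q' < p ∧ (Subgroup.zpowers (b ^ q')).Normal := by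
  obtain ⟨hclo, hoa, hob, hp2, hq2, habsq, hint⟩ := hpair
  have hpz : NeZero p := ⟨by omega⟩
  set t := a * b with ht
  have ht2 : t * t = 1 := by rw [← sq]; exact habsq
  have htinv : t⁻¹ = t := inv_eq_of_mul_eq_one_right ht2
  set c := t * b * t⁻¹ with hc
  set B := Subgroup.zpowers b with hB
  set C := B ⊓ Subgroup.zpowers c with hCdef
  have hmemC : ∀ x : G, x ∈ C ↔ ((∃ k : ℤ, b ^ k = x) ∧ (∃ l : ℤ, c ^ l = x)) := by
    intro x
    rw [hCdef, Subgroup.mem_inf, hB, Subgroup.mem_zpowers_iff, Subgroup.mem_zpowers_iff]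
  -- conjugation by t equals conjugation by a on powers of b
  have hconj : ∀ s : ℤ, t * b ^ s * t⁻¹ = a * b ^ s * a⁻¹ := by
    intro s; rw [ht, mul_inv_rev]; group
  have hczpow : ∀ s : ℤ, c ^ s = t * b ^ s * t⁻¹ := by
    intro s; rw [hc]; exact conj_zpow
  -- C is normal
  have hbmem : ∀ x ∈ C, b * x * b⁻¹ = x := by
    intro x hx
    obtain ⟨k, hk⟩ := ((hmemC x).mp hx).1
    rw [← hk]; group
  have hbn : b ∈ Subgroup.normalizer (C : Set G) := by
    rw [Subgroup.mem_normalizer_iff]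
    intro h
    constructor
    · intro hh; rw [hbmem h hh]; exact hh
    · intro hh
      obtain ⟨k, hk⟩ := ((hmemC _).mp hh).1
      have e2 : b * b ^ k * b⁻¹ = b ^ k := by group
      have e3 : h = b ^ k := by
        have e4 : h = b⁻¹ * (b * h * b⁻¹) * b := by group
        rw [e4, ← hk]; group
      have e5 : b * h * b⁻¹ = h := by rw [e3]; exact e2
      rwa [e5] at hh
  have htmemfwd : ∀ x ∈ C, t * x * t⁻¹ ∈ C := by
    intro x hx
    obtain ⟨⟨k, hk⟩, ⟨l, hl⟩⟩ := (hmemC x).mp hx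
    rw [hmemC]
    constructor
    · refine ⟨l, ?_⟩
      rw [← hl, hczpow l, htinv]
      have e : t * (t * b ^ l * t) * t = (t * t) * b ^ l * (t * t) := by group
      rw [e, ht2, one_mul, mul_one]
    · refine ⟨k, ?_⟩
      rw [hczpow k, hk]
  have htn : t ∈ Subgroup.normalizer (C : Set G) := by
    rw [Subgroup.mem_normalizer_iff]
    intro h
    constructor
    · exact fun hh => htmemfwd h hh
    · intro hh
      have h2 := htmemfwd _ hh
      have e : t * (t * h * t⁻¹) * t⁻¹ = h := by
        rw [htinv]
        have e2 : t * (t * h * t) * t = (t * t) * h * (t * t) := by group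
        rw [e2, ht2, one_mul, mul_one]
      rwa [e] at h2
  have han : a ∈ Subgroup.normalizer (C : Set G) := by
    have e : a = t * b⁻¹ := by rw [ht]; group
    rw [e]
    exact mul_mem htn (inv_mem hbn)
  have CN : C.Normal := by
    have hle : Subgroup.closure ({a, b} : Set G) ≤ Subgroup.normalizer (C : Set G) := by
      rw [Subgroup.closure_le]
      intro x hx
      rcases hx with rfl | hx
      · exact han
      · rw [Set.mem_singleton_iff] at hx
        subst hx
        exact hbn
    constructor
    intro x hx g
    have hg' : g ∈ Subgroup.normalizer (C : Set G) := by
      apply hle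
      rw [hclo]
      exact Subgroup.mem_top g
    exact (Subgroup.mem_normalizer_iff.mp hg' x).mp hx
  -- the integer subgroup of exponents landing in C
  set K : AddSubgroup ℤ :=
    { carrier := {k : ℤ | b ^ k ∈ C}
      zero_mem' := by simp only [Set.mem_setOf_eq, zpow_zero]; exact one_mem C
      add_mem' := by
        intro x y hx hy
        simp only [Set.mem_setOf_eq, zpow_add] at *
        exact mul_mem hx hy
      neg_mem' := by
        intro x hx
        simp only [Set.mem_setOf_eq, zpow_neg] at *
        exact inv_mem hx } with hKdef
  have hKmem : ∀ k : ℤ, k ∈ K ↔ b ^ k ∈ C := fun k => Iff.rfl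
  obtain ⟨g, hg⟩ := Int.subgroup_cyclic K
  have hgmem : ∀ k : ℤ, b ^ k ∈ C ↔ g ∣ k := by
    intro k
    rw [← hKmem, hg, AddSubgroup.mem_closure_singleton]
    constructor
    · rintro ⟨n, rfl⟩; exact Dvd.intro_left n (by rw [smul_eq_mul])
    · rintro ⟨n, rfl⟩; exact ⟨n, by rw [smul_eq_mul, mul_comm]⟩
  have hqK : g ∣ (q : ℤ) := by
    rw [← hgmem]
    have e : b ^ (q : ℤ) = 1 := by
      rw [zpow_natCast, ← hob, pow_orderOf_eq_one]
    rw [e]; exact one_mem C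
  set q' : ℕ := g.natAbs with hq'
  have hgq' : (q' : ℤ) = g ∨ (q' : ℤ) = -g := by
    rcases Int.natAbs_eq g with h | h
    · left; omega
    · right; omega
  have hdvdq : q' ∣ q := Int.natAbs_dvd_natAbs.mpr hqK
  have hgne : g ≠ 0 := by
    intro h0
    rw [h0] at hqK
    simp at hqK
    omega
  have hq'pos : 0 < q' := Int.natAbs_pos.mpr hgne
  -- the inf is trivial: helper
  have hbot : ∀ x : G, x ∈ Subgroup.zpowers a → x ∈ Subgroup.zpowers b → x = 1 := by
    intro x h1 h2
    have hx : x ∈ Subgroup.zpowers a ⊓ B := ⟨h1, h2⟩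
    rw [hint] at hx
    exact hx
  -- q' ≥ 2 : otherwise orientably regular
  have hq'2 : 2 ≤ q' := by
    by_contra hlt
    have hq'1 : q' = 1 := by omega
    have hg1 : g = 1 ∨ g = -1 := by
      rcases hgq' with h | h
      · left; omega
      · right; omega
    have hbC : b ∈ C := by
      rw [← zpow_one b, hgmem]
      rcases hg1 with rfl | rfl
      · exact one_dvd _
      · exact ⟨-1, by norm_num⟩
    obtain ⟨m, hm⟩ := ((hmemC b).mp hbC).2
    -- b = c ^ m = a b^m a⁻¹, so b * a = a * b ^ m
    have hmb : a * b ^ m * a⁻¹ = b := by rw [← hconj m, ← hczpow m]; exact hm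
    have hba : b * a = a * b ^ m := by
      conv_lhs => rw [← hmb]
      group
    have habab : a * b * (a * b) = 1 := by rw [← sq]; exact habsq
    have key : a * a * b ^ (m + 1) = 1 := by
      calc a * a * b ^ (m + 1) = a * (a * b ^ m) * b := by rw [zpow_add, zpow_one]; group
        _ = a * (b * a) * b := by rw [hba]
        _ = a * b * (a * b) := by group
        _ = 1 := habab
    have ha2 : a * a = 1 := by
      apply hbot
      · exact ⟨2, by show a ^ (2 : ℤ) = a * a; rw [zpow_two]⟩
      · have e : a * a = (b ^ (m + 1))⁻¹ := by
          rw [eq_inv_iff_mul_eq_one]; exact key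
        rw [e]
        exact ⟨-(m + 1), by show b ^ (-(m+1)) = (b ^ (m + 1))⁻¹; rw [zpow_neg]⟩
    have hbm1 : b ^ (m + 1) = 1 := by
      rw [ha2, one_mul] at key; exact key
    have hbm : b ^ m = b⁻¹ := by
      have e : b ^ m * b = 1 := by
        have e2 : b ^ m * b = b ^ (m + 1) := by rw [zpow_add, zpow_one]
        rw [e2]; exact hbm1
      exact eq_inv_of_mul_eq_one_left e
    have hainv : a⁻¹ = a := inv_eq_of_mul_eq_one_right ha2
    have hba' : b * a = a * b⁻¹ := by rw [← hbm]; exact hba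
    refine hchiral ⟨MulAut.conj a, ?_, ?_⟩
    · simp only [MulAut.conj_apply]
      rw [hainv, ha2, one_mul]
    · simp only [MulAut.conj_apply]
      calc a * b * a⁻¹ = a * (b * a) := by rw [hainv, mul_assoc]
        _ = a * (a * b⁻¹) := by rw [hba']
        _ = a * a * b⁻¹ := by rw [mul_assoc]
        _ = b⁻¹ := by rw [ha2, one_mul]
  -- C = zpowers (b ^ q')
  have hCeq : Subgroup.zpowers (b ^ q') = C := by
    apply le_antisymm
    · rw [Subgroup.zpowers_le]
      rw [← zpow_natCast, hgmem]
      rcases hgq' with h | h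
      · rw [h]
      · rw [h]; exact dvd_neg.mpr dvd_rfl
    · intro x hx
      obtain ⟨⟨k, hk⟩, _⟩ := (hmemC x).mp hx
      have hgk : g ∣ k := by rw [← hgmem, hk]; exact hx
      have hq'k : (q' : ℤ) ∣ k := by
        rcases hgq' with h | h
        · rw [h]; exact hgk
        · rw [h]; exact (neg_dvd).mpr hgk
      obtain ⟨n, rfl⟩ := hq'k
      rw [Subgroup.mem_zpowers_iff]
      exact ⟨n, by rw [← hk, ← zpow_natCast, ← zpow_mul]⟩
  -- counting: q' + 1 ≤ p
  have hane : a ≠ 1 := by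
    intro h
    rw [h, orderOf_one] at hoa
    omega
  have hfact2 : ∀ k : ℤ, (↑(b ^ k * a) : G ⧸ B) ≠ ↑(1 : G) := by
    intro k h
    rw [QuotientGroup.eq] at h
    obtain ⟨s, hs⟩ := Subgroup.mem_zpowers_iff.mp h
    -- b^s = (b^k a)⁻¹ * 1 = a⁻¹ b⁻ᵏ  ⇒ a⁻¹ = b^s b^k ⇒ a ∈ zpowers b
    have e : a⁻¹ = b ^ s * b ^ k := by
      rw [hs]; group
    have hainv : a⁻¹ ∈ Subgroup.zpowers b := by
      rw [e]; exact mul_mem ⟨s, rfl⟩ ⟨k, rfl⟩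
    have : a = 1 := hbot a (Subgroup.mem_zpowers a) (by simpa using inv_mem hainv)
    exact hane this
  have hfact1 : ∀ k l : ℤ, (↑(b ^ k * a) : G ⧸ B) = ↑(b ^ l * a) → g ∣ (l - k) := by
    intro k l h
    rw [QuotientGroup.eq] at h
    obtain ⟨s, hs⟩ := Subgroup.mem_zpowers_iff.mp h
    -- b^s = (b^k a)⁻¹ (b^l a) = a⁻¹ b^(l-k) a
    have h1 : b ^ (l - k) = a * b ^ s * a⁻¹ := by
      rw [hs, zpow_sub]; group
    have h2 : b ^ (l - k) ∈ C := by
      rw [hmemC]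
      exact ⟨⟨l - k, rfl⟩, ⟨s, by rw [hczpow s, hconj s, h1]⟩⟩
    rwa [hgmem] at h2
  -- surjection from ZMod p onto G ⧸ B
  have hap : a ^ (p : ℤ) = 1 := by
    rw [zpow_natCast, ← hoa, pow_orderOf_eq_one]
  have hsurj : Function.Surjective
      (fun i : ZMod p => (↑(a ^ ((i.val : ℤ))) : G ⧸ B)) := by
    intro x
    induction x using QuotientGroup.induction_on with
    | H z =>
      obtain ⟨i, j, rfl⟩ := htight z
      refine ⟨(i : ZMod p), ?_⟩
      have hval : (((i : ZMod p).val : ℤ)) = i % p := ZMod.val_intCast i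
      have hmod : a ^ (((i : ZMod p).val : ℤ)) = a ^ i := by
        rw [hval]
        conv_rhs => rw [← Int.emod_add_mul_ediv i (p : ℤ)]
        rw [zpow_add, zpow_mul, hap, one_zpow, mul_one]
      show (↑(a ^ (((i : ZMod p).val : ℤ))) : G ⧸ B) = ↑(a ^ i * b ^ j)
      rw [hmod, QuotientGroup.eq]
      exact Subgroup.mem_zpowers_iff.mpr ⟨j, by group⟩
  have hcardq : Nat.card (G ⧸ B) ≤ p := by
    have h := Nat.card_le_card_of_surjective _ hsurj
    simpa [Nat.card_zmod] using h
  -- injection of Fin (q' + 1) into G ⧸ B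
  have hinj : Function.Injective (fun i : Fin (q' + 1) =>
      if (i : ℕ) < q' then (↑(b ^ ((i : ℕ) : ℤ) * a) : G ⧸ B) else ↑(1 : G)) := by
    intro i j hij
    simp only at hij
    by_cases hi : (i : ℕ) < q' <;> by_cases hj : (j : ℕ) < q'
    · rw [if_pos hi, if_pos hj] at hij
      have hd := hfact1 _ _ hij
      have habs : ((j : ℕ) : ℤ) - ((i : ℕ) : ℤ) = 0 := by
        by_contra hne
        have h1 : (g.natAbs : ℤ) ≤ |((j : ℕ) : ℤ) - ((i : ℕ) : ℤ)| := by
          rw [← Int.abs_eq_natAbs]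
          exact Int.le_of_dvd (abs_pos.mpr hne) ((abs_dvd _ _).mpr ((dvd_abs _ _).mpr hd))
        have hlt2 : |((j : ℕ) : ℤ) - ((i : ℕ) : ℤ)| < (q' : ℤ) :=
          abs_sub_lt_iff.mpr ⟨by omega, by omega⟩
        rw [← hq'] at h1
        exact absurd (lt_of_le_of_lt h1 hlt2) (lt_irrefl _)
      have : (i : ℕ) = (j : ℕ) := by omega
      exact Fin.ext this
    · rw [if_pos hi, if_neg hj] at hij
      exact absurd hij (hfact2 _)
    · rw [if_neg hi, if_pos hj] at hij
      exact absurd hij.symm (hfact2 _)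
    · have hib := i.isLt
      have hjb := j.isLt
      have : (i : ℕ) = (j : ℕ) := by omega
      exact Fin.ext this
  have hcount : q' + 1 ≤ Nat.card (G ⧸ B) := by
    have h := Nat.card_le_card_of_injective _ hinj
    simpa using h
  have hq'p : q' < p := by omega
  exact ⟨q', hdvdq, hq'2, hq'p, hCeq ▸ CN⟩
end

section
/- Let (G, a, b) be a tight chiral rotation pair of type (p, q), let q' be a divisor of q, and suppose the subgroup Subgroup.zpowers (b^q') is normal in G. Then there is an integer c with c² ≡ 1 (mod q/q') such that a * b^q' = b^(c·q') * a. Furthermore, a² commutes with b^q', and if p is odd then b^q' lies in the center of G. -/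
/-- If `zpowers (b ^ q')` is normal in a tight chiral rotation pair, then
`a * b ^ q' = b ^ (c q') * a` with `c² ≡ 1 (mod q/q')`, `a²` commutes with `b ^ q'`,
and if `p` is odd then `b ^ q'` is central. -/
theorem tight_chiral_central_element {G : Type*} [Group G] [Finite G] (a b : G)
    (p q q' : ℕ) (hpair : IsRotPair a b p q) (htight : IsTight a b)
    (hchiral : IsChiral a b) (hq' : q' ∣ q)
    (hnormal : (Subgroup.zpowers (b ^ q')).Normal) :
    (∃ c : ℤ, c ^ 2 ≡ 1 [ZMOD ((q / q' : ℕ) : ℤ)] ∧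
        a * b ^ q' = b ^ (c * (q' : ℤ)) * a) ∧
    Commute (a ^ 2) (b ^ q') ∧
    (Odd p → b ^ q' ∈ Subgroup.center G) := by
  obtain ⟨hgen, ha, hb, hp2, hq2, hab2, -⟩ := hpair
  obtain ⟨x, hx⟩ : ∃ x, b ^ q' = x := ⟨_, rfl⟩
  rw [hx] at hnormal ⊢
  have hq'0 : q' ≠ 0 := by
    rintro rfl
    rw [zero_dvd_iff] at hq'
    omega
  have hox : orderOf x = q / q' := by
    rw [← hx, orderOf_pow, hb, Nat.gcd_eq_right hq']
  have hbx : ∀ i : ℤ, b * x ^ i * b⁻¹ = x ^ i := fun i => by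
    have hcm : Commute b (x ^ i) := by
      rw [← hx]; exact ((Commute.refl b).pow_right q').zpow_right i
    rw [hcm.eq, mul_inv_cancel_right]
  have hbx1 : b * x * b⁻¹ = x := by simpa using hbx 1
  have hbab : a⁻¹ = b * a * b := by
    have h : a * (b * a * b) = 1 := by
      have h2 := hab2
      rw [sq] at h2
      calc a * (b * a * b) = a * b * (a * b) := by group
        _ = 1 := h2
    exact mul_eq_one_iff_inv_eq.mp h
  obtain ⟨c, hc⟩ := Subgroup.mem_zpowers_iff.mp
    (hnormal.conj_mem x (Subgroup.mem_zpowers x) a)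
  have h1 : a * x * a⁻¹ = x ^ c := hc.symm
  have h2 : a⁻¹ * x * a⁻¹⁻¹ = x ^ c := by
    calc a⁻¹ * x * a⁻¹⁻¹ = (b * a * b) * x * (b * a * b)⁻¹ := by rw [← hbab]
      _ = b * (a * (b * x * b⁻¹) * a⁻¹) * b⁻¹ := by group
      _ = b * (a * x * a⁻¹) * b⁻¹ := by rw [hbx1]
      _ = b * x ^ c * b⁻¹ := by rw [h1]
      _ = x ^ c := hbx c
  have hcc : x ^ (c * c) = x := by
    have hφ : (MulAut.conj a⁻¹) x = x ^ c := by rw [MulAut.conj_apply]; exact h2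
    have hkey : (MulAut.conj a⁻¹) (x ^ c) = x := by
      rw [MulAut.conj_apply, ← h1]; group
    rw [map_zpow, hφ, ← zpow_mul] at hkey
    exact hkey
  have hdvd : ((q / q' : ℕ) : ℤ) ∣ c * c - 1 := by
    rw [← hox, orderOf_dvd_iff_zpow_eq_one, zpow_sub, hcc, zpow_one, mul_inv_cancel]
  have hcomm2 : Commute (a ^ 2) x := by
    have hψ : (MulAut.conj a) x = x ^ c := by rw [MulAut.conj_apply]; exact h1
    have hkey : (MulAut.conj a) ((MulAut.conj a) x) = x := by
      rw [hψ, map_zpow, hψ, ← zpow_mul, hcc]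
    rw [MulAut.conj_apply, MulAut.conj_apply] at hkey
    have h3 : a ^ 2 * x * (a ^ 2)⁻¹ = x := by
      calc a ^ 2 * x * (a ^ 2)⁻¹ = a * (a * x * a⁻¹) * a⁻¹ := by
            rw [sq]; group
        _ = x := hkey
    exact mul_inv_eq_iff_eq_mul.mp h3
  refine ⟨⟨c, ?_, ?_⟩, hcomm2, ?_⟩
  · have h4 : (1 : ℤ) ≡ c ^ 2 [ZMOD ((q / q' : ℕ) : ℤ)] := by
      rw [Int.modEq_iff_dvd]
      simpa [sq] using hdvd
    exact h4.symm
  · have h5 : x ^ c = b ^ (c * (q' : ℤ)) := by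
      rw [← hx, ← zpow_natCast, ← zpow_mul, mul_comm]
    rw [← h5]
    exact mul_inv_eq_iff_eq_mul.mp h1
  · intro hodd
    obtain ⟨k, hk⟩ := hodd
    have hap : a ^ p = 1 := by rw [← ha]; exact pow_orderOf_eq_one a
    have haeq : a = ((a ^ 2) ^ k)⁻¹ := by
      rw [← pow_mul, eq_inv_iff_mul_eq_one, ← pow_succ']
      rw [show 2 * k + 1 = p from hk.symm]
      exact hap
    have hcax : Commute a x := by
      rw [haeq]
      exact (hcomm2.pow_left k).inv_left
    have hcbx : Commute b x := by
      rw [← hx]; exact (Commute.refl b).pow_right q'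
    have hle : Subgroup.closure ({a, b} : Set G) ≤ Subgroup.centralizer {x} := by
      rw [Subgroup.closure_le]
      intro y hy
      rw [SetLike.mem_coe, Subgroup.mem_centralizer_iff]
      intro z hz
      rw [Set.mem_singleton_iff] at hz
      subst hz
      rcases hy with h | h
      · rw [h]; exact hcax.symm.eq
      · rw [Set.mem_singleton_iff] at h
        rw [h]; exact hcbx.symm.eq
    rw [hgen] at hle
    refine Subgroup.mem_center_iff.mpr fun g => ?_
    exact (Subgroup.mem_centralizer_iff.mp (hle (Subgroup.mem_top g)) x rfl).symm
end

section
/- Every tight chiral rotation pair of type (p, q) covers some tight rotation pair (chiral or orientably regular) either of type (p', q) for some p' < p or of type (p, q') for some q' < q. Furthermore, every tight chiral rotation pair covers some tight orientably regular rotation pair. -/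
namespace TightRotAux

open Subgroup

universe u

variable {G : Type*} [Group G]

lemma triv_int {a b : G} (hbot : zpowers a ⊓ zpowers b = ⊥) {x : G}
    (h1 : x ∈ zpowers a) (h2 : x ∈ zpowers b) : x = 1 := by
  have hx : x ∈ zpowers a ⊓ zpowers b := ⟨h1, h2⟩
  rw [hbot, Subgroup.mem_bot] at hx
  exact hx

lemma relations {a b : G} (h : (a * b) ^ 2 = 1) :
    b * a = a⁻¹ * b⁻¹ ∧ a * b * a = b⁻¹ ∧ b * a * b = a⁻¹ := by
  have h4 : a * b * (a * b) = 1 := by rw [← pow_two]; exact h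
  have hbab : b * a * b = a⁻¹ := by
    have h5 : a * (b * a * b) = 1 := by rw [← h4]; group
    exact (inv_eq_of_mul_eq_one_right h5).symm
  have haba : a * b * a = b⁻¹ := by
    have h5 : (a * b * a) * b = 1 := by rw [← h4]; group
    exact (inv_eq_of_mul_eq_one_left h5).symm
  refine ⟨?_, haba, hbab⟩
  rw [← hbab]; group

lemma card_eq [Finite G] {a b : G} (hbot : zpowers a ⊓ zpowers b = ⊥)
    (ht : IsTight a b) : Nat.card G = orderOf a * orderOf b := by
  have hbij : Function.Bijective
      (fun z : (zpowers a) × (zpowers b) => (z.1 : G) * (z.2 : G)) := by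
    constructor
    · rintro ⟨⟨x, hx⟩, ⟨y, hy⟩⟩ ⟨⟨x', hx'⟩, ⟨y', hy'⟩⟩ h
      simp only [Prod.mk.injEq, Subtype.mk.injEq] at h ⊢
      have key : x'⁻¹ * x = y' * y⁻¹ := by
        calc x'⁻¹ * x = x'⁻¹ * (x * y) * y⁻¹ := by group
          _ = x'⁻¹ * (x' * y') * y⁻¹ := by rw [h]
          _ = y' * y⁻¹ := by group
      have h1 : x'⁻¹ * x = 1 :=
        triv_int hbot (mul_mem (inv_mem hx') hx) (key ▸ mul_mem hy' (inv_mem hy))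
      have h2 : y' * y⁻¹ = 1 := key ▸ h1
      exact ⟨(inv_mul_eq_one.mp h1).symm, (mul_inv_eq_one.mp h2).symm⟩
    · intro g
      obtain ⟨i, j, rfl⟩ := ht g
      exact ⟨⟨⟨a ^ i, zpow_mem (mem_zpowers a) i⟩, ⟨b ^ j, zpow_mem (mem_zpowers b) j⟩⟩, rfl⟩
  calc Nat.card G = Nat.card ((zpowers a) × (zpowers b)) :=
        (Nat.card_eq_of_bijective _ hbij).symm
    _ = orderOf a * orderOf b := by
        rw [Nat.card_prod, Nat.card_zpowers, Nat.card_zpowers]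

lemma subgroup_eq_of_le_card [Finite G] {H K : Subgroup G} (h : H ≤ K)
    (hc : Nat.card K ≤ Nat.card H) : H = K := by
  apply SetLike.coe_injective
  refine Set.eq_of_subset_of_ncard_le h ?_ (Set.toFinite _)
  rwa [← Nat.card_coe_set_eq, ← Nat.card_coe_set_eq]

lemma sub_of_zpowers [Finite G] {b : G} (K : Subgroup G) (hK : K ≤ zpowers b) :
    K = zpowers (b ^ (orderOf b / Nat.card K)) := by
  set q := orderOf b with hq
  set n := Nat.card K with hn
  have hdvd : n ∣ q := by
    have := Subgroup.card_dvd_of_le hK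
    rwa [Nat.card_zpowers] at this
  have hnpos : 0 < n := Nat.card_pos
  set d := q / n with hd
  have hdn : d * n = q := Nat.div_mul_cancel hdvd
  have hqpos : 0 < q := by rw [hq]; exact orderOf_pos b
  have hdpos : 0 < d := by
    rcases Nat.eq_zero_or_pos d with h0 | h0
    · rw [h0, zero_mul] at hdn; omega
    · exact h0
  have hle : K ≤ zpowers (b ^ d) := by
    intro x hx
    obtain ⟨j, rfl⟩ := hK hx
    have hx1 : (b ^ j) ^ (n : ℕ) = 1 := by
      have hpow : (⟨b ^ j, hx⟩ : K) ^ n = 1 := pow_card_eq_one'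
      exact congrArg Subtype.val hpow
    have hx1' : b ^ (j * (n : ℤ)) = 1 := by
      rw [zpow_mul, zpow_natCast]; exact hx1
    have hzdvd : (q : ℤ) ∣ j * n := by
      rw [hq, orderOf_dvd_iff_zpow_eq_one]; exact hx1'
    have hddvd : (d : ℤ) ∣ j := by
      have h1 : (d : ℤ) * (n : ℤ) ∣ j * (n : ℤ) := by
        rw [← Int.natCast_mul, hdn]; exact hzdvd
      have hn0 : (n : ℤ) ≠ 0 := by exact_mod_cast hnpos.ne'
      exact (mul_dvd_mul_iff_right hn0).mp h1
    obtain ⟨m, hm⟩ := hddvd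
    refine ⟨m, ?_⟩
    show (b ^ d) ^ m = b ^ j
    have : ((b ^ (d : ℕ)) : G) ^ m = b ^ ((d : ℤ) * m) := by
      rw [← zpow_natCast b d, ← zpow_mul]
    rw [this, ← hm]
  have hddq : d ∣ q := ⟨n, hdn.symm⟩
  have hcard : Nat.card (zpowers (b ^ d)) = n := by
    rw [Nat.card_zpowers, orderOf_pow, ← hq, Nat.gcd_comm, Nat.gcd_eq_left hddq,
      ← hdn, Nat.mul_div_cancel_left _ hdpos]
  exact subgroup_eq_of_le_card hle (le_of_eq hcard)


lemma covers_trans {G H K : Type*} [Group G] [Group H] [Group K] {a b : G} {a' b' : H}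
    {a'' b'' : K} (h1 : Covers a b a' b') (h2 : Covers a' b' a'' b'') : Covers a b a'' b'' := by
  obtain ⟨f, hf1, hf2⟩ := h1
  obtain ⟨g, hg1, hg2⟩ := h2
  exact ⟨g.comp f, by simp [hf1, hg1], by simp [hf2, hg2]⟩

lemma dual_pair {a b : G} {p q : ℕ} (h : IsRotPair a b p q) : IsRotPair b⁻¹ a⁻¹ q p := by
  obtain ⟨hcl, hoa, hob, hp2, hq2, hsq, hbot⟩ := h
  refine ⟨?_, by rw [orderOf_inv]; exact hob, by rw [orderOf_inv]; exact hoa, hq2, hp2, ?_, ?_⟩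
  · rw [eq_top_iff, ← hcl, Subgroup.closure_le]
    rintro x (rfl | rfl)
    · have hm : x⁻¹ ∈ Subgroup.closure ({b⁻¹, x⁻¹} : Set G) :=
        Subgroup.subset_closure (by simp)
      simpa using inv_mem hm
    · have hm : x⁻¹ ∈ Subgroup.closure ({x⁻¹, a⁻¹} : Set G) :=
        Subgroup.subset_closure (by simp)
      simpa using inv_mem hm
  · have : b⁻¹ * a⁻¹ = (a * b)⁻¹ := by rw [mul_inv_rev]
    rw [this, inv_pow, hsq, inv_one]
  · rw [Subgroup.zpowers_inv, Subgroup.zpowers_inv, inf_comm]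
    exact hbot

lemma dual_tight {a b : G} (h : IsTight a b) : IsTight b⁻¹ a⁻¹ := by
  intro g
  obtain ⟨i, j, hg⟩ := h g⁻¹
  refine ⟨j, i, ?_⟩
  have : g = (a ^ i * b ^ j)⁻¹ := by rw [← hg, inv_inv]
  rw [this, mul_inv_rev]
  simp [inv_zpow]

lemma dual_reg {a b : G} (h : IsOrientablyRegular b⁻¹ a⁻¹) : IsOrientablyRegular a b := by
  obtain ⟨φ, h1, h2⟩ := h
  rw [inv_inv] at h1 h2
  refine ⟨φ, ?_, ?_⟩
  · have := congrArg (·⁻¹) h2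
    simpa using this
  · have := congrArg (·⁻¹) h1
    simpa using this

section Transfer

variable {H : Type*} [Group H]

lemma pair_map (e : G ≃* H) {a b : G} {p q : ℕ} (h : IsRotPair a b p q) :
    IsRotPair (e a) (e b) p q := by
  obtain ⟨hcl, hoa, hob, hp2, hq2, hsq, hbot⟩ := h
  refine ⟨?_, ?_, ?_, hp2, hq2, ?_, ?_⟩
  · have h1 : (Subgroup.closure ({a, b} : Set G)).map e.toMonoidHom
        = Subgroup.closure ({e a, e b} : Set H) := by
      rw [MonoidHom.map_closure, Set.image_pair]
      rfl
    rw [← h1, hcl, ← MonoidHom.range_eq_map, MonoidHom.range_eq_top_of_surjective _ e.surjective]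
  · rw [MulEquiv.orderOf_eq]; exact hoa
  · rw [MulEquiv.orderOf_eq]; exact hob
  · have : (e a * e b) ^ 2 = e ((a * b) ^ 2) := by rw [map_pow, map_mul]
    rw [this, hsq, map_one]
  · have h2 : zpowers (e a) = (zpowers a).map e.toMonoidHom :=
      (MonoidHom.map_zpowers e.toMonoidHom a).symm
    have h3 : zpowers (e b) = (zpowers b).map e.toMonoidHom :=
      (MonoidHom.map_zpowers e.toMonoidHom b).symm
    rw [h2, h3, ← Subgroup.map_inf _ _ _ e.injective, hbot]
    exact Subgroup.map_bot _

lemma tight_map (e : G ≃* H) {a b : G} (h : IsTight a b) : IsTight (e a) (e b) := by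
  intro g
  obtain ⟨i, j, hg⟩ := h (e.symm g)
  refine ⟨i, j, ?_⟩
  have := congrArg e hg
  simpa [map_mul, map_zpow] using this

lemma reg_map (e : G ≃* H) {a b : G} (h : IsOrientablyRegular a b) :
    IsOrientablyRegular (e a) (e b) := by
  obtain ⟨φ, h1, h2⟩ := h
  refine ⟨(e.symm.trans φ).trans e, ?_, ?_⟩
  · simp [h1]
  · simp [h2]

end Transfer

lemma small (G : Type u) [Group G] [Finite G] :
    ∃ (H : Type) (instH : Group H) (_ : Finite H), Nonempty (G ≃* H) := by
  haveI : Small.{0} G := Countable.toSmall G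
  refine ⟨Shrink.{0} G, inferInstance, ?_, ⟨(Shrink.mulEquiv).symm⟩⟩
  exact Finite.of_equiv G (equivShrink G)

lemma half {G : Type u} [Group G] [Finite G] {a b : G} {p q : ℕ}
    (hpair : IsRotPair a b p q) (ht : IsTight a b) (hqp : p ≤ q) :
    IsOrientablyRegular a b ∨
      ∃ (H : Type u) (instH : Group H) (_ : Finite H) (a' b' : H) (q' : ℕ),
        IsRotPair a' b' p q' ∧ IsTight a' b' ∧ Covers a b a' b' ∧ q' < q := by
  obtain ⟨hcl, hoa, hob, hp2, hq2, hsq, hbot⟩ := hpair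
  obtain ⟨hba, haba, hbab⟩ := relations hsq
  set cA : G →* G := (MulAut.conj a).toMonoidHom with hcA
  set cAi : G →* G := (MulAut.conj a⁻¹).toMonoidHom with hcAi
  have hcAval : ∀ x : G, cA x = a * x * a⁻¹ := fun x => rfl
  have hcAival : ∀ x : G, cAi x = a⁻¹ * x * a⁻¹⁻¹ := fun x => rfl
  have hcAinj : Function.Injective cA := (MulAut.conj a).injective
  have hcAiinj : Function.Injective cAi := (MulAut.conj a⁻¹).injective
  have hcomp1 : cA.comp cAi = MonoidHom.id G := by
    ext x
    simp only [MonoidHom.comp_apply, MonoidHom.id_apply, hcAval, hcAival]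
    group
  have hcomp2 : cAi.comp cA = MonoidHom.id G := by
    ext x
    simp only [MonoidHom.comp_apply, MonoidHom.id_apply, hcAval, hcAival]
    group
  set B := zpowers b with hB
  set Sm := B ⊓ B.map cAi with hSmdef
  set Sp := B ⊓ B.map cA with hSpdef
  have hSmB : Sm ≤ B := inf_le_left
  have hSpB : Sp ≤ B := inf_le_left
  have hmapSm : Sm.map cA = Sp := by
    rw [hSmdef, Subgroup.map_inf _ _ _ hcAinj, Subgroup.map_map, hcomp1, Subgroup.map_id,
      inf_comm, hSpdef]
  have hcards : Nat.card Sp = Nat.card Sm := by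
    rw [← hmapSm]
    exact (Nat.card_congr (Subgroup.equivMapOfInjective Sm cA hcAinj).toEquiv).symm
  have hSmz : Sm = zpowers (b ^ (q / Nat.card Sm)) := by
    have h0 := sub_of_zpowers Sm hSmB
    rwa [hob] at h0
  have hSpz : Sp = zpowers (b ^ (q / Nat.card Sp)) := by
    have h0 := sub_of_zpowers Sp hSpB
    rwa [hob] at h0
  have hSmSp : Sm = Sp := by rw [hSmz, hSpz, hcards]
  have hstabA : Sm.map cA = Sm := by rw [hmapSm, ← hSmSp]
  have hstabAi : Sm.map cAi = Sm := by
    have h0 := congrArg (Subgroup.map cAi) hstabA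
    rw [Subgroup.map_map, hcomp2, Subgroup.map_id] at h0
    exact h0.symm
  have hbcomm : ∀ x ∈ B, b⁻¹ * x * b = x := by
    rintro x ⟨j, rfl⟩
    have hc : Commute b (b ^ j) := (Commute.refl b).zpow_right j
    calc b⁻¹ * b ^ j * b = b⁻¹ * (b ^ j * b) := by group
      _ = b⁻¹ * (b * b ^ j) := by rw [hc.eq]
      _ = b ^ j := by group
  have hNormal : Sm.Normal := by
    rw [← Subgroup.normalizer_eq_top_iff, eq_top_iff, ← hcl, Subgroup.closure_le]
    rintro x (rfl | rfl)
    · rw [SetLike.mem_coe, Subgroup.mem_normalizer_iff]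
      intro h
      constructor
      · intro hh
        have h1 : cA h ∈ Sm.map cA := Subgroup.mem_map_of_mem cA hh
        rw [hstabA] at h1
        simpa [hcAval] using h1
      · intro hh
        have hh' : cA h ∈ Sm := by simpa [hcAval] using hh
        have h1 : cAi (cA h) ∈ Sm.map cAi := Subgroup.mem_map_of_mem cAi hh'
        rw [hstabAi] at h1
        have h2 : cAi (cA h) = h := by
          rw [hcAival, hcAval]; group
        rwa [h2] at h1
    · rw [SetLike.mem_coe, Subgroup.mem_normalizer_iff]
      intro h
      constructor
      · intro hh
        have h1 : x * h * x⁻¹ = h := by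
          have h2 := hbcomm h (hSmB hh)
          calc x * h * x⁻¹ = x * (x⁻¹ * h * x) * x⁻¹ := by rw [h2]
            _ = h := by group
        rwa [h1]
      · intro hh
        have h2 := hbcomm _ (hSmB hh)
        have h3 : h = x⁻¹ * (x * h * x⁻¹) * x := by group
        rw [h3, h2]
        exact hh
  have hcardG : Nat.card G = p * q := by rw [card_eq hbot ht, hoa, hob]
  have hcardB : Nat.card B = q := by rw [hB, Nat.card_zpowers, hob]
  have hSm_ne_bot : Sm ≠ ⊥ := by
    intro h0
    have hinj : Function.Injective
        (fun z : B × B => (z.1 : G) * (a⁻¹ * (z.2 : G) * a)) := by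
      rintro ⟨⟨y, hy⟩, ⟨z, hz⟩⟩ ⟨⟨y', hy'⟩, ⟨z', hz'⟩⟩ hyz
      simp only at hyz
      simp only [Prod.mk.injEq, Subtype.mk.injEq]
      have key : y'⁻¹ * y = a⁻¹ * (z' * z⁻¹) * a := by
        calc y'⁻¹ * y = y'⁻¹ * (y * (a⁻¹ * z * a)) * (a⁻¹ * z⁻¹ * a) := by group
          _ = y'⁻¹ * (y' * (a⁻¹ * z' * a)) * (a⁻¹ * z⁻¹ * a) := by rw [hyz]
          _ = a⁻¹ * (z' * z⁻¹) * a := by group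
      have hw1 : y'⁻¹ * y ∈ B := mul_mem (inv_mem hy') hy
      have hw2 : y'⁻¹ * y ∈ Subgroup.map cAi B := by
        rw [key]
        exact Subgroup.mem_map.mpr ⟨z' * z⁻¹, mul_mem hz' (inv_mem hz), by rw [hcAival]; group⟩
      have hw : y'⁻¹ * y ∈ Sm := Subgroup.mem_inf.mpr ⟨hw1, hw2⟩
      rw [h0, Subgroup.mem_bot] at hw
      have hyy : y = y' := by
        have := inv_mul_eq_one.mp hw
        exact this.symm
      have hzz' : a⁻¹ * (z' * z⁻¹) * a = 1 := by rw [← key, hw]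
      have hzz : z = z' := by
        have h1 : z' * z⁻¹ = a * (a⁻¹ * (z' * z⁻¹) * a) * a⁻¹ := by group
        rw [hzz', mul_one] at h1
        have h2 : z' * z⁻¹ = 1 := by rw [h1]; group
        exact (mul_inv_eq_one.mp h2).symm
      exact ⟨hyy, hzz⟩
    have hle : q * q ≤ p * q := by
      have h1 := Nat.card_le_card_of_injective _ hinj
      rwa [Nat.card_prod, hcardB, hcardG] at h1
    have hqlep : q ≤ p := Nat.le_of_mul_le_mul_right hle (by omega)
    have hpq : p = q := le_antisymm hqp hqlep
    have hbij : Function.Bijective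
        (fun z : B × B => (z.1 : G) * (a⁻¹ * (z.2 : G) * a)) := by
      rw [Nat.bijective_iff_injective_and_card]
      exact ⟨hinj, by rw [Nat.card_prod, hcardB, hcardG, hpq]⟩
    obtain ⟨⟨⟨y, hy⟩, ⟨z, hz⟩⟩, hyz⟩ := hbij.surjective a
    simp only at hyz
    have h2 : y * a⁻¹ * z = 1 := by
      calc y * a⁻¹ * z = y * (a⁻¹ * z * a) * a⁻¹ := by group
        _ = a * a⁻¹ := by rw [hyz]
        _ = 1 := by group
    have h3 : a⁻¹ = y⁻¹ * z⁻¹ := by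
      calc a⁻¹ = y⁻¹ * (y * a⁻¹ * z) * z⁻¹ := by group
        _ = y⁻¹ * 1 * z⁻¹ := by rw [h2]
        _ = y⁻¹ * z⁻¹ := by group
    have h4 : a = z * y := by
      rw [← inv_inv a, h3, mul_inv_rev, inv_inv, inv_inv]
    have haB : a ∈ B := h4 ▸ mul_mem hz hy
    have ha1 : a = 1 := triv_int hbot (mem_zpowers a) haB
    rw [ha1, orderOf_one] at hoa
    omega
  have hcdvd : Nat.card Sm ∣ q := by
    have h0 := Subgroup.card_dvd_of_le hSmB
    rwa [hcardB] at h0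
  have hc1 : 1 < Nat.card Sm := by
    have hcpos : 0 < Nat.card Sm := Nat.card_pos
    have hne : Nat.card Sm ≠ 1 := fun h1 => hSm_ne_bot (Subgroup.card_eq_one.mp h1)
    omega
  by_cases hcq : Nat.card Sm = q
  · -- Sm = B : orientably regular via conjugation by a
    left
    have hSmB' : Sm = B := by
      have h0 : q / Nat.card Sm = 1 := by rw [hcq]; exact Nat.div_self (by omega : 0 < q)
      rw [h0, pow_one] at hSmz
      exact hSmz
    have hBmap : B.map cA = B := by rw [← hSmB']; exact hstabA
    have h1 : a * b * a⁻¹ ∈ B := by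
      rw [← hBmap]
      exact ⟨b, mem_zpowers b, by rw [hcAval]⟩
    have h2 : a * b * a⁻¹ = b⁻¹ * (a * a)⁻¹ := by rw [← haba]; group
    have h3 : (a * a)⁻¹ = b * (a * b * a⁻¹) := by rw [h2]; group
    have h4 : (a * a)⁻¹ ∈ B := h3 ▸ mul_mem (mem_zpowers b) h1
    have h5 : (a * a)⁻¹ ∈ zpowers a := by
      have hmm : a * a ∈ zpowers a := Subgroup.mem_zpowers_iff.mpr ⟨2, zpow_two a⟩
      exact inv_mem hmm
    have h6 : (a * a)⁻¹ = 1 := triv_int hbot h5 h4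
    have ha2 : a * a = 1 := by rwa [inv_eq_one] at h6
    have hainv : a⁻¹ = a := inv_eq_of_mul_eq_one_right ha2
    refine ⟨MulAut.conj a, ?_, ?_⟩
    · show a * a * a⁻¹ = a⁻¹
      rw [ha2, one_mul]
    · show a * b * a⁻¹ = b⁻¹
      rw [h2, ha2, inv_one, mul_one]
  · -- proper nontrivial normal subgroup : descend
    right
    set k := q / Nat.card Sm with hk
    have hkc : k * Nat.card Sm = q := Nat.div_mul_cancel hcdvd
    have hknot0 : k ≠ 0 := by
      intro h0; rw [h0, zero_mul] at hkc; omega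
    have hknot1 : k ≠ 1 := by
      intro h1; rw [h1, one_mul] at hkc; exact hcq hkc
    have hk2 : 2 ≤ k := (Nat.two_le_iff k).mpr ⟨hknot0, hknot1⟩
    have hkpos : 0 < k := Nat.pos_of_ne_zero hknot0
    have hkq : k < q := by
      have h0 : k * 1 < k * Nat.card Sm := mul_lt_mul_of_pos_left hc1 hkpos
      rw [mul_one] at h0
      rw [← hkc]
      exact h0
    haveI hNN : Sm.Normal := hNormal
    set π := QuotientGroup.mk' Sm with hπ
    have hπs : Function.Surjective π := QuotientGroup.mk'_surjective Sm
    have hNz : Sm = zpowers (b ^ k) := hSmz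
    refine ⟨G ⧸ Sm, inferInstance, inferInstance, π a, π b, k,
      ⟨?_, ?_, ?_, hp2, hk2, ?_, ?_⟩, ?_, ⟨π, rfl, rfl⟩, hkq⟩
    · -- closure
      have h1 : (Subgroup.closure ({a, b} : Set G)).map π
          = Subgroup.closure ({π a, π b} : Set (G ⧸ Sm)) := by
        rw [MonoidHom.map_closure, Set.image_pair]
      rw [← h1, hcl, ← MonoidHom.range_eq_map, MonoidHom.range_eq_top_of_surjective _ hπs]
    · -- orderOf (π a) = p
      have hd1 : orderOf (π a) ∣ p := by
        apply orderOf_dvd_of_pow_eq_one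
        rw [← map_pow, ← hoa, pow_orderOf_eq_one, map_one]
      have hd2 : p ∣ orderOf (π a) := by
        rw [← hoa, orderOf_dvd_iff_pow_eq_one]
        have h2 : π (a ^ orderOf (π a)) = 1 := by rw [map_pow, pow_orderOf_eq_one]
        have h3 : a ^ orderOf (π a) ∈ Sm := (QuotientGroup.eq_one_iff _).mp h2
        exact triv_int hbot (pow_mem (mem_zpowers a) _) (hSmB h3)
      exact Nat.dvd_antisymm hd1 hd2
    · -- orderOf (π b) = k
      have hd1 : orderOf (π b) ∣ k := by
        apply orderOf_dvd_of_pow_eq_one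
        have hbk : b ^ k ∈ Sm := by rw [hNz]; exact mem_zpowers _
        rw [← map_pow]
        exact (QuotientGroup.eq_one_iff _).mpr hbk
      have hd2 : k ∣ orderOf (π b) := by
        obtain ⟨m, hm⟩ : ∃ m, orderOf (π b) = m := ⟨_, rfl⟩
        rw [hm]
        have h2 : π (b ^ m) = 1 := by rw [map_pow, ← hm, pow_orderOf_eq_one]
        have h3 : b ^ m ∈ Sm := (QuotientGroup.eq_one_iff _).mp h2
        rw [hNz] at h3
        obtain ⟨t, hbt⟩ := Subgroup.mem_zpowers_iff.mp h3
        have h4 : b ^ ((k : ℤ) * t - (m : ℤ)) = 1 := by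
          rw [zpow_sub, zpow_mul, zpow_natCast, zpow_natCast, hbt]
          group
        have h5 : ((q : ℕ) : ℤ) ∣ (k : ℤ) * t - (m : ℤ) := by
          rw [← hob, orderOf_dvd_iff_zpow_eq_one]
          exact h4
        have h6n : k ∣ q := ⟨Nat.card Sm, hkc.symm⟩
        have h6 : (k : ℤ) ∣ (q : ℤ) := Int.natCast_dvd_natCast.mpr h6n
        have h7 : (k : ℤ) ∣ (m : ℤ) := by
          have h8 : (k : ℤ) ∣ (k : ℤ) * t - (m : ℤ) := dvd_trans h6 h5
          have h9 : (k : ℤ) ∣ (k : ℤ) * t := Dvd.intro t rfl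
          have h10 : (k : ℤ) ∣ ((k : ℤ) * t - ((k : ℤ) * t - (m : ℤ))) := dvd_sub h9 h8
          simpa using h10
        exact_mod_cast h7
      exact Nat.dvd_antisymm hd1 hd2
    · -- (π a * π b) ^ 2 = 1
      rw [← map_mul, ← map_pow, hsq, map_one]
    · -- trivial intersection in quotient
      rw [eq_bot_iff]
      rintro x ⟨hx1, hx2⟩
      obtain ⟨i, hix⟩ := Subgroup.mem_zpowers_iff.mp hx1
      obtain ⟨j, hjx⟩ := Subgroup.mem_zpowers_iff.mp hx2
      have hxy : π (a ^ i) = π (b ^ j) := by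
        rw [map_zpow, map_zpow, hix, hjx]
      have h9 : π (a ^ i * (b ^ j)⁻¹) = 1 := by
        rw [map_mul, map_inv, hxy]
        simp
      have hmem : a ^ i * (b ^ j)⁻¹ ∈ Sm := (QuotientGroup.eq_one_iff _).mp h9
      have haB : a ^ i ∈ B := by
        have h10 : a ^ i = (a ^ i * (b ^ j)⁻¹) * b ^ j := by group
        rw [h10]
        exact mul_mem (hSmB hmem) (zpow_mem (mem_zpowers b) j)
      have h11 : a ^ i = 1 := triv_int hbot (zpow_mem (mem_zpowers a) i) haB
      rw [Subgroup.mem_bot, ← hix, ← map_zpow, h11, map_one]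
    · -- tight
      intro g'
      obtain ⟨g, rfl⟩ := hπs g'
      obtain ⟨i, j, rfl⟩ := ht g
      exact ⟨i, j, by rw [map_mul, map_zpow, map_zpow]⟩

lemma step {G : Type u} [Group G] [Finite G] {a b : G} {p q : ℕ}
    (hpair : IsRotPair a b p q) (ht : IsTight a b) :
    IsOrientablyRegular a b ∨
      ∃ (H : Type u) (instH : Group H) (_ : Finite H) (a' b' : H) (p' q' : ℕ),
        IsRotPair a' b' p' q' ∧ IsTight a' b' ∧ Covers a b a' b' ∧
        ((p' = p ∧ q' < q) ∨ (p' < p ∧ q' = q)) := by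
  rcases le_total p q with h | h
  · rcases half hpair ht h with hreg | ⟨H, iH, fH, a', b', q', h1, h2, h3, h4⟩
    · exact Or.inl hreg
    · exact Or.inr ⟨H, iH, fH, a', b', p, q', h1, h2, h3, Or.inl ⟨rfl, h4⟩⟩
  · rcases half (dual_pair hpair) (dual_tight ht) h with hreg | ⟨H, iH, fH, b'', a'', p', h1, h2, h3, h4⟩
    · exact Or.inl (dual_reg hreg)
    · right
      refine ⟨H, iH, fH, a''⁻¹, b''⁻¹, p', q, ?_, ?_, ?_, Or.inr ⟨h4, rfl⟩⟩
      · have := dual_pair h1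
        simpa using this
      · have := dual_tight h2
        simpa using this
      · obtain ⟨f, hf1, hf2⟩ := h3
        refine ⟨f, ?_, ?_⟩
        · have : f a = (f a⁻¹)⁻¹ := by rw [map_inv, inv_inv]
          rw [this, hf2]
        · have : f b = (f b⁻¹)⁻¹ := by rw [map_inv, inv_inv]
          rw [this, hf1]

lemma coversReg (n : ℕ) : ∀ (G : Type u) (instG : Group G) (_ : Finite G) (a b : G) (p q : ℕ),
    p + q ≤ n → IsRotPair a b p q → IsTight a b →
    ∃ (H : Type u) (instH : Group H) (_ : Finite H) (a' b' : H) (p' q' : ℕ),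
      IsRotPair a' b' p' q' ∧ IsTight a' b' ∧ IsOrientablyRegular a' b' ∧
        Covers a b a' b' := by
  induction n with
  | zero =>
    intro G instG finG a b p q hle hpair _
    exact absurd hle (by have := hpair.2.2.2.1; omega)
  | succ n IH =>
    intro G instG finG a b p q hle hpair ht
    rcases step hpair ht with hreg | ⟨H, iH, fH, a', b', p', q', h1, h2, h3, h4⟩
    · exact ⟨G, instG, finG, a, b, p, q, hpair, ht, hreg, ⟨MonoidHom.id G, rfl, rfl⟩⟩
    · have hp2 : 2 ≤ p := hpair.2.2.2.1
      have hq2 : 2 ≤ q := hpair.2.2.2.2.1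
      have hlt : p' + q' ≤ n := by rcases h4 with ⟨e1, e2⟩ | ⟨e1, e2⟩ <;> omega
      obtain ⟨K, iK, fK, a'', b'', p'', q'', g1, g2, g3, g4⟩ :=
        IH H iH fH a' b' p' q' hlt h1 h2
      exact ⟨K, iK, fK, a'', b'', p'', q'', g1, g2, g3, covers_trans h3 g4⟩

end TightRotAux

/-- Every tight chiral rotation pair covers a tight rotation pair of strictly smaller
type, and covers some tight orientably regular rotation pair. -/
theorem tight_chiral_quotients {G : Type*} [Group G] [Finite G] (a b : G) (p q : ℕ)
    (hpair : IsRotPair a b p q) (htight : IsTight a b) (hchiral : IsChiral a b) :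
    (∃ (H : Type) (instH : Group H) (_ : Finite H) (a' b' : H),
        @IsTight H instH a' b' ∧ @Covers G H _ instH a b a' b' ∧
        ((∃ p' : ℕ, p' < p ∧ @IsRotPair H instH a' b' p' q) ∨
         (∃ q' : ℕ, q' < q ∧ @IsRotPair H instH a' b' p q'))) ∧
    (∃ (H : Type) (instH : Group H) (_ : Finite H) (a' b' : H) (p' q' : ℕ),
        @IsRotPair H instH a' b' p' q' ∧ @IsTight H instH a' b' ∧
        @IsOrientablyRegular H instH a' b' ∧ @Covers G H _ instH a b a' b') := by
  constructor
  · rcases TightRotAux.step hpair htight with hreg | ⟨H, iH, fH, a', b', p', q', h1, h2, h3, h4⟩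
    · exact absurd hreg hchiral
    · obtain ⟨H₀, iH₀, fH₀, ⟨e⟩⟩ := TightRotAux.small H
      refine ⟨H₀, iH₀, fH₀, e a', e b', TightRotAux.tight_map e h2,
        TightRotAux.covers_trans h3 ⟨e.toMonoidHom, rfl, rfl⟩, ?_⟩
      rcases h4 with ⟨hp', hq'⟩ | ⟨hp', hq'⟩
      · right
        refine ⟨q', hq', ?_⟩
        rw [← hp']
        exact TightRotAux.pair_map e h1
      · left
        refine ⟨p', hp', ?_⟩
        rw [← hq']
        exact TightRotAux.pair_map e h1
  · obtain ⟨H, iH, fH, a', b', p', q', h1, h2, h3, h4⟩ :=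
      TightRotAux.coversReg (p + q) G ‹_› ‹_› a b p q le_rfl hpair htight
    obtain ⟨H₀, iH₀, fH₀, ⟨e⟩⟩ := TightRotAux.small H
    exact ⟨H₀, iH₀, fH₀, e a', e b', p', q', TightRotAux.pair_map e h1,
      TightRotAux.tight_map e h2, TightRotAux.reg_map e h3,
      TightRotAux.covers_trans h4 ⟨e.toMonoidHom, rfl, rfl⟩⟩
end

section
/- Let p, q ≥ 1 be natural numbers and i, j₁, j₂ integers. Let G be a group generated by two elements a and b satisfying a^p = 1, b^q = 1, (a*b)^2 = 1, b⁻¹ * a = a^i * b^(j₁), and b * a⁻¹ = a^(−i) * b^(j₂). Then every element of G can be written as a^s * b^t for some integers s, t (i.e., G is tight). -/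
universe u

private theorem zpow_reduce' {G : Type u} [Group G] (a : G) (p : ℕ) (hp : 1 ≤ p)
    (ha : a ^ p = 1) : ∀ s : ℤ, ∃ n : ℕ, a ^ s = a ^ (n : ℤ) := by
  intro s
  have hp0 : (p : ℤ) ≠ 0 := by exact_mod_cast Nat.one_le_iff_ne_zero.mp hp
  refine ⟨(s % (p : ℤ)).toNat, ?_⟩
  have h0 : (0 : ℤ) ≤ s % (p : ℤ) := Int.emod_nonneg s hp0
  rw [Int.toNat_of_nonneg h0]
  have ha' : a ^ (p : ℤ) = 1 := by rw [zpow_natCast, ha]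
  calc a ^ s = a ^ ((p:ℤ) * (s / (p:ℤ)) + s % (p:ℤ)) := by rw [Int.mul_ediv_add_emod]
    _ = (a ^ (p:ℤ)) ^ (s / (p:ℤ)) * a ^ (s % (p:ℤ)) := by rw [zpow_add, zpow_mul]
    _ = a ^ (s % (p:ℤ)) := by rw [ha', one_zpow, one_mul]

private theorem swap_from_M' {G : Type u} [Group G] (a b : G)
    (Mp : ∀ s : ℤ, ∃ u v : ℤ, b * a ^ s = a ^ u * b ^ v)
    (Mm : ∀ s : ℤ, ∃ u v : ℤ, b⁻¹ * a ^ s = a ^ u * b ^ v) :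
    ∀ t s : ℤ, ∃ u v : ℤ, b ^ t * a ^ s = a ^ u * b ^ v := by
  intro t
  induction t using Int.induction_on with
  | zero => exact fun s => ⟨s, 0, by group⟩
  | succ n ih =>
      intro s
      obtain ⟨u, v, huv⟩ := ih s
      obtain ⟨u', v', h'⟩ := Mp u
      refine ⟨u', v' + v, ?_⟩
      have e : b ^ ((n:ℤ)+1) * a ^ s = b * (b ^ (n:ℤ) * a ^ s) := by group
      rw [e, huv, ← mul_assoc, h', zpow_add]; group
  | pred n ih =>
      intro s
      obtain ⟨u, v, huv⟩ := ih s
      obtain ⟨u', v', h'⟩ := Mm u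
      refine ⟨u', v' + v, ?_⟩
      have e : b ^ (-(n:ℤ)-1) * a ^ s = b⁻¹ * (b ^ (-(n:ℤ)) * a ^ s) := by group
      rw [e, huv, ← mul_assoc, h', zpow_add]; group

private theorem tight_of_swap' {G : Type u} [Group G] (a b : G)
    (hgen : Subgroup.closure ({a, b} : Set G) = ⊤)
    (SW : ∀ t s : ℤ, ∃ u v : ℤ, b ^ t * a ^ s = a ^ u * b ^ v) :
    ∀ g : G, ∃ s t : ℤ, g = a ^ s * b ^ t := by
  let H : Subgroup G :=
    { carrier := {g | ∃ s t : ℤ, g = a ^ s * b ^ t}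
      one_mem' := ⟨0, 0, by group⟩
      mul_mem' := by
        rintro x y ⟨s, t, rfl⟩ ⟨u, v, rfl⟩
        obtain ⟨x', y', h⟩ := SW t u
        refine ⟨s + x', y' + v, ?_⟩
        have e : a ^ s * b ^ t * (a ^ u * b ^ v) = a ^ s * (b ^ t * a ^ u) * b ^ v := by
          group
        rw [e, h, zpow_add, zpow_add]; group
      inv_mem' := by
        rintro x ⟨s, t, rfl⟩
        obtain ⟨u, v, h⟩ := SW (-t) (-s)
        refine ⟨u, v, ?_⟩
        rw [← h]; group }
  intro g
  have hle : Subgroup.closure ({a, b} : Set G) ≤ H := by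
    refine (Subgroup.closure_le H).2 ?_
    rintro x (rfl | rfl)
    · exact ⟨1, 0, by group⟩
    · exact ⟨0, 1, by group⟩
  rw [hgen] at hle
  exact hle (Subgroup.mem_top g)

private theorem quot_lift' {G : Type u} [Group G] (a b : G) (p q : ℕ) (hp : 1 ≤ p)
    (i j₁ j₂ : ℤ)
    (hgen : Subgroup.closure ({a, b} : Set G) = ⊤)
    (ha : a ^ p = 1) (hb : b ^ q = 1) (hab : (a * b) ^ 2 = 1)
    (h₁ : b⁻¹ * a = a ^ i * b ^ j₁)
    (h₂ : b * a⁻¹ = a ^ (-i) * b ^ j₂)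
    (z : ℤ) (hz : b ^ z * a = a * b ^ z ∨ b ^ z * a = a * b ^ (-z))
    (d : ℕ) (hd : (d : ℤ) = Int.gcd z q)
    (IH : ∀ {H : Type u} [Group H] (a' b' : H) (p' : ℕ), 1 ≤ p' → ∀ i' j₁' j₂' : ℤ,
      Subgroup.closure ({a', b'} : Set H) = ⊤ → a' ^ p' = 1 → b' ^ d = 1 →
      (a' * b') ^ 2 = 1 → b'⁻¹ * a' = a' ^ i' * b' ^ j₁' →
      b' * a'⁻¹ = a' ^ (-i') * b' ^ j₂' →
      ∀ g : H, ∃ s t : ℤ, g = a' ^ s * b' ^ t) :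
    ∀ g : G, ∃ s t : ℤ, g = a ^ s * b ^ t := by
  have hb' : b ^ (q : ℤ) = 1 := by rw [zpow_natCast, hb]
  obtain ⟨x, hx⟩ : ∃ x : ℤ, (b ^ z) ^ x = b ^ (d : ℤ) := by
    refine ⟨Int.gcdA z q, ?_⟩
    have e : (d : ℤ) = z * Int.gcdA z q + (q : ℤ) * Int.gcdB z q := by
      rw [hd]; exact Int.gcd_eq_gcd_ab z q
    rw [← zpow_mul, e, zpow_add, zpow_mul b (q:ℤ), hb', one_zpow, mul_one]
  set c : G := b ^ (d : ℤ) with hc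
  have hzconj : a * b ^ z * a⁻¹ = b ^ z ∨ a * b ^ z * a⁻¹ = b ^ (-z) := by
    rcases hz with h | h
    · left; rw [← h]; group
    · right
      have h2 : a⁻¹ * (b ^ z * a) = b ^ (-z) := by rw [h]; group
      have h3 : a⁻¹ * b ^ (-z) * a = b ^ z := by
        calc a⁻¹ * b ^ (-z) * a = (a⁻¹ * (b ^ z * a))⁻¹ := by group
          _ = (b ^ (-z))⁻¹ := by rw [h2]
          _ = b ^ z := by group
      rw [← h3]; group
  have haca : a * c * a⁻¹ = c ∨ a * c * a⁻¹ = c⁻¹ := by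
    rcases hzconj with h | h
    · left
      calc a * c * a⁻¹ = (a * b ^ z * a⁻¹) ^ x := by rw [conj_zpow, hx]
        _ = c := by rw [h, hx]
    · right
      calc a * c * a⁻¹ = (a * b ^ z * a⁻¹) ^ x := by rw [conj_zpow, hx]
        _ = (b ^ (-z)) ^ x := by rw [h]
        _ = c⁻¹ := by rw [← hx]; group
  set N : Subgroup G := Subgroup.zpowers c with hN
  have conj_mem : ∀ g : G, (g * c * g⁻¹ = c ∨ g * c * g⁻¹ = c⁻¹) →
      ∀ w ∈ N, g * w * g⁻¹ ∈ N := by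
    rintro g hg w ⟨k, rfl⟩
    have e : g * c ^ k * g⁻¹ = (g * c * g⁻¹) ^ k := conj_zpow.symm
    rcases hg with h | h
    · exact ⟨k, by rw [e, h]⟩
    · exact ⟨-k, by rw [e, h]; group⟩
  have inv_conj : ∀ g : G, (g * c * g⁻¹ = c ∨ g * c * g⁻¹ = c⁻¹) →
      (g⁻¹ * c * (g⁻¹)⁻¹ = c ∨ g⁻¹ * c * (g⁻¹)⁻¹ = c⁻¹) := by
    rintro g (h | h)
    · left; calc g⁻¹ * c * (g⁻¹)⁻¹ = g⁻¹ * (g * c * g⁻¹) * g := by rw [h]; group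
        _ = c := by group
    · right; calc g⁻¹ * c * (g⁻¹)⁻¹ = (g⁻¹ * (g * c * g⁻¹) * g)⁻¹ := by rw [h]; group
        _ = c⁻¹ := by group
  have key : ∀ g : G, (g * c * g⁻¹ = c ∨ g * c * g⁻¹ = c⁻¹) → g ∈ Subgroup.normalizer (N : Set G) := by
    intro g hg
    rw [Subgroup.mem_normalizer_iff]
    intro h
    constructor
    · exact fun hh => conj_mem g hg h hh
    · intro hh
      have := conj_mem g⁻¹ (inv_conj g hg) _ hh
      simpa [mul_assoc] using this
  have hNnormal : N.Normal := by
    rw [← Subgroup.normalizer_eq_top_iff]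
    rw [← top_le_iff, ← hgen]
    refine (Subgroup.closure_le _).2 ?_
    rintro g (rfl | rfl)
    · exact key g haca
    · exact key g (Or.inl (by rw [hc]; group))
  letI := hNnormal
  let π : G →* G ⧸ N := QuotientGroup.mk' N
  have hπsurj : Function.Surjective π := QuotientGroup.mk'_surjective N
  have hgen' : Subgroup.closure ({π a, π b} : Set (G ⧸ N)) = ⊤ := by
    have himg : ({π a, π b} : Set (G ⧸ N)) = π '' {a, b} := by
      rw [Set.image_insert_eq, Set.image_singleton]
    rw [himg, ← MonoidHom.map_closure, hgen, Subgroup.map_top_of_surjective π hπsurj]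
  have hbd : (π b) ^ d = 1 := by
    rw [← map_pow]
    refine (QuotientGroup.eq_one_iff _).2 ?_
    have : b ^ (d : ℕ) = c := by rw [hc, zpow_natCast]
    rw [this]
    exact Subgroup.mem_zpowers c
  have htight := IH (π a) (π b) p hp i j₁ j₂ hgen'
    (by rw [← map_pow, ha, map_one])
    hbd
    (by rw [← map_mul, ← map_pow, hab, map_one])
    (by rw [← map_zpow, ← map_zpow, ← map_mul, ← map_inv, ← map_mul, h₁])
    (by rw [← map_zpow, ← map_zpow, ← map_mul, ← map_inv, ← map_mul, h₂])
  intro g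
  obtain ⟨s, t, hst⟩ := htight (π g)
  have hmk : π g = π (a ^ s * b ^ t) := by rw [hst, map_mul, map_zpow, map_zpow]
  obtain ⟨n, hn, hgn⟩ := (QuotientGroup.mk'_eq_mk' (N := N)).mp hmk
  obtain ⟨k, rfl⟩ := hn
  have hgn' : g * c ^ k = a ^ s * b ^ t := hgn
  refine ⟨s, t + (d : ℤ) * (-k), ?_⟩
  calc g = a ^ s * b ^ t * (c ^ k)⁻¹ := by rw [← hgn']; group
    _ = a ^ s * (b ^ t * b ^ ((d:ℤ) * (-k))) := by rw [hc, ← zpow_mul]; group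
    _ = a ^ s * b ^ (t + (d:ℤ) * (-k)) := by rw [← zpow_add]

private theorem tight_aux : ∀ q : ℕ, 1 ≤ q → ∀ {G : Type u} [Group G] (a b : G) (p : ℕ),
    1 ≤ p → ∀ i j₁ j₂ : ℤ,
    Subgroup.closure ({a, b} : Set G) = ⊤ →
    a ^ p = 1 → b ^ q = 1 → (a * b) ^ 2 = 1 →
    b⁻¹ * a = a ^ i * b ^ j₁ → b * a⁻¹ = a ^ (-i) * b ^ j₂ →
    ∀ g : G, ∃ s t : ℤ, g = a ^ s * b ^ t := by
  intro q
  induction q using Nat.strong_induction_on with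
  | _ q IH =>
  intro hq G _ a b p hp i j₁ j₂ hgen ha hb hab h₁ h₂
  have hq0 : (0 : ℕ) < q := hq
  have hb' : b ^ (q : ℤ) = 1 := by rw [zpow_natCast, hb]
  -- basic identities
  have r1 : b * a = a⁻¹ * b⁻¹ := by
    have h : a * b * (a * b) = 1 := by rw [← pow_two]; exact hab
    calc b * a = a⁻¹ * (a * b * (a * b)) * b⁻¹ := by group
      _ = a⁻¹ * b⁻¹ := by rw [h]; group
  have bj₁ : b ^ j₁ = a ^ (-i) * b⁻¹ * a := by
    calc b ^ j₁ = a ^ (-i) * (a ^ i * b ^ j₁) := by group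
      _ = a ^ (-i) * (b⁻¹ * a) := by rw [h₁]
      _ = a ^ (-i) * b⁻¹ * a := by group
  have bj₂ : b ^ j₂ = a ^ i * b * a⁻¹ := by
    calc b ^ j₂ = a ^ i * (a ^ (-i) * b ^ j₂) := by group
      _ = a ^ i * (b * a⁻¹) := by rw [← h₂]
      _ = a ^ i * b * a⁻¹ := by group
  have id1 : b ^ (j₁ + 1) * a = a ^ (-i) * b⁻¹ * b⁻¹ := by
    calc b ^ (j₁ + 1) * a = b ^ j₁ * (b * a) := by group
      _ = a ^ (-i) * b⁻¹ * a * (a⁻¹ * b⁻¹) := by rw [bj₁, r1]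
      _ = a ^ (-i) * b⁻¹ * b⁻¹ := by group
  have E5 : b ^ (j₁ - 1) * a * b ^ (j₂ + 1) = a := by
    calc b ^ (j₁ - 1) * a * b ^ (j₂ + 1)
        = b⁻¹ * b⁻¹ * (b ^ (j₁ + 1) * a) * b ^ (j₂ + 1) := by group
      _ = b⁻¹ * b⁻¹ * (a ^ (-i) * b⁻¹ * b⁻¹) * b ^ (j₂ + 1) := by rw [id1]
      _ = b⁻¹ * b⁻¹ * a ^ (-i) * (b ^ j₂ * b⁻¹) := by group
      _ = b⁻¹ * b⁻¹ * a ^ (-i) * (a ^ i * b * a⁻¹ * b⁻¹) := by rw [bj₂]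
      _ = b⁻¹ * (a⁻¹ * b⁻¹) := by group
      _ = b⁻¹ * (b * a) := by rw [← r1]
      _ = a := by group
  have E6 : b ^ (j₂ + 1) * a * b ^ (j₁ - 1) = a := by
    calc b ^ (j₂ + 1) * a * b ^ (j₁ - 1)
        = b * (b ^ j₂ * a) * b ^ (j₁ - 1) := by group
      _ = b * (a ^ i * b * a⁻¹ * a) * b ^ (j₁ - 1) := by rw [bj₂]
      _ = b * a ^ i * (b * b ^ (j₁ - 1)) := by group
      _ = b * a ^ i * b ^ j₁ := by rw [show b * b ^ (j₁ - 1) = b ^ j₁ by group]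
      _ = b * (a ^ i * b ^ j₁) := by group
      _ = b * (b⁻¹ * a) := by rw [← h₁]
      _ = a := by group
  have hE5' : b ^ (j₁ - 1) * a = a * b ^ (-(j₂ + 1)) := by
    calc b ^ (j₁ - 1) * a = (b ^ (j₁ - 1) * a * b ^ (j₂ + 1)) * b ^ (-(j₂ + 1)) := by group
      _ = a * b ^ (-(j₂ + 1)) := by rw [E5]
  have hE6' : b ^ (j₂ + 1) * a = a * b ^ (-(j₁ - 1)) := by
    calc b ^ (j₂ + 1) * a = (b ^ (j₂ + 1) * a * b ^ (j₁ - 1)) * b ^ (-(j₁ - 1)) := by group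
      _ = a * b ^ (-(j₁ - 1)) := by rw [E6]
  by_cases hqm : (q : ℤ) ∣ (j₁ + j₂)
  · have hbm : b ^ (j₁ + j₂) = 1 := by
      obtain ⟨k, hk⟩ := hqm
      rw [hk, zpow_mul, hb', one_zpow]
    by_cases hqj : (q : ℤ) ∣ (j₁ - 1)
    · -- base case
      have hbj1 : b ^ j₁ = b := by
        obtain ⟨k, hk⟩ := hqj
        calc b ^ j₁ = b ^ (j₁ - 1) * b := by group
          _ = b ^ ((q:ℤ) * k) * b := by rw [← hk]
          _ = b := by rw [zpow_mul, hb', one_zpow, one_mul]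
      have hbj2 : b ^ j₂ = b⁻¹ := by
        have hq2 : (q : ℤ) ∣ (j₂ + 1) := by
          have h := dvd_sub hqm hqj
          rwa [show j₁ + j₂ - (j₁ - 1) = j₂ + 1 by ring] at h
        obtain ⟨k, hk⟩ := hq2
        calc b ^ j₂ = b ^ (j₂ + 1) * b⁻¹ := by group
          _ = b ^ ((q:ℤ) * k) * b⁻¹ := by rw [← hk]
          _ = b⁻¹ := by rw [zpow_mul, hb', one_zpow, one_mul]
      have h₁' : b⁻¹ * a = a ^ i * b := by rw [h₁, hbj1]
      have L : ∀ n : ℕ, (∃ u v : ℤ, b⁻¹ * a ^ (n : ℤ) = a ^ u * b ^ v) ∧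
          (∃ u v : ℤ, b * a ^ (n : ℤ) = a ^ u * b ^ v) := by
        intro n
        induction n with
        | zero => exact ⟨⟨0, -1, by group⟩, ⟨0, 1, by group⟩⟩
        | succ n ih =>
            obtain ⟨⟨u₁, v₁, e₁⟩, ⟨u₂, v₂, e₂⟩⟩ := ih
            have hcast : ((n + 1 : ℕ) : ℤ) = (n : ℤ) + 1 := by push_cast; ring
            constructor
            · refine ⟨i + u₂, v₂, ?_⟩
              calc b⁻¹ * a ^ ((n + 1 : ℕ) : ℤ) = (b⁻¹ * a) * a ^ (n : ℤ) := by
                    rw [hcast]; group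
                _ = a ^ i * (b * a ^ (n : ℤ)) := by rw [h₁']; group
                _ = a ^ i * (a ^ u₂ * b ^ v₂) := by rw [e₂]
                _ = a ^ (i + u₂) * b ^ v₂ := by rw [zpow_add]; group
            · refine ⟨u₁ - 1, v₁, ?_⟩
              calc b * a ^ ((n + 1 : ℕ) : ℤ) = (b * a) * a ^ (n : ℤ) := by
                    rw [hcast]; group
                _ = a⁻¹ * (b⁻¹ * a ^ (n : ℤ)) := by rw [r1]; group
                _ = a⁻¹ * (a ^ u₁ * b ^ v₁) := by rw [e₁]
                _ = a ^ (u₁ - 1) * b ^ v₁ := by rw [zpow_sub]; group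
      have Mp : ∀ s : ℤ, ∃ u v : ℤ, b * a ^ s = a ^ u * b ^ v := by
        intro s
        obtain ⟨n, hn⟩ := zpow_reduce' a p hp ha s
        rw [hn]; exact (L n).2
      have Mm : ∀ s : ℤ, ∃ u v : ℤ, b⁻¹ * a ^ s = a ^ u * b ^ v := by
        intro s
        obtain ⟨n, hn⟩ := zpow_reduce' a p hp ha s
        rw [hn]; exact (L n).1
      exact tight_of_swap' a b hgen (swap_from_M' a b Mp Mm)
    · -- quotient by ⟨b^(j₁-1)⟩, which commutes with a
      have hcomm : b ^ (j₁ - 1) * a = a * b ^ (j₁ - 1) := by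
        have hbe : b ^ (-(j₂ + 1)) = b ^ (j₁ - 1) := by
          calc b ^ (-(j₂ + 1)) = b ^ (j₁ - 1) * (b ^ (j₁ + j₂))⁻¹ := by group
            _ = b ^ (j₁ - 1) := by rw [hbm]; group
        rw [hE5', hbe]
      set d : ℕ := Int.gcd (j₁ - 1) q with hdd
      have hd1 : 1 ≤ d := by
        rcases Nat.eq_zero_or_pos d with h0 | h0
        · exfalso
          have := Int.gcd_eq_zero_iff.mp (hdd ▸ h0 : Int.gcd (j₁ - 1) q = 0)
          have hq0' : (q : ℤ) = 0 := this.2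
          have : q = 0 := by exact_mod_cast hq0'
          omega
        · exact h0
      have hddvd : d ∣ q := by
        have := (Int.gcd_dvd_right _ _ : ((Int.gcd (j₁ - 1) (q:ℤ) : ℤ)) ∣ (q:ℤ))
        exact_mod_cast this
      have hdq : d < q := by
        rcases lt_or_eq_of_le (Nat.le_of_dvd hq0 hddvd) with h | h
        · exact h
        · exfalso
          apply hqj
          have hgl := (Int.gcd_dvd_left _ _ : ((Int.gcd (j₁ - 1) (q:ℤ) : ℤ)) ∣ (j₁ - 1))
          rw [← hdd, h] at hgl
          exact hgl
      exact quot_lift' a b p q hp i j₁ j₂ hgen ha hb hab h₁ h₂ (j₁ - 1)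
        (Or.inl hcomm) d (by exact_mod_cast rfl)
        (fun a' b' p' hp' i' j₁' j₂' => IH d hdq hd1 a' b' p' hp' i' j₁' j₂')
  · -- quotient by ⟨b^(j₁+j₂)⟩, which is inverted by a
    have plat : b ^ (j₁ + j₂) * a = a * b ^ (-(j₁ + j₂)) := by
      calc b ^ (j₁ + j₂) * a = b ^ (j₂ + 1) * (b ^ (j₁ - 1) * a) := by group
        _ = b ^ (j₂ + 1) * (a * b ^ (-(j₂ + 1))) := by rw [hE5']
        _ = (b ^ (j₂ + 1) * a) * b ^ (-(j₂ + 1)) := by group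
        _ = (a * b ^ (-(j₁ - 1))) * b ^ (-(j₂ + 1)) := by rw [hE6']
        _ = a * b ^ (-(j₁ + j₂)) := by group
    set d : ℕ := Int.gcd (j₁ + j₂) q with hdd
    have hd1 : 1 ≤ d := by
      rcases Nat.eq_zero_or_pos d with h0 | h0
      · exfalso
        have := Int.gcd_eq_zero_iff.mp (hdd ▸ h0 : Int.gcd (j₁ + j₂) q = 0)
        have hq0' : (q : ℤ) = 0 := this.2
        have : q = 0 := by exact_mod_cast hq0'
        omega
      · exact h0
    have hddvd : d ∣ q := by
      have := (Int.gcd_dvd_right _ _ : ((Int.gcd (j₁ + j₂) (q:ℤ) : ℤ)) ∣ (q:ℤ))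
      exact_mod_cast this
    have hdq : d < q := by
      rcases lt_or_eq_of_le (Nat.le_of_dvd hq0 hddvd) with h | h
      · exact h
      · exfalso
        apply hqm
        have hgl := (Int.gcd_dvd_left _ _ : ((Int.gcd (j₁ + j₂) (q:ℤ) : ℤ)) ∣ (j₁ + j₂))
        rw [← hdd, h] at hgl
        exact hgl
    exact quot_lift' a b p q hp i j₁ j₂ hgen ha hb hab h₁ h₂ (j₁ + j₂)
      (Or.inr plat) d (by exact_mod_cast rfl)
      (fun a' b' p' hp' i' j₁' j₂' => IH d hdq hd1 a' b' p' hp' i' j₁' j₂')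

/-- A group generated by `a, b` with `a^p = b^q = (ab)^2 = 1`,
`b⁻¹ a = a^i b^(j₁)` and `b a⁻¹ = a^(-i) b^(j₂)` is tight. -/
theorem presented_group_tight {G : Type*} [Group G] (a b : G) (p q : ℕ)
    (hp : 1 ≤ p) (hq : 1 ≤ q) (i j₁ j₂ : ℤ)
    (hgen : Subgroup.closure ({a, b} : Set G) = ⊤)
    (ha : a ^ p = 1) (hb : b ^ q = 1) (hab : (a * b) ^ 2 = 1)
    (h₁ : b⁻¹ * a = a ^ i * b ^ j₁)
    (h₂ : b * a⁻¹ = a ^ (-i) * b ^ j₂) :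
    ∀ g : G, ∃ s t : ℤ, g = a ^ s * b ^ t := by
  exact tight_aux q hq a b p hp i j₁ j₂ hgen ha hb hab h₁ h₂
end

section
/- Let (G₁, a₁, b₁) be a tight chiral rotation pair of type (p₁, q₁) and let (G₂, a₂, b₂) be a tight rotation pair of type (p₂, q₂) (chiral or orientably regular). Set p = lcm(p₁, p₂), q = lcm(q₁, q₂), and let M be the subgroup of G₁ × G₂ generated by α := (a₁, a₂) and β := (b₁, b₂). If M has cardinality p·q, then (M, α, β) is a tight chiral rotation pair of type (p, q). -/
/-- The mix of two rotation pairs: the subgroup of the direct product generated by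
the diagonal elements. -/
def mixSubgroup {G₁ G₂ : Type*} [Group G₁] [Group G₂] (a₁ b₁ : G₁) (a₂ b₂ : G₂) :
    Subgroup (G₁ × G₂) :=
  Subgroup.closure {(a₁, a₂), (b₁, b₂)}

/-- The first distinguished generator of the mix. -/
def mixA {G₁ G₂ : Type*} [Group G₁] [Group G₂] (a₁ b₁ : G₁) (a₂ b₂ : G₂) :
    mixSubgroup a₁ b₁ a₂ b₂ :=
  ⟨(a₁, a₂), Subgroup.subset_closure (by simp)⟩

/-- The second distinguished generator of the mix. -/
def mixB {G₁ G₂ : Type*} [Group G₁] [Group G₂] (a₁ b₁ : G₁) (a₂ b₂ : G₂) :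
    mixSubgroup a₁ b₁ a₂ b₂ :=
  ⟨(b₁, b₂), Subgroup.subset_closure (by simp)⟩

/-- If the mix of a tight chiral pair with a tight pair has order `lcm(p₁,p₂) · lcm(q₁,q₂)`,
then the mix is a tight chiral rotation pair of that type. -/
theorem mix_tight_chiral {G₁ G₂ : Type*} [Group G₁] [Group G₂] [Finite G₁] [Finite G₂]
    (a₁ b₁ : G₁) (a₂ b₂ : G₂) (p₁ q₁ p₂ q₂ : ℕ)
    (hpair₁ : IsRotPair a₁ b₁ p₁ q₁) (htight₁ : IsTight a₁ b₁) (hchiral₁ : IsChiral a₁ b₁)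
    (hpair₂ : IsRotPair a₂ b₂ p₂ q₂) (htight₂ : IsTight a₂ b₂)
    (hcard : Nat.card (mixSubgroup a₁ b₁ a₂ b₂) = Nat.lcm p₁ p₂ * Nat.lcm q₁ q₂) :
    IsRotPair (mixA a₁ b₁ a₂ b₂) (mixB a₁ b₁ a₂ b₂) (Nat.lcm p₁ p₂) (Nat.lcm q₁ q₂) ∧
    IsTight (mixA a₁ b₁ a₂ b₂) (mixB a₁ b₁ a₂ b₂) ∧
    IsChiral (mixA a₁ b₁ a₂ b₂) (mixB a₁ b₁ a₂ b₂) := by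
  obtain ⟨hgen₁, hoa₁, hob₁, hp₁, hq₁, hab₁, hint₁⟩ := hpair₁
  obtain ⟨hgen₂, hoa₂, hob₂, hp₂, hq₂, hab₂, hint₂⟩ := hpair₂
  set M := mixSubgroup a₁ b₁ a₂ b₂ with hM
  set α := mixA a₁ b₁ a₂ b₂ with hα
  set β := mixB a₁ b₁ a₂ b₂ with hβ
  have hαc : (α : G₁ × G₂) = (a₁, a₂) := rfl
  have hβc : (β : G₁ × G₂) = (b₁, b₂) := rfl
  -- orders
  have hordα : orderOf α = Nat.lcm p₁ p₂ := by
    rw [← Subgroup.orderOf_coe, hαc, Prod.orderOf_mk, hoa₁, hoa₂]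
  have hordβ : orderOf β = Nat.lcm q₁ q₂ := by
    rw [← Subgroup.orderOf_coe, hβc, Prod.orderOf_mk, hob₁, hob₂]
  have hp₁0 : 0 < p₁ := by omega
  have hp₂0 : 0 < p₂ := by omega
  have hq₁0 : 0 < q₁ := by omega
  have hq₂0 : 0 < q₂ := by omega
  have hplcm : 2 ≤ Nat.lcm p₁ p₂ :=
    le_trans hp₁ (Nat.le_of_dvd (Nat.lcm_pos hp₁0 hp₂0) (Nat.dvd_lcm_left _ _))
  have hqlcm : 2 ≤ Nat.lcm q₁ q₂ :=
    le_trans hq₁ (Nat.le_of_dvd (Nat.lcm_pos hq₁0 hq₂0) (Nat.dvd_lcm_left _ _))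
  -- generation
  have hgen : Subgroup.closure ({α, β} : Set M) = ⊤ := by
    have h1 : (((↑) : M → G₁ × G₂) ⁻¹' {(a₁, a₂), (b₁, b₂)}) = ({α, β} : Set M) := by
      ext x
      simp only [Set.mem_preimage, Set.mem_insert_iff, Set.mem_singleton_iff]
      constructor
      · rintro (h | h)
        · exact Or.inl (Subtype.ext h)
        · exact Or.inr (Subtype.ext h)
      · rintro (rfl | rfl)
        · exact Or.inl rfl
        · exact Or.inr rfl
    rw [← h1]
    exact Subgroup.closure_closure_coe_preimage
  -- (αβ)² = 1
  have habsq : (α * β) ^ 2 = 1 := by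
    apply Subtype.ext
    push_cast [hαc, hβc]
    rw [Prod.mk_mul_mk, Prod.pow_mk, hab₁, hab₂]
    rfl
  -- trivial intersection
  have hint : Subgroup.zpowers α ⊓ Subgroup.zpowers β = ⊥ := by
    rw [eq_bot_iff]
    rintro x ⟨hxa, hxb⟩
    obtain ⟨i, hi⟩ := Subgroup.mem_zpowers_iff.1 hxa
    obtain ⟨j, hj⟩ := Subgroup.mem_zpowers_iff.1 hxb
    have hcoe : ((α ^ i : M) : G₁ × G₂) = ((β ^ j : M) : G₁ × G₂) := by
      rw [hi, hj]
    obtain ⟨hc1, hc2⟩ : a₁ ^ i = b₁ ^ j ∧ a₂ ^ i = b₂ ^ j := by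
      simpa [hαc, hβc] using hcoe
    have ha1 : a₁ ^ i = 1 := by
      have : a₁ ^ i ∈ Subgroup.zpowers a₁ ⊓ Subgroup.zpowers b₁ :=
        ⟨⟨i, rfl⟩, hc1 ▸ ⟨j, rfl⟩⟩
      rwa [hint₁, Subgroup.mem_bot] at this
    have ha2 : a₂ ^ i = 1 := by
      have : a₂ ^ i ∈ Subgroup.zpowers a₂ ⊓ Subgroup.zpowers b₂ :=
        ⟨⟨i, rfl⟩, hc2 ▸ ⟨j, rfl⟩⟩
      rwa [hint₂, Subgroup.mem_bot] at this
    have : x = 1 := by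
      apply Subtype.ext
      rw [← hi]
      push_cast [hαc]
      rw [Prod.pow_mk, ha1, ha2]
      rfl
    simp [this]
  -- tightness
  have htight : IsTight α β := by
    have hinj : Function.Injective
        (fun z : Subgroup.zpowers α × Subgroup.zpowers β => (z.1 : M) * (z.2 : M)) := by
      rintro ⟨x, y⟩ ⟨x', y'⟩ h
      simp only at h
      have h2 : (x' : M)⁻¹ * x = (y' : M) * (y : M)⁻¹ := by
        calc (x' : M)⁻¹ * x = (x' : M)⁻¹ * ((x : M) * y) * (y : M)⁻¹ := by group
          _ = (x' : M)⁻¹ * ((x' : M) * y') * (y : M)⁻¹ := by rw [h]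
          _ = (y' : M) * (y : M)⁻¹ := by group
      have hmem : (x' : M)⁻¹ * x ∈ Subgroup.zpowers α ⊓ Subgroup.zpowers β :=
        ⟨(Subgroup.zpowers α).mul_mem ((Subgroup.zpowers α).inv_mem x'.2) x.2,
          h2 ▸ (Subgroup.zpowers β).mul_mem y'.2 ((Subgroup.zpowers β).inv_mem y.2)⟩
      rw [hint, Subgroup.mem_bot] at hmem
      have hx : (x : M) = x' := by
        have := hmem
        rwa [inv_mul_eq_one, eq_comm] at this
      have hy : (y : M) = y' := by
        have h3 := h2
        rw [hmem, eq_comm, mul_inv_eq_one, eq_comm] at h3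
        exact h3
      exact Prod.ext (Subtype.ext hx) (Subtype.ext hy)
    have hcard' : Nat.card (Subgroup.zpowers α × Subgroup.zpowers β) = Nat.card M := by
      rw [Nat.card_prod, Nat.card_zpowers, Nat.card_zpowers, hordα, hordβ, hcard]
    have hbij := (Nat.bijective_iff_injective_and_card _).2 ⟨hinj, hcard'⟩
    intro g
    obtain ⟨⟨x, y⟩, hxy⟩ := hbij.2 g
    obtain ⟨i, hi⟩ := Subgroup.mem_zpowers_iff.1 x.2
    obtain ⟨j, hj⟩ := Subgroup.mem_zpowers_iff.1 y.2
    exact ⟨i, j, by rw [← hxy]; simp [← hi, ← hj]⟩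
  refine ⟨⟨hgen, hordα, hordβ, hplcm, hqlcm, habsq, hint⟩, htight, ?_⟩
  -- chirality
  rintro ⟨φ, hφa, hφb⟩
  apply hchiral₁
  let f : M →* G₁ := (MonoidHom.fst G₁ G₂).comp M.subtype
  have hfα : f α = a₁ := rfl
  have hfβ : f β = b₁ := rfl
  have hfsurj : Function.Surjective f := by
    rw [← MonoidHom.range_eq_top, eq_top_iff, ← hgen₁]
    rw [Subgroup.closure_le]
    intro x hx
    simp only [Set.mem_insert_iff, Set.mem_singleton_iff] at hx
    rcases hx with rfl | rfl
    · exact ⟨α, rfl⟩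
    · exact ⟨β, rfl⟩
  have key : ∀ ρ : M ≃* M, ρ α = α⁻¹ → ρ β = β⁻¹ → ∀ m ∈ f.ker, ρ m ∈ f.ker := by
    intro ρ hρa hρb m hm
    obtain ⟨i, j, rfl⟩ := htight m
    have hm' : a₁ ^ i * b₁ ^ j = 1 := by
      have := MonoidHom.mem_ker.mp hm
      rwa [map_mul, map_zpow, map_zpow, hfα, hfβ] at this
    have hc1 : a₁ ^ i = b₁ ^ (-j) := by
      rw [zpow_neg]
      exact eq_inv_of_mul_eq_one_left hm'
    have ha : a₁ ^ i = 1 := by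
      have : a₁ ^ i ∈ Subgroup.zpowers a₁ ⊓ Subgroup.zpowers b₁ :=
        ⟨⟨i, rfl⟩, hc1 ▸ ⟨-j, rfl⟩⟩
      rwa [hint₁, Subgroup.mem_bot] at this
    have hb : b₁ ^ j = 1 := by
      rw [ha, one_mul] at hm'
      exact hm'
    rw [MonoidHom.mem_ker, map_mul, map_zpow, map_zpow, hρa, hρb, map_mul, map_zpow,
      map_zpow, map_inv, map_inv, hfα, hfβ, inv_zpow, inv_zpow, ha, hb]
    simp
  have hφa' : φ.symm α = α⁻¹ := by
    rw [MulEquiv.symm_apply_eq, map_inv, hφa, inv_inv]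
  have hφb' : φ.symm β = β⁻¹ := by
    rw [MulEquiv.symm_apply_eq, map_inv, hφb, inv_inv]
  have hmap : f.ker.map (φ : M →* M) = f.ker := by
    apply le_antisymm
    · rintro x ⟨m, hm, rfl⟩
      exact key φ hφa hφb m hm
    · intro m hm
      exact ⟨φ.symm m, key φ.symm hφa' hφb' m hm, φ.apply_symm_apply m⟩
  let e : M ⧸ f.ker ≃* G₁ := QuotientGroup.quotientKerEquivOfSurjective f hfsurj
  let φbar : M ⧸ f.ker ≃* M ⧸ f.ker := QuotientGroup.congr f.ker f.ker φ hmap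
  have he : ∀ m : M, e (QuotientGroup.mk m) = f m := fun m => rfl
  refine ⟨(e.symm.trans φbar).trans e, ?_, ?_⟩
  · have h1 : e.symm a₁ = QuotientGroup.mk α := by
      rw [MulEquiv.symm_apply_eq, he, hfα]
    simp only [MulEquiv.trans_apply, h1, φbar, QuotientGroup.congr_mk, hφa]
    rw [he, map_inv, hfα]
  · have h1 : e.symm b₁ = QuotientGroup.mk β := by
      rw [MulEquiv.symm_apply_eq, he, hfβ]
    simp only [MulEquiv.trans_apply, h1, φbar, QuotientGroup.congr_mk, hφb]
    rw [he, map_inv, hfβ]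
end

section
/- Let β ≥ 5 be an integer and let ε ∈ {1, −1}. Let G = Λ(8, 2^β; 3, 1 + ε·2^(β−2), −3, −1 + ε·2^(β−2)) and let a, b be the images in G of the two generators. Then (G, a, b) is a tight chiral rotation pair of type (8, 2^β); that is: G is finite with orderOf a = 8, orderOf b = 2^β, (a*b)^2 = 1, Subgroup.zpowers a ⊓ Subgroup.zpowers b = ⊥, every element of G equals a^i * b^j for some integers i, j, and no group automorphism of G sends a to a⁻¹ and b to b⁻¹. -/
/-- The relators of the group `Λ(p, q; i₁, j₁, i₂, j₂)`:
`x^p`, `y^q`, `(xy)²`, `y⁻¹ x (x^(i₁) y^(j₁))⁻¹`, `y x⁻¹ (x^(i₂) y^(j₂))⁻¹`. -/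
def lambdaRels (p q : ℕ) (i₁ j₁ i₂ j₂ : ℤ) : Set (FreeGroup (Fin 2)) :=
  {(FreeGroup.of 0) ^ p,
   (FreeGroup.of 1) ^ q,
   (FreeGroup.of 0 * FreeGroup.of 1) ^ 2,
   (FreeGroup.of 1)⁻¹ * FreeGroup.of 0 *
     ((FreeGroup.of 0) ^ i₁ * (FreeGroup.of 1) ^ j₁)⁻¹,
   FreeGroup.of 1 * (FreeGroup.of 0)⁻¹ *
     ((FreeGroup.of 0) ^ i₂ * (FreeGroup.of 1) ^ j₂)⁻¹}

/-- The presented group `Λ(p, q; i₁, j₁, i₂, j₂)`. -/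
abbrev Lambda (p q : ℕ) (i₁ j₁ i₂ j₂ : ℤ) : Type :=
  PresentedGroup (lambdaRels p q i₁ j₁ i₂ j₂)

namespace TCAux


variable (β : ℕ) (hβ : 5 ≤ β) (ε : ℤ)

/-- `N = ε·2^(β-3)` in `ZMod (2^β)`. -/
def NN : ZMod (2^β) := (ε : ZMod (2^β)) * 2 ^ (β - 3)

lemma hq : (2 : ZMod (2^β))^β = 0 := by
  have := ZMod.natCast_self (2^β)
  push_cast at this
  exact this

lemma h2N2 (hβ : 5 ≤ β) : 2 * (NN β ε)^2 = 0 := by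
  have e : (β-3) + ((β-3) + 1) = β + (β-5) := by omega
  calc 2 * (NN β ε)^2 = (ε : ZMod (2^β))^2 * 2^((β-3)+((β-3)+1)) := by
        rw [pow_add, pow_add, pow_one]; unfold NN; ring
    _ = (ε : ZMod (2^β))^2 * (2^β * 2^(β-5)) := by rw [e, pow_add]
    _ = 0 := by rw [hq, zero_mul, mul_zero]

lemma h8N (hβ : 3 ≤ β) : 8 * (NN β ε) = 0 := by
  have e : 3 + (β - 3) = β := by omega
  calc 8 * (NN β ε) = (ε : ZMod (2^β)) * 2^(3 + (β-3)) := by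
        rw [pow_add]; unfold NN; norm_num; ring
    _ = 0 := by rw [e, hq, mul_zero]

lemma hkill : ∀ u : ZMod (2^β), ∃ v, u * (u + 1) = 2 * v := by
  intro u
  obtain ⟨z, rfl⟩ := ZMod.intCast_surjective u
  obtain ⟨w, hw⟩ := Int.even_mul_succ_self z
  exact ⟨(w : ZMod (2^β)), by push_cast [← two_mul] at hw ⊢; exact_mod_cast congrArg _ hw⟩

/-- reduction `ZMod (2^β) →+* ZMod 8`. -/
def cc : ZMod (2^β) →+* ZMod 8 :=
  ZMod.castHom (by calc (8:ℕ) = 2^3 := by norm_num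
                    _ ∣ 2^β := pow_dvd_pow 2 (by omega)) _

lemma hcN : 2 * (cc β hβ (NN β ε)) = 0 := by
  have : cc β hβ (NN β ε) = (ε : ZMod 8) * 2 ^ (β - 3) := by
    unfold NN cc
    rw [map_mul, map_intCast, map_pow, map_ofNat]
  rw [this]
  have e : (β - 3) + 1 = 3 + (β - 5) := by omega
  calc 2 * ((ε : ZMod 8) * 2 ^ (β-3)) = (ε : ZMod 8) * 2^((β-3)+1) := by
        rw [pow_add, pow_one]; ring
    _ = (ε : ZMod 8) * (2^3 * 2^(β-5)) := by rw [e, pow_add]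
    _ = 0 := by
        have h3 : (2 : ZMod 8)^3 = 0 := by decide
        rw [h3, zero_mul, mul_zero]


variable (β : ℕ) (hβ : 5 ≤ β) (ε : ℤ)

/-- right multiplication by `a⁻¹` on normal forms `a^i b^j`. -/
def ρ : Equiv.Perm (ZMod 8 × ZMod (2^β)) where
  toFun v := (v.1 - 1 - 2 * cc β hβ v.2, -v.2 + NN β ε * v.2 * (v.2 + 1))
  invFun v := (v.1 + 1 - 2 * cc β hβ v.2, -v.2 + NN β ε * v.2 * (v.2 - 1))
  left_inv := by
    rintro ⟨i, j⟩
    obtain ⟨h, ev⟩ := hkill β j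
    have h2 := h2N2 β ε hβ
    have hc := hcN β hβ ε
    simp only [Prod.mk.injEq]
    constructor
    · simp only [map_add, map_neg, map_mul, map_one]
      linear_combination (-(cc β hβ j * (cc β hβ j + 1))) * hc
    · set N := NN β ε
      linear_combination (N^3*j^2 + N^3*j + 2*N^3*h - 2*N^2*j - N^2) * ev +
        (2*N*h^2 - 2*j*h - h) * h2
  right_inv := by
    rintro ⟨i, j⟩
    obtain ⟨h, ev⟩ := hkill β j
    have h2 := h2N2 β ε hβ
    have hc := hcN β hβ ε
    simp only [Prod.mk.injEq]
    constructor
    · simp only [map_add, map_neg, map_mul, map_one, map_sub]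
      linear_combination (-(cc β hβ j * (cc β hβ j - 1))) * hc
    · set N := NN β ε
      linear_combination (N^3*j^2 - 3*N^3*j + 2*N^3*h + 4*N^3 - 2*N^2*j + 5*N^2) * ev +
        (-4*N*j*h - 2*N*j + 2*N*h^2 + 4*N*h - 2*j*h - 3*j + 5*h) * h2

/-- right multiplication by `b⁻¹`. -/
def σ' : Equiv.Perm (ZMod 8 × ZMod (2^β)) where
  toFun v := (v.1, v.2 - 1)
  invFun v := (v.1, v.2 + 1)
  left_inv := by rintro ⟨i, j⟩; simp
  right_inv := by rintro ⟨i, j⟩; simp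

lemma rho_apply (v) : ρ β hβ ε v = (v.1 - 1 - 2 * cc β hβ v.2, -v.2 + NN β ε * v.2 * (v.2 + 1)) :=
  rfl

lemma rho_symm_apply (v) :
    (ρ β hβ ε)⁻¹ v = (v.1 + 1 - 2 * cc β hβ v.2, -v.2 + NN β ε * v.2 * (v.2 - 1)) := rfl

lemma sigma_apply (v) : σ' β v = (v.1, v.2 - 1) := rfl

lemma sigma_pow (k : ℕ) (v) : (σ' β ^ k) v = (v.1, v.2 - (k : ZMod (2^β))) := by
  induction k generalizing v with
  | zero => simp
  | succ k ih =>
    rw [pow_succ, Equiv.Perm.mul_apply, sigma_apply, ih]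
    push_cast
    simp only [Prod.mk.injEq, true_and]
    ring

lemma sigma_zpow (k : ℤ) (v) : (σ' β ^ k) v = (v.1, v.2 - (k : ZMod (2^β))) := by
  cases k with
  | ofNat k => rw [Int.ofNat_eq_coe, zpow_natCast, sigma_pow]; push_cast; rfl
  | negSucc k =>
    obtain ⟨x, y⟩ := v
    rw [zpow_negSucc]
    have h0 : ((σ' β ^ (k+1))⁻¹ : Equiv.Perm _) (x, y) = (σ' β ^ (k+1)).symm (x, y) := rfl
    rw [h0, Equiv.symm_apply_eq, sigma_pow]
    simp only [Int.cast_negSucc, Prod.mk.injEq, true_and]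
    push_cast
    ring

lemma rho_sq (v) : ρ β hβ ε (ρ β hβ ε v) = (v.1 - 2, v.2 - 2 * NN β ε * v.2) := by
  obtain ⟨i, j⟩ := v
  obtain ⟨h, ev⟩ := hkill β j
  have h2 := h2N2 β ε hβ
  have hc := hcN β hβ ε
  simp only [rho_apply, Prod.mk.injEq]
  constructor
  · simp only [map_add, map_neg, map_mul, map_one]
    linear_combination (-(cc β hβ j * (cc β hβ j + 1))) * hc
  · set N := NN β ε
    linear_combination (N^3*j^2 + N^3*j + 2*N^3*h - 2*N^2*j + N^2) * ev +
      (2*N*h^2 - 2*j*h + h) * h2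

lemma rho_symm_sq (v) :
    (ρ β hβ ε)⁻¹ ((ρ β hβ ε)⁻¹ v) = (v.1 + 2, v.2 + 2 * NN β ε * v.2) := by
  obtain ⟨i, j⟩ := v
  obtain ⟨h, ev⟩ := hkill β j
  have h2 := h2N2 β ε hβ
  have hc := hcN β hβ ε
  simp only [rho_symm_apply, Prod.mk.injEq]
  constructor
  · simp only [map_add, map_neg, map_mul, map_one, map_sub]
    linear_combination (-(cc β hβ j * (cc β hβ j - 1))) * hc
  · set N := NN β ε
    linear_combination (N^3*j^2 - 3*N^3*j + 2*N^3*h + 4*N^3 - 2*N^2*j + 3*N^2) * ev +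
      (-4*N*j*h - 2*N*j + 2*N*h^2 + 4*N*h - 2*j*h - j + 3*h) * h2

lemma rho_cube (v) : ρ β hβ ε (ρ β hβ ε (ρ β hβ ε v)) =
    (v.1 - 3 - 2 * cc β hβ v.2, -v.2 + 2 * NN β ε * v.2 + NN β ε * v.2 * (v.2 + 1)) := by
  obtain ⟨i, j⟩ := v
  rw [rho_sq β hβ ε (i, j)]
  obtain ⟨h, ev⟩ := hkill β j
  have h2 := h2N2 β ε hβ
  have hc := hcN β hβ ε
  simp only [rho_apply, Prod.mk.injEq]
  constructor
  · simp only [map_sub, map_mul, map_ofNat]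
    linear_combination (2 * cc β hβ j) * hc
  · set N := NN β ε
    linear_combination (4*N^3 - 4*N^2) * ev + (-2*N*j + 4*N*h + j - 4*h) * h2

lemma rho_symm_cube (v) : (ρ β hβ ε)⁻¹ ((ρ β hβ ε)⁻¹ ((ρ β hβ ε)⁻¹ v)) =
    (v.1 + 3 - 2 * cc β hβ v.2, -v.2 - 2 * NN β ε * v.2 + NN β ε * v.2 * (v.2 - 1)) := by
  obtain ⟨i, j⟩ := v
  rw [rho_symm_sq β hβ ε (i, j)]
  obtain ⟨h, ev⟩ := hkill β j
  have h2 := h2N2 β ε hβ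
  have hc := hcN β hβ ε
  simp only [rho_symm_apply, Prod.mk.injEq]
  constructor
  · simp only [map_add, map_mul, map_ofNat]
    linear_combination (-2 * cc β hβ j) * hc
  · set N := NN β ε
    linear_combination (4*N^3 + 4*N^2) * ev + (-2*N*j + 4*N*h - 3*j + 4*h) * h2

lemma rho_four (v) : ρ β hβ ε (ρ β hβ ε (ρ β hβ ε (ρ β hβ ε v))) =
    (v.1 - 4, v.2 - 4 * NN β ε * v.2) := by
  rw [rho_sq, rho_sq]
  have h2 := h2N2 β ε hβ
  simp only [Prod.mk.injEq]
  exact ⟨by ring, by linear_combination (2 * v.2) * h2⟩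

lemma rho_eight (v) :
    ρ β hβ ε (ρ β hβ ε (ρ β hβ ε (ρ β hβ ε (ρ β hβ ε (ρ β hβ ε (ρ β hβ ε (ρ β hβ ε v))))))) = v := by
  rw [rho_four, rho_four]
  have h2 := h2N2 β ε hβ
  have h8 := h8N β ε (by omega)
  obtain ⟨i, j⟩ := v
  simp only [Prod.mk.injEq]
  have h80 : (8 : ZMod 8) = 0 := by decide
  exact ⟨by linear_combination -h80, by linear_combination (-j) * h8 + (8*j) * h2⟩

lemma rho_pow_eight : (ρ β hβ ε) ^ (8:ℕ) = 1 := by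
  apply Equiv.ext
  intro v
  simp only [pow_succ, pow_zero, one_mul, Equiv.Perm.mul_apply, Equiv.Perm.one_apply]
  exact rho_eight β hβ ε v


variable (β : ℕ) (hβ : 5 ≤ β) (ε : ℤ)

lemma sigma_symm_apply (v) : (σ' β)⁻¹ v = (v.1, v.2 + 1) := rfl

lemma castJ1 (hβ : 5 ≤ β) : ((1 + ε * 2^(β-2) : ℤ) : ZMod (2^β)) = 1 + 2 * NN β ε := by
  have e : β - 2 = (β - 3) + 1 := by omega
  unfold NN
  push_cast
  rw [e, pow_succ]
  ring

lemma castJ2 (hβ : 5 ≤ β) : ((-1 + ε * 2^(β-2) : ℤ) : ZMod (2^β)) = -1 + 2 * NN β ε := by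
  have e : β - 2 = (β - 3) + 1 := by omega
  unfold NN
  push_cast
  rw [e, pow_succ]
  ring

lemma rhosigma_sq (v) : ρ β hβ ε (σ' β (ρ β hβ ε (σ' β v))) = v := by
  obtain ⟨i, j⟩ := v
  obtain ⟨h, ev⟩ := hkill β j
  have h2 := h2N2 β ε hβ
  have hc := hcN β hβ ε
  simp only [rho_apply, sigma_apply, Prod.mk.injEq]
  constructor
  · simp only [map_add, map_neg, map_mul, map_one, map_sub]
    linear_combination (-(cc β hβ j * (cc β hβ j - 1))) * hc
  · set N := NN β ε
    linear_combination (N^3*j^2 - 3*N^3*j + 2*N^3*h + 4*N^3 - 2*N^2*j + 5*N^2) * ev +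
      (-4*N*j*h - 2*N*j + 2*N*h^2 + 4*N*h - 2*j*h - 3*j + 5*h) * h2

lemma rel4_perm (v) : (σ' β)⁻¹ (ρ β hβ ε v) =
    ρ β hβ ε (ρ β hβ ε (ρ β hβ ε ((σ' β ^ (1 + ε * 2^(β-2) : ℤ)) v))) := by
  obtain ⟨i, j⟩ := v
  rw [sigma_zpow, castJ1 β ε hβ, rho_cube]
  obtain ⟨h, ev⟩ := hkill β j
  have h2 := h2N2 β ε hβ
  have hc := hcN β hβ ε
  simp only [rho_apply, sigma_symm_apply, Prod.mk.injEq]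
  constructor
  · simp only [map_add, map_neg, map_mul, map_one, map_sub, map_ofNat]
    linear_combination (-2 : ZMod 8) * hc
  · set N := NN β ε
    linear_combination (-2*N + 2*j + 1) * h2

lemma rel5_perm (v) : σ' β ((ρ β hβ ε)⁻¹ v) =
    (ρ β hβ ε)⁻¹ ((ρ β hβ ε)⁻¹ ((ρ β hβ ε)⁻¹ ((σ' β ^ (-1 + ε * 2^(β-2) : ℤ)) v))) := by
  obtain ⟨i, j⟩ := v
  rw [sigma_zpow, castJ2 β ε hβ, rho_symm_cube]
  obtain ⟨h, ev⟩ := hkill β j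
  have h2 := h2N2 β ε hβ
  have hc := hcN β hβ ε
  simp only [rho_symm_apply, sigma_apply, Prod.mk.injEq]
  constructor
  · simp only [map_add, map_neg, map_mul, map_one, map_sub, map_ofNat]
    linear_combination (-2 : ZMod 8) * hc
  · set N := NN β ε
    linear_combination (-2*N + 2*j - 1) * h2

lemma sigma_pow_q : (σ' β) ^ ((2:ℕ)^β) = 1 := by
  apply Equiv.ext
  intro v
  rw [sigma_pow]
  simp [ZMod.natCast_self]

/-- the generator images. -/
def ff : Fin 2 → Equiv.Perm (ZMod 8 × ZMod (2^β)) := ![ρ β hβ ε, σ' β]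

lemma hlift : ∀ r ∈ lambdaRels 8 (2^β) 3 (1 + ε * 2^(β-2)) (-3) (-1 + ε * 2^(β-2)),
    FreeGroup.lift (ff β hβ ε) r = 1 := by
  intro r hr
  have f0 : ff β hβ ε 0 = ρ β hβ ε := rfl
  have f1 : ff β hβ ε 1 = σ' β := rfl
  simp only [lambdaRels, Set.mem_insert_iff, Set.mem_singleton_iff] at hr
  rcases hr with rfl | rfl | rfl | rfl | rfl
  · rw [map_pow, FreeGroup.lift_apply_of, f0]
    exact rho_pow_eight β hβ ε
  · rw [map_pow, FreeGroup.lift_apply_of, f1]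
    exact sigma_pow_q β
  · rw [map_pow, map_mul, FreeGroup.lift_apply_of, FreeGroup.lift_apply_of, f0, f1]
    apply Equiv.ext
    intro v
    simp only [pow_succ, pow_zero, one_mul, Equiv.Perm.mul_apply, Equiv.Perm.one_apply]
    exact rhosigma_sq β hβ ε v
  · simp only [map_mul, map_inv, map_zpow, FreeGroup.lift_apply_of, f0, f1]
    rw [mul_inv_eq_one]
    apply Equiv.ext
    intro v
    have h3 : (ρ β hβ ε)^(3:ℤ) = ρ β hβ ε * ρ β hβ ε * ρ β hβ ε := by
      rw [show (3:ℤ) = ((3:ℕ):ℤ) from rfl, zpow_natCast]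
      rw [pow_succ, pow_succ, pow_one]
    rw [Equiv.Perm.mul_apply, Equiv.Perm.mul_apply, h3]
    simp only [Equiv.Perm.mul_apply]
    exact rel4_perm β hβ ε v
  · simp only [map_mul, map_inv, map_zpow, FreeGroup.lift_apply_of, f0, f1]
    rw [mul_inv_eq_one]
    apply Equiv.ext
    intro v
    have h3 : (ρ β hβ ε)^(-3:ℤ) = (ρ β hβ ε)⁻¹ * (ρ β hβ ε)⁻¹ * (ρ β hβ ε)⁻¹ := by
      rw [show (-3:ℤ) = -((3:ℕ):ℤ) from rfl, zpow_neg, zpow_natCast]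
      rw [pow_succ, pow_succ, pow_one, mul_inv_rev, mul_inv_rev, mul_assoc]
    rw [Equiv.Perm.mul_apply, Equiv.Perm.mul_apply, h3]
    simp only [Equiv.Perm.mul_apply]
    exact rel5_perm β hβ ε v

/-- the permutation representation of `Λ`. -/
def φP : Lambda 8 (2^β) 3 (1 + ε * 2^(β-2)) (-3) (-1 + ε * 2^(β-2)) →*
    Equiv.Perm (ZMod 8 × ZMod (2^β)) :=
  PresentedGroup.toGroup (hlift β hβ ε)

lemma φP_a : φP β hβ ε (PresentedGroup.of 0) = ρ β hβ ε := PresentedGroup.toGroup.of _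

lemma φP_b : φP β hβ ε (PresentedGroup.of 1) = σ' β := PresentedGroup.toGroup.of _

lemma rho_zero (x : ZMod 8) : ρ β hβ ε (x, 0) = (x - 1, 0) := by
  simp only [rho_apply, Prod.mk.injEq]
  constructor
  · rw [map_zero]; ring
  · ring

lemma rho_symm_zero (x : ZMod 8) : (ρ β hβ ε)⁻¹ (x, 0) = (x + 1, 0) := by
  simp only [rho_symm_apply, Prod.mk.injEq]
  constructor
  · rw [map_zero]; ring
  · ring

lemma rho_pow_zero (k : ℕ) (x : ZMod 8) : ((ρ β hβ ε) ^ k) (x, 0) = (x - k, 0) := by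
  induction k generalizing x with
  | zero => simp
  | succ k ih =>
    rw [pow_succ, Equiv.Perm.mul_apply, rho_zero, ih]
    push_cast
    simp only [Prod.mk.injEq, and_true]
    ring

lemma rho_zpow_zero (k : ℤ) (x : ZMod 8) : ((ρ β hβ ε) ^ k) (x, 0) = (x - (k : ZMod 8), 0) := by
  cases k with
  | ofNat k => rw [Int.ofNat_eq_coe, zpow_natCast, rho_pow_zero]; push_cast; rfl
  | negSucc k =>
    rw [zpow_negSucc]
    have h0 : (((ρ β hβ ε) ^ (k+1))⁻¹ : Equiv.Perm _) (x, 0) = ((ρ β hβ ε) ^ (k+1)).symm (x, 0) :=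
      rfl
    rw [h0, Equiv.symm_apply_eq, rho_pow_zero]
    simp only [Int.cast_negSucc, Prod.mk.injEq, and_true]
    push_cast
    ring


variable (β : ℕ) (hβ : 5 ≤ β) (ε : ℤ)

def aZ : Lambda 8 (2^β) 3 (1 + ε * 2^(β-2)) (-3) (-1 + ε * 2^(β-2)) := PresentedGroup.of 0
def bZ : Lambda 8 (2^β) 3 (1 + ε * 2^(β-2)) (-3) (-1 + ε * 2^(β-2)) := PresentedGroup.of 1

lemma φP_aZ : φP β hβ ε (aZ β ε) = ρ β hβ ε := PresentedGroup.toGroup.of _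

lemma φP_bZ : φP β hβ ε (bZ β ε) = σ' β := PresentedGroup.toGroup.of _

lemma mk_rel {r} (hr : r ∈ lambdaRels 8 (2^β) 3 (1 + ε * 2^(β-2)) (-3) (-1 + ε * 2^(β-2))) :
    PresentedGroup.mk _ r = (1 : Lambda 8 (2^β) 3 (1 + ε * 2^(β-2)) (-3) (-1 + ε * 2^(β-2))) :=
  (QuotientGroup.eq_one_iff r).mpr (Subgroup.subset_normalClosure hr)

lemma rel_a8 : (aZ β ε)^(8:ℕ) = 1 := by
  have h := mk_rel β ε (show (FreeGroup.of 0)^(8:ℕ) ∈ _ from Set.mem_insert _ _)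
  rwa [map_pow] at h

lemma rel_bq : (bZ β ε)^((2:ℕ)^β) = 1 := by
  have h := mk_rel β ε (show (FreeGroup.of 1)^(2^β:ℕ) ∈ _ from
    Set.mem_insert_of_mem _ (Set.mem_insert _ _))
  rwa [map_pow] at h

lemma rel_ab : (aZ β ε * bZ β ε)^(2:ℕ) = 1 := by
  have h := mk_rel β ε (show (FreeGroup.of 0 * FreeGroup.of 1)^(2:ℕ) ∈ _ from
    Set.mem_insert_of_mem _ (Set.mem_insert_of_mem _ (Set.mem_insert _ _)))
  rwa [map_pow, map_mul] at h

lemma rel4 : (bZ β ε)⁻¹ * aZ β ε = (aZ β ε)^(3:ℤ) * (bZ β ε)^(1 + ε * 2^(β-2)) := by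
  have h := mk_rel β ε (show (FreeGroup.of 1)⁻¹ * FreeGroup.of 0 *
      ((FreeGroup.of 0)^(3:ℤ) * (FreeGroup.of 1)^(1 + ε * 2^(β-2)))⁻¹ ∈ _ from
    Set.mem_insert_of_mem _ (Set.mem_insert_of_mem _ (Set.mem_insert_of_mem _
      (Set.mem_insert _ _))))
  simp only [map_mul, map_inv, map_zpow] at h
  rwa [mul_inv_eq_one] at h

lemma rel5 : bZ β ε * (aZ β ε)⁻¹ = (aZ β ε)^(-3:ℤ) * (bZ β ε)^(-1 + ε * 2^(β-2)) := by
  have h := mk_rel β ε (show FreeGroup.of 1 * (FreeGroup.of 0)⁻¹ *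
      ((FreeGroup.of 0)^(-3:ℤ) * (FreeGroup.of 1)^(-1 + ε * 2^(β-2)))⁻¹ ∈ _ from
    Set.mem_insert_of_mem _ (Set.mem_insert_of_mem _ (Set.mem_insert_of_mem _
      (Set.mem_insert_of_mem _ (Set.mem_singleton _)))))
  simp only [map_mul, map_inv, map_zpow] at h
  rwa [mul_inv_eq_one] at h

lemma b_zq : (bZ β ε)^((2:ℤ)^β) = 1 := by
  have h := rel_bq β ε
  rw [← zpow_natCast] at h
  push_cast at h
  exact h

lemma a_z8 : (aZ β ε)^((8:ℤ)) = 1 := by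
  have h := rel_a8 β ε
  rw [← zpow_natCast] at h
  exact_mod_cast h

lemma ha2 : aZ β ε^(2:ℤ) = aZ β ε * aZ β ε := by
  have h := zpow_add (aZ β ε) 1 1
  norm_num at h
  exact h

lemma ha3 : aZ β ε^(3:ℤ) = aZ β ε * aZ β ε * aZ β ε := by
  have h := zpow_add (aZ β ε) 2 1
  norm_num at h
  rw [← ha2 β ε]
  exact zpow_add_one (aZ β ε) 2

lemma b_eq {s t c : ℤ} (h : s = t + (2:ℤ)^β * c) : (bZ β ε)^s = (bZ β ε)^t := by
  rw [h, zpow_add, zpow_mul, b_zq, one_zpow, mul_one]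

lemma a_eq {s t c : ℤ} (h : s = t + 8 * c) : (aZ β ε)^s = (aZ β ε)^t := by
  rw [h, zpow_add, zpow_mul, a_z8, one_zpow, mul_one]

lemma hab : aZ β ε * bZ β ε = (bZ β ε)⁻¹ * (aZ β ε)⁻¹ := by
  have h := rel_ab β ε
  rw [pow_two] at h
  have h2 : aZ β ε * bZ β ε = (aZ β ε * bZ β ε)⁻¹ := eq_inv_of_mul_eq_one_left h
  rwa [mul_inv_rev] at h2

lemma hba : bZ β ε * aZ β ε = (aZ β ε)⁻¹ * (bZ β ε)⁻¹ := by
  have h := rel_ab β ε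
  rw [pow_two] at h
  have h2 := congrArg (fun g => (aZ β ε)⁻¹ * g * (bZ β ε)⁻¹) h
  simpa [mul_assoc] using h2

lemma inv5 : aZ β ε * (bZ β ε)⁻¹ = (bZ β ε)^(1 - ε * 2^(β-2)) * (aZ β ε)^(3:ℤ) := by
  have h := congrArg Inv.inv (rel5 β ε)
  simp only [mul_inv_rev, inv_inv, ← zpow_neg] at h
  rw [show (-(-1 + ε * 2^(β-2))) = 1 - ε * 2^(β-2) by ring,
    show (-(-3:ℤ)) = 3 by norm_num] at h
  exact h

lemma d6 : aZ β ε^(2:ℤ) * bZ β ε * (aZ β ε^(2:ℤ))⁻¹ = (bZ β ε)^(1 - ε * 2^(β-2)) := by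
  calc aZ β ε^(2:ℤ) * bZ β ε * (aZ β ε^(2:ℤ))⁻¹
      = aZ β ε * (aZ β ε * bZ β ε) * (aZ β ε^(2:ℤ))⁻¹ := by (try simp only [ha2 β ε, ha3 β ε]); group
    _ = aZ β ε * ((bZ β ε)⁻¹ * (aZ β ε)⁻¹) * (aZ β ε^(2:ℤ))⁻¹ := by rw [hab]
    _ = (aZ β ε * (bZ β ε)⁻¹) * (aZ β ε^(3:ℤ))⁻¹ := by (try simp only [ha2 β ε, ha3 β ε]); group
    _ = ((bZ β ε)^(1 - ε * 2^(β-2)) * aZ β ε^(3:ℤ)) * (aZ β ε^(3:ℤ))⁻¹ := by rw [inv5]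
    _ = (bZ β ε)^(1 - ε * 2^(β-2)) := by (try simp only [ha2 β ε, ha3 β ε]); group

lemma d7 : (aZ β ε^(2:ℤ))⁻¹ * bZ β ε * aZ β ε^(2:ℤ) = (bZ β ε)^(1 + ε * 2^(β-2)) := by
  calc (aZ β ε^(2:ℤ))⁻¹ * bZ β ε * aZ β ε^(2:ℤ)
      = (aZ β ε^(3:ℤ))⁻¹ * (aZ β ε * bZ β ε) * aZ β ε^(2:ℤ) := by (try simp only [ha2 β ε, ha3 β ε]); group
    _ = (aZ β ε^(3:ℤ))⁻¹ * ((bZ β ε)⁻¹ * (aZ β ε)⁻¹) * aZ β ε^(2:ℤ) := by rw [hab]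
    _ = (aZ β ε^(3:ℤ))⁻¹ * ((bZ β ε)⁻¹ * aZ β ε) := by (try simp only [ha2 β ε, ha3 β ε]); group
    _ = (aZ β ε^(3:ℤ))⁻¹ * (aZ β ε^(3:ℤ) * (bZ β ε)^(1 + ε * 2^(β-2))) := by rw [rel4]
    _ = (bZ β ε)^(1 + ε * 2^(β-2)) := by (try simp only [ha2 β ε, ha3 β ε]); group

lemma d6z (l : ℤ) : (bZ β ε)^l * (aZ β ε^(2:ℤ))⁻¹ =
    (aZ β ε^(2:ℤ))⁻¹ * (bZ β ε)^((1 - ε * 2^(β-2)) * l) := by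
  have h := map_zpow (MulAut.conj (aZ β ε^(2:ℤ))) (bZ β ε) l
  simp only [MulAut.conj_apply] at h
  rw [d6 β ε, ← zpow_mul] at h
  calc (bZ β ε)^l * (aZ β ε^(2:ℤ))⁻¹
      = (aZ β ε^(2:ℤ))⁻¹ * (aZ β ε^(2:ℤ) * (bZ β ε)^l * (aZ β ε^(2:ℤ))⁻¹) := by (try simp only [ha2 β ε, ha3 β ε]); group
    _ = (aZ β ε^(2:ℤ))⁻¹ * (bZ β ε)^((1 - ε * 2^(β-2)) * l) := by rw [h]

lemma d7z (l : ℤ) : (bZ β ε)^l * aZ β ε^(2:ℤ) =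
    aZ β ε^(2:ℤ) * (bZ β ε)^((1 + ε * 2^(β-2)) * l) := by
  have h := map_zpow (MulAut.conj ((aZ β ε^(2:ℤ))⁻¹)) (bZ β ε) l
  simp only [MulAut.conj_apply, inv_inv] at h
  rw [d7 β ε, ← zpow_mul] at h
  calc (bZ β ε)^l * aZ β ε^(2:ℤ)
      = aZ β ε^(2:ℤ) * ((aZ β ε^(2:ℤ))⁻¹ * (bZ β ε)^l * aZ β ε^(2:ℤ)) := by (try simp only [ha2 β ε, ha3 β ε]); group
    _ = aZ β ε^(2:ℤ) * (bZ β ε)^((1 + ε * 2^(β-2)) * l) := by rw [h]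

lemma hpcert (hβ : 5 ≤ β) : (2:ℤ) * 2^(β-3) * 2^(β-3) = 2^β * 2^(β-5) := by
  have e : 1 + ((β-3) + (β-3)) = β + (β-5) := by omega
  calc (2:ℤ) * 2^(β-3) * 2^(β-3) = 2^(1 + ((β-3) + (β-3))) := by
        rw [pow_add, pow_add, pow_one]; ring
    _ = 2^(β + (β-5)) := by rw [e]
    _ = 2^β * 2^(β-5) := pow_add 2 β (β-5)

lemma h23cert (hβ : 5 ≤ β) : (2:ℤ)^(β-2) = 2 * 2^(β-3) := by
  have e : β - 2 = 1 + (β - 3) := by omega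
  rw [e, pow_add, pow_one]

lemma key (hβ : 5 ≤ β) (j : ℤ) : (bZ β ε)^j * aZ β ε =
    (aZ β ε)^(1 - 2*j) * (bZ β ε)^(-j + (ε * 2^(β-3)) * j * (j-1)) := by
  have hp := hpcert β hβ
  have h23 := h23cert β hβ
  induction j using Int.induction_on with
  | zero => simp
  | succ k ih =>
    calc (bZ β ε)^((k:ℤ)+1) * aZ β ε
        = (bZ β ε)^(k:ℤ) * (bZ β ε * aZ β ε) := by rw [zpow_add_one]; (try simp only [ha2 β ε, ha3 β ε]); group
      _ = (bZ β ε)^(k:ℤ) * ((aZ β ε)⁻¹ * (bZ β ε)⁻¹) := by rw [hba]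
      _ = ((bZ β ε)^(k:ℤ) * aZ β ε) * ((aZ β ε^(2:ℤ))⁻¹ * (bZ β ε)⁻¹) := by (try simp only [ha2 β ε, ha3 β ε]); group
      _ = ((aZ β ε)^(1 - 2*(k:ℤ)) * (bZ β ε)^(-(k:ℤ) + (ε * 2^(β-3)) * k * ((k:ℤ)-1))) *
            ((aZ β ε^(2:ℤ))⁻¹ * (bZ β ε)⁻¹) := by rw [ih]
      _ = (aZ β ε)^(1 - 2*(k:ℤ)) *
            ((bZ β ε)^(-(k:ℤ) + (ε * 2^(β-3)) * k * ((k:ℤ)-1)) * (aZ β ε^(2:ℤ))⁻¹) *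
            (bZ β ε)⁻¹ := by (try simp only [ha2 β ε, ha3 β ε]); group
      _ = (aZ β ε)^(1 - 2*(k:ℤ)) *
            ((aZ β ε^(2:ℤ))⁻¹ *
              (bZ β ε)^((1 - ε * 2^(β-2)) * (-(k:ℤ) + (ε * 2^(β-3)) * k * ((k:ℤ)-1)))) *
            (bZ β ε)⁻¹ := by rw [d6z]
      _ = ((aZ β ε)^(1 - 2*(k:ℤ)) * (aZ β ε)^(-2:ℤ)) *
            ((bZ β ε)^((1 - ε * 2^(β-2)) * (-(k:ℤ) + (ε * 2^(β-3)) * k * ((k:ℤ)-1))) *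
              (bZ β ε)^(-1:ℤ)) := by
          rw [zpow_neg (aZ β ε) (2:ℤ), zpow_neg (bZ β ε) (1:ℤ), zpow_one]
          (try simp only [ha2 β ε, ha3 β ε]); group
      _ = (aZ β ε)^(1 - 2*((k:ℤ)+1)) *
            (bZ β ε)^((1 - ε * 2^(β-2)) * (-(k:ℤ) + (ε * 2^(β-3)) * k * ((k:ℤ)-1)) + (-1)) := by
          rw [← zpow_add, ← zpow_add,
            show (1 - 2*(k:ℤ)) + (-2) = 1 - 2*((k:ℤ)+1) from by ring]
      _ = (aZ β ε)^(1 - 2*((k:ℤ)+1)) *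
            (bZ β ε)^(-((k:ℤ)+1) + (ε * 2^(β-3)) * ((k:ℤ)+1) * (((k:ℤ)+1)-1)) := by
          rw [b_eq β ε
            (s := (1 - ε * 2^(β-2)) * (-(k:ℤ) + (ε * 2^(β-3)) * k * ((k:ℤ)-1)) + (-1))
            (t := -((k:ℤ)+1) + (ε * 2^(β-3)) * ((k:ℤ)+1) * (((k:ℤ)+1)-1))
            (c := -(ε^2 * 2^(β-5) * k * ((k:ℤ)-1)))
            (by linear_combination (-(ε^2 * (k:ℤ) * ((k:ℤ)-1))) * hp +
              (ε*(k:ℤ) + ε^2*(k:ℤ)*2^(β-3) - ε^2*(k:ℤ)^2*2^(β-3)) * h23)]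
  | pred k ih =>
    calc (bZ β ε)^(-(k:ℤ)-1) * aZ β ε
        = (bZ β ε)^(-(k:ℤ)) * ((bZ β ε)⁻¹ * aZ β ε) := by rw [zpow_sub_one]; (try simp only [ha2 β ε, ha3 β ε]); group
      _ = (bZ β ε)^(-(k:ℤ)) * ((aZ β ε)^(3:ℤ) * (bZ β ε)^(1 + ε * 2^(β-2))) := by rw [rel4]
      _ = ((bZ β ε)^(-(k:ℤ)) * aZ β ε) * (aZ β ε^(2:ℤ) * (bZ β ε)^(1 + ε * 2^(β-2))) := by
          group
      _ = ((aZ β ε)^(1 - 2*(-(k:ℤ))) *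
            (bZ β ε)^(-(-(k:ℤ)) + (ε * 2^(β-3)) * (-(k:ℤ)) * ((-(k:ℤ))-1))) *
            (aZ β ε^(2:ℤ) * (bZ β ε)^(1 + ε * 2^(β-2))) := by rw [ih]
      _ = (aZ β ε)^(1 - 2*(-(k:ℤ))) *
            ((bZ β ε)^(-(-(k:ℤ)) + (ε * 2^(β-3)) * (-(k:ℤ)) * ((-(k:ℤ))-1)) * aZ β ε^(2:ℤ)) *
            (bZ β ε)^(1 + ε * 2^(β-2)) := by (try simp only [ha2 β ε, ha3 β ε]); group
      _ = (aZ β ε)^(1 - 2*(-(k:ℤ))) *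
            (aZ β ε^(2:ℤ) *
              (bZ β ε)^((1 + ε * 2^(β-2)) * (-(-(k:ℤ)) + (ε * 2^(β-3)) * (-(k:ℤ)) * ((-(k:ℤ))-1)))) *
            (bZ β ε)^(1 + ε * 2^(β-2)) := by rw [d7z]
      _ = ((aZ β ε)^(1 - 2*(-(k:ℤ))) * (aZ β ε)^(2:ℤ)) *
            ((bZ β ε)^((1 + ε * 2^(β-2)) * (-(-(k:ℤ)) + (ε * 2^(β-3)) * (-(k:ℤ)) * ((-(k:ℤ))-1))) *
              (bZ β ε)^(1 + ε * 2^(β-2))) := by (try simp only [ha2 β ε, ha3 β ε]); group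
      _ = (aZ β ε)^(1 - 2*(-(k:ℤ)-1)) *
            (bZ β ε)^((1 + ε * 2^(β-2)) * (-(-(k:ℤ)) + (ε * 2^(β-3)) * (-(k:ℤ)) * ((-(k:ℤ))-1)) +
              (1 + ε * 2^(β-2))) := by
          rw [← zpow_add, ← zpow_add,
            show (1 - 2*(-(k:ℤ))) + (2:ℤ) = 1 - 2*(-(k:ℤ)-1) from by ring]
      _ = (aZ β ε)^(1 - 2*(-(k:ℤ)-1)) *
            (bZ β ε)^(-(-(k:ℤ)-1) + (ε * 2^(β-3)) * (-(k:ℤ)-1) * ((-(k:ℤ)-1)-1)) := by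
          rw [b_eq β ε
            (s := (1 + ε * 2^(β-2)) * (-(-(k:ℤ)) + (ε * 2^(β-3)) * (-(k:ℤ)) * ((-(k:ℤ))-1)) +
              (1 + ε * 2^(β-2)))
            (t := -(-(k:ℤ)-1) + (ε * 2^(β-3)) * (-(k:ℤ)-1) * ((-(k:ℤ)-1)-1))
            (c := ε^2 * 2^(β-5) * (-(k:ℤ)) * ((-(k:ℤ))-1))
            (by linear_combination (ε^2 * (-(k:ℤ)) * ((-(k:ℤ))-1)) * hp +
              (ε*(k:ℤ) + ε + ε^2*(k:ℤ)*2^(β-3) + ε^2*(k:ℤ)^2*2^(β-3)) * h23)]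

lemma mul_form (hβ : 5 ≤ β) (k j : ℤ) : ∃ i' j' : ℤ, (bZ β ε)^j * (aZ β ε)^k = (aZ β ε)^i' * (bZ β ε)^j' := by
  induction k using Int.induction_on with
  | zero => exact ⟨0, j, by simp⟩
  | succ k ih =>
    obtain ⟨i', j', hm⟩ := ih
    refine ⟨i' + (1 - 2*j'), -j' + (ε * 2^(β-3)) * j' * (j'-1), ?_⟩
    calc (bZ β ε)^j * (aZ β ε)^((k:ℤ)+1)
        = ((bZ β ε)^j * (aZ β ε)^(k:ℤ)) * aZ β ε := by rw [zpow_add_one]; (try simp only [ha2 β ε, ha3 β ε]); group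
      _ = ((aZ β ε)^i' * (bZ β ε)^j') * aZ β ε := by rw [hm]
      _ = (aZ β ε)^i' * ((bZ β ε)^j' * aZ β ε) := by (try simp only [ha2 β ε, ha3 β ε]); group
      _ = (aZ β ε)^i' * ((aZ β ε)^(1 - 2*j') * (bZ β ε)^(-j' + (ε * 2^(β-3)) * j' * (j'-1))) := by
          rw [key β ε hβ]
      _ = (aZ β ε)^(i' + (1 - 2*j')) * (bZ β ε)^(-j' + (ε * 2^(β-3)) * j' * (j'-1)) := by
          rw [← mul_assoc, ← zpow_add]
  | pred k ih =>
    obtain ⟨i', j', hm⟩ := ih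
    refine ⟨i' + (1 - 2*j') + (-2), (1 - ε * 2^(β-2)) * (-j' + (ε * 2^(β-3)) * j' * (j'-1)), ?_⟩
    calc (bZ β ε)^j * (aZ β ε)^(-(k:ℤ)-1)
        = ((bZ β ε)^j * (aZ β ε)^(-(k:ℤ))) * (aZ β ε)⁻¹ := by rw [zpow_sub_one]; (try simp only [ha2 β ε, ha3 β ε]); group
      _ = ((aZ β ε)^i' * (bZ β ε)^j') * (aZ β ε)⁻¹ := by rw [hm]
      _ = (aZ β ε)^i' * ((bZ β ε)^j' * aZ β ε) * (aZ β ε^(2:ℤ))⁻¹ := by (try simp only [ha2 β ε, ha3 β ε]); group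
      _ = (aZ β ε)^i' * ((aZ β ε)^(1 - 2*j') * (bZ β ε)^(-j' + (ε * 2^(β-3)) * j' * (j'-1))) *
            (aZ β ε^(2:ℤ))⁻¹ := by rw [key β ε hβ]
      _ = (aZ β ε)^i' * (aZ β ε)^(1 - 2*j') *
            ((bZ β ε)^(-j' + (ε * 2^(β-3)) * j' * (j'-1)) * (aZ β ε^(2:ℤ))⁻¹) := by (try simp only [ha2 β ε, ha3 β ε]); group
      _ = (aZ β ε)^i' * (aZ β ε)^(1 - 2*j') *
            ((aZ β ε^(2:ℤ))⁻¹ *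
              (bZ β ε)^((1 - ε * 2^(β-2)) * (-j' + (ε * 2^(β-3)) * j' * (j'-1)))) := by
          rw [d6z]
      _ = ((aZ β ε)^i' * (aZ β ε)^(1 - 2*j') * (aZ β ε)^(-2:ℤ)) *
            (bZ β ε)^((1 - ε * 2^(β-2)) * (-j' + (ε * 2^(β-3)) * j' * (j'-1))) := by
          rw [zpow_neg (aZ β ε) (2:ℤ)]
          (try simp only [ha2 β ε, ha3 β ε]); group
      _ = (aZ β ε)^(i' + (1 - 2*j') + (-2)) *
            (bZ β ε)^((1 - ε * 2^(β-2)) * (-j' + (ε * 2^(β-3)) * j' * (j'-1))) := by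
          rw [← zpow_add, ← zpow_add]

lemma tight (hβ : 5 ≤ β) (g : Lambda 8 (2^β) 3 (1 + ε * 2^(β-2)) (-3) (-1 + ε * 2^(β-2))) :
    ∃ i j : ℤ, g = (aZ β ε)^i * (bZ β ε)^j := by
  let S : Subgroup (Lambda 8 (2^β) 3 (1 + ε * 2^(β-2)) (-3) (-1 + ε * 2^(β-2))) :=
    { carrier := {g | ∃ i j : ℤ, g = (aZ β ε)^i * (bZ β ε)^j}
      one_mem' := ⟨0, 0, by simp⟩
      mul_mem' := by
        rintro x y ⟨i, j, rfl⟩ ⟨k, l, rfl⟩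
        obtain ⟨i', j', hm⟩ := mul_form β ε hβ k j
        refine ⟨i + i', j' + l, ?_⟩
        calc (aZ β ε)^i * (bZ β ε)^j * ((aZ β ε)^k * (bZ β ε)^l)
            = (aZ β ε)^i * ((bZ β ε)^j * (aZ β ε)^k) * (bZ β ε)^l := by (try simp only [ha2 β ε, ha3 β ε]); group
          _ = (aZ β ε)^i * ((aZ β ε)^i' * (bZ β ε)^j') * (bZ β ε)^l := by rw [hm]
          _ = ((aZ β ε)^i * (aZ β ε)^i') * ((bZ β ε)^j' * (bZ β ε)^l) := by (try simp only [ha2 β ε, ha3 β ε]); group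
          _ = (aZ β ε)^(i + i') * (bZ β ε)^(j' + l) := by rw [← zpow_add, ← zpow_add]
      inv_mem' := by
        rintro x ⟨i, j, rfl⟩
        obtain ⟨i', j', hm⟩ := mul_form β ε hβ (-i) (-j)
        refine ⟨i', j', ?_⟩
        rw [← hm]
        group }
  have hS : ∀ x, x ∈ S := by
    intro x
    refine PresentedGroup.generated_by _ S ?_ x
    intro t
    fin_cases t
    · exact ⟨1, 0, by simp [aZ]⟩
    · exact ⟨0, 1, by simp [bZ]⟩
  exact hS g


end TCAux

/-- `Λ(8, 2^β; 3, 1 + ε·2^(β-2), -3, -1 + ε·2^(β-2))` (for `β ≥ 5`, `ε = ±1`) is the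
automorphism group of a tight chiral polyhedron of type `{8, 2^β}`. -/
theorem even_atomics_tight_chiral (β : ℕ) (hβ : 5 ≤ β) (ε : ℤ) (hε : ε = 1 ∨ ε = -1) :
    let G := Lambda 8 (2 ^ β) 3 (1 + ε * 2 ^ (β - 2)) (-3) (-1 + ε * 2 ^ (β - 2))
    let a : G := PresentedGroup.of 0
    let b : G := PresentedGroup.of 1
    Finite G ∧ orderOf a = 8 ∧ orderOf b = 2 ^ β ∧ (a * b) ^ 2 = 1 ∧
      Subgroup.zpowers a ⊓ Subgroup.zpowers b = ⊥ ∧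
      (∀ g : G, ∃ i j : ℤ, g = a ^ i * b ^ j) ∧
      ¬ ∃ φ : G ≃* G, φ a = a⁻¹ ∧ φ b = b⁻¹ := by
  intro G a b
  haveI : NeZero ((2:ℕ)^β) := ⟨pow_ne_zero β (by norm_num)⟩
  have ha : a = TCAux.aZ β ε := rfl
  have hb : b = TCAux.bZ β ε := rfl
  have htight : ∀ g : G, ∃ i j : ℤ, g = a ^ i * b ^ j := by
    intro g
    obtain ⟨i, j, hg⟩ := TCAux.tight β ε hβ g
    exact ⟨i, j, by rw [ha, hb]; exact hg⟩
  -- reduction of exponents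
  have hared : ∀ i : ℤ, a ^ (((i : ZMod 8)).val : ℤ) = a ^ i := by
    intro i
    rw [ZMod.val_intCast, ha]
    exact TCAux.a_eq β ε (c := -(i/8)) (by omega)
  have hbred : ∀ j : ℤ, b ^ (((j : ZMod ((2:ℕ)^β))).val : ℤ) = b ^ j := by
    intro j
    rw [ZMod.val_intCast, hb]
    have hm : (((2:ℕ)^β : ℕ) : ℤ) = (2:ℤ)^β := by push_cast; rfl
    refine TCAux.b_eq β ε (c := -(j / ((2:ℤ)^β))) ?_
    rw [hm]
    have h0 := Int.emod_add_mul_ediv j ((2:ℤ)^β)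
    linarith
  -- finiteness
  have hfin : Finite G := by
    refine Finite.of_surjective
      (fun v : ZMod 8 × ZMod ((2:ℕ)^β) => a ^ ((v.1.val : ℤ)) * b ^ ((v.2.val : ℤ))) ?_
    intro g
    obtain ⟨i, j, rfl⟩ := htight g
    refine ⟨((i : ZMod 8), (j : ZMod ((2:ℕ)^β))), ?_⟩
    dsimp only
    rw [hared, hbred]
  -- order of a
  have horda : orderOf a = 8 := by
    have h1 : orderOf a ∣ 8 := orderOf_dvd_of_pow_eq_one (by rw [ha]; exact TCAux.rel_a8 β ε)
    have hρ : (TCAux.ρ β hβ ε) ^ (orderOf a) = 1 := by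
      rw [← TCAux.φP_a β hβ ε, ← map_pow]
      have hone : (PresentedGroup.of 0 : G) ^ (orderOf a) = 1 := pow_orderOf_eq_one a
      rw [hone, map_one]
    have h2 := congrArg (fun e : Equiv.Perm (ZMod 8 × ZMod (2^β)) =>
      e ((0 : ZMod 8), (0 : ZMod (2^β)))) hρ
    simp only [TCAux.rho_pow_zero, Equiv.Perm.one_apply, Prod.mk.injEq] at h2
    have h3 : ((orderOf a : ℕ) : ZMod 8) = 0 := by
      have := h2.1
      rwa [zero_sub, neg_eq_zero] at this
    exact Nat.dvd_antisymm h1 ((ZMod.natCast_eq_zero_iff _ _).mp h3)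
  -- order of b
  have hordb : orderOf b = 2^β := by
    have h1 : orderOf b ∣ 2^β := orderOf_dvd_of_pow_eq_one (by rw [hb]; exact TCAux.rel_bq β ε)
    have hσ : (TCAux.σ' β) ^ (orderOf b) = 1 := by
      rw [← TCAux.φP_b β hβ ε, ← map_pow]
      have hone : (PresentedGroup.of 1 : G) ^ (orderOf b) = 1 := pow_orderOf_eq_one b
      rw [hone, map_one]
    have h2 := congrArg (fun e : Equiv.Perm (ZMod 8 × ZMod (2^β)) =>
      e ((0 : ZMod 8), (0 : ZMod (2^β)))) hσ
    simp only [TCAux.sigma_pow, Equiv.Perm.one_apply, Prod.mk.injEq] at h2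
    have h3 : ((orderOf b : ℕ) : ZMod (2^β)) = 0 := by
      have := h2.2
      rwa [zero_sub, neg_eq_zero] at this
    exact Nat.dvd_antisymm h1 ((ZMod.natCast_eq_zero_iff _ _).mp h3)
  refine ⟨hfin, horda, hordb, by rw [ha, hb]; exact TCAux.rel_ab β ε, ?_, htight, ?_⟩
  -- trivial intersection
  · rw [eq_bot_iff]
    intro g hg
    rw [Subgroup.mem_inf] at hg
    obtain ⟨i, hi⟩ := Subgroup.mem_zpowers_iff.mp hg.1
    obtain ⟨j, hj⟩ := Subgroup.mem_zpowers_iff.mp hg.2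
    have hij : a ^ i = b ^ j := by rw [hi, hj]
    rw [ha] at hi hij
    rw [hb] at hj hij
    have hperm : (TCAux.ρ β hβ ε) ^ i = (TCAux.σ' β) ^ j := by
      have := congrArg (TCAux.φP β hβ ε) hij
      rwa [map_zpow, map_zpow, TCAux.φP_aZ, TCAux.φP_bZ] at this
    have h2 := congrArg (fun e : Equiv.Perm (ZMod 8 × ZMod (2^β)) =>
      e ((0 : ZMod 8), (0 : ZMod (2^β)))) hperm
    simp only [TCAux.rho_zpow_zero, TCAux.sigma_zpow, Prod.mk.injEq] at h2
    have h3 : ((i : ℤ) : ZMod 8) = 0 := by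
      have := h2.1
      rwa [zero_sub, neg_eq_zero] at this
    obtain ⟨c, rfl⟩ := (ZMod.intCast_zmod_eq_zero_iff_dvd _ _).mp h3
    rw [Subgroup.mem_bot, ← hi]
    rw [show ((8:ℕ):ℤ) * c = 8 * c by push_cast; ring, zpow_mul, TCAux.a_z8, one_zpow]
  -- chirality
  · rintro ⟨ψ, hψa, hψb⟩
    have h4 := congrArg ψ (TCAux.rel4 β ε)
    rw [← ha, ← hb] at h4
    simp only [map_mul, map_inv, map_zpow, hψa, hψb, inv_inv, inv_zpow, ← zpow_neg] at h4
    have h5 := TCAux.rel5 β ε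
    rw [← ha, ← hb] at h5
    have hcancel : b ^ (-(1 + ε * 2^(β-2))) = b ^ (-1 + ε * 2^(β-2)) :=
      mul_left_cancel (h4.symm.trans h5)
    have h6 : b ^ ((-1 + ε * 2^(β-2)) + (1 + ε * 2^(β-2))) = 1 := by
      rw [zpow_add, ← hcancel, zpow_neg, inv_mul_cancel]
    have hd : ((orderOf b : ℕ) : ℤ) ∣ ((-1 + ε * 2^(β-2)) + (1 + ε * 2^(β-2))) :=
      orderOf_dvd_iff_zpow_eq_one.mpr h6
    rw [hordb] at hd
    have he : ((-1 + ε * 2^(β-2)) + (1 + ε * 2^(β-2))) = ε * 2^(β-1) := by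
      rw [show β - 1 = 1 + (β-2) by omega, pow_add, pow_one]
      ring
    rw [he, show (((2:ℕ)^β : ℕ) : ℤ) = (2:ℤ)^β by push_cast; rfl] at hd
    have hd2 : (2:ℤ)^β ∣ 2^(β-1) := by
      rcases hε with rfl | rfl
      · simpa using hd
      · rw [show (-1 : ℤ) * 2^(β-1) = -(2^(β-1)) by ring, dvd_neg] at hd
        exact hd
    have hle := Int.le_of_dvd (by positivity) hd2
    have hlt : (2:ℤ)^(β-1) < 2^β := pow_lt_pow_right₀ (by norm_num) (by omega)
    omega
end

section
/- Let α, β be integers with α ≥ 3, β ≥ 5, and β ≥ α + 1, and let ε ∈ {1, −1}. Let G = Λ(2^α, 2^β; 3, 1 + ε·2^(β−2), −3, −1 + ε·2^(β−2)) and let a, b be the images in G of the two generators. Then (G, a, b) is a tight chiral rotation pair of type (2^α, 2^β); that is: G is finite with orderOf a = 2^α, orderOf b = 2^β, (a*b)^2 = 1, Subgroup.zpowers a ⊓ Subgroup.zpowers b = ⊥, every element of G equals a^i * b^j for some integers i, j, and no group automorphism of G sends a to a⁻¹ and b to b⁻¹. -/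
private lemma TCaux.zpow_eq_of_zmod {G : Type*} [Group G] {x : G} {q : ℕ} (hx : x ^ q = 1)
    {s s' : ℤ} (h : (s : ZMod q) = (s' : ZMod q)) : x ^ s = x ^ s' := by
  rw [ZMod.intCast_eq_intCast_iff] at h
  obtain ⟨d, hd⟩ := Int.ModEq.dvd h
  have hq : x ^ (q : ℤ) = 1 := by rw [zpow_natCast, hx]
  have : s' = s + q * d := by linarith
  rw [this, zpow_add, zpow_mul, hq, one_zpow, mul_one]

private lemma TCaux.zpow_fix {X : Type*} {f : Equiv.Perm X} {x : X} (h : f x = x) :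
    ∀ n : ℤ, (f ^ n) x = x := by
  have hn : ∀ n : ℕ, (f ^ n) x = x := by
    intro n
    induction n with
    | zero => simp
    | succ n ih => rw [pow_succ, Equiv.Perm.mul_apply, h, ih]
  intro n
  rcases n with n | n
  · rw [Int.ofNat_eq_coe, zpow_natCast]; exact hn n
  · rw [zpow_negSucc]
    conv_lhs => rw [← hn (n + 1)]
    exact Equiv.Perm.inv_eq_iff_eq.mpr rfl

private lemma TCaux.sigma_model (α β : ℕ) (hα : 3 ≤ α) (hβ : 5 ≤ β) (hαβ : α + 1 ≤ β) (ε : ℤ) :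
    ∃ A B : Equiv.Perm (ZMod (2 ^ β)),
      (∀ r ∈ lambdaRels (2 ^ α) (2 ^ β) 3 (1 + ε * 2 ^ (β - 2)) (-3) (-1 + ε * 2 ^ (β - 2)),
        FreeGroup.lift ![A, B] r = 1) ∧
      (∀ i : ℤ, (A ^ i) 0 = 0) ∧ (∀ j : ℤ, (B ^ j) 0 = 0 → (2 ^ β : ℤ) ∣ j) := by
  haveI : NeZero (2 ^ β) := ⟨pow_ne_zero _ two_ne_zero⟩
  set t : ZMod (2 ^ β) := (ε : ZMod (2 ^ β)) * 2 ^ (β - 3) with ht_def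
  have h2 : (2 : ZMod (2 ^ β)) ^ β = 0 := by
    have := ZMod.natCast_self (2 ^ β)
    push_cast at this
    exact this
  have hpow0 : ∀ e : ℕ, β ≤ e → (2 : ZMod (2 ^ β)) ^ e = 0 := by
    intro e he
    rw [← Nat.sub_add_cancel he, pow_add, h2, mul_zero]
  have h2t2 : 2 * t ^ 2 = 0 := by
    have h1 : 2 * t ^ 2 = (ε : ZMod (2 ^ β)) ^ 2 * 2 ^ ((β - 3) + (β - 3) + 1) := by
      rw [pow_add, pow_add, pow_one]; ring
    rw [h1, hpow0 _ (by omega), mul_zero]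
  have ht3 : t ^ 3 = 0 := by
    have h1 : t ^ 3 = (ε : ZMod (2 ^ β)) ^ 3 * 2 ^ ((β - 3) + (β - 3) + (β - 3)) := by
      rw [pow_add, pow_add]; ring
    rw [h1, hpow0 _ (by omega), mul_zero]
  have h8t : 8 * t = 0 := by
    have h1 : 8 * t = (ε : ZMod (2 ^ β)) * 2 ^ ((β - 3) + 3) := by
      rw [pow_add]; ring_nf; rw [ht_def]
    rw [h1, hpow0 _ (by omega), mul_zero]
  have hpar : ∀ x : ZMod (2 ^ β), t ^ 2 * (x ^ 2 - x) = 0 := by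
    intro x
    obtain ⟨n, rfl⟩ := ZMod.intCast_surjective x
    obtain ⟨k, hk⟩ := Int.even_mul_succ_self (n - 1)
    have hkz : ((n : ZMod (2 ^ β))) ^ 2 - n = 2 * (k : ZMod (2 ^ β)) := by
      have := congrArg (fun z : ℤ => (z : ZMod (2 ^ β))) hk
      push_cast at this
      linear_combination this
    linear_combination ((k : ZMod (2 ^ β))) * h2t2 + t ^ 2 * hkz
  set g : ZMod (2 ^ β) → ZMod (2 ^ β) := fun x => t * x ^ 2 - (1 + t) * x with hg_def
  have hgg : ∀ x, g (g x) = (1 + 2 * t) * x := by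
    intro x
    show t * (t * x ^ 2 - (1 + t) * x) ^ 2 - (1 + t) * (t * x ^ 2 - (1 + t) * x)
      = (1 + 2 * t) * x
    linear_combination (x ^ 2 - 2 * x ^ 3 + x ^ 4) * ht3 + (-1 - 2 * x) * hpar x
  have hinj : Function.Injective g := by
    have hL : Function.LeftInverse (fun y => (1 + 2 * t) ^ 3 * g y) g := by
      intro x
      show (1 + 2 * t) ^ 3 * g (g x) = x
      rw [hgg]
      linear_combination x * h8t + 12 * x * h2t2 + (32 * x + 16 * t * x) * ht3
    exact hL.injective
  set C : Equiv.Perm (ZMod (2 ^ β)) := Equiv.ofBijective g (Finite.injective_iff_bijective.mp hinj)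
    with hC_def
  have hC : ∀ x, C x = g x := fun _ => rfl
  have hC2 : ∀ x, C (C x) = (1 + 2 * t) * x := by
    intro x; rw [hC, hC]; exact hgg x
  have hC0 : C 0 = 0 := by
    rw [hC]; show t * 0 ^ 2 - (1 + t) * 0 = 0; ring
  have hpow23 : (2 : ZMod (2 ^ β)) ^ (β - 2) = 2 * 2 ^ (β - 3) := by
    rw [← pow_succ']
    congr 1
    omega
  set B : Equiv.Perm (ZMod (2 ^ β)) := Equiv.addLeft (-1 : ZMod (2 ^ β)) with hB_def
  have hBapp : ∀ x, B x = -1 + x := fun _ => rfl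
  have hBz : ∀ (n : ℤ) (x : ZMod (2 ^ β)), (B ^ n) x = -(n : ZMod (2 ^ β)) + x := by
    intro n x
    rw [hB_def, Equiv.zsmul_addLeft]
    show (n • (-1 : ZMod (2 ^ β))) + x = _
    rw [zsmul_eq_mul]
    ring_nf
  have hword4 : C * B = B ^ (-(1 + ε * 2 ^ (β - 2))) * C ^ 3 := by
    ext x
    have e3 : (C ^ 3) x = (1 + 2 * t) * g x := by
      have : (C ^ 3) x = C (C (C x)) := by
        simp [pow_succ, Equiv.Perm.mul_apply]
      rw [this, hC2, hC]
    rw [Equiv.Perm.mul_apply, Equiv.Perm.mul_apply, e3, hBz, hBapp, hC]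
    show g (-1 + x) = _
    simp only [hg_def]
    push_cast
    rw [hpow23]
    linear_combination (-2 : ZMod (2 ^ β)) * hpar x
  have hword5 : B * C = C ^ 3 * B ^ (-1 + ε * 2 ^ (β - 2)) := by
    ext x
    have e3 : ∀ z, (C ^ 3) z = (1 + 2 * t) * g z := by
      intro z
      have : (C ^ 3) z = C (C (C z)) := by
        simp [pow_succ, Equiv.Perm.mul_apply]
      rw [this, hC2, hC]
    rw [Equiv.Perm.mul_apply, Equiv.Perm.mul_apply, e3, hBz, hBapp, hC]
    simp only [hg_def]
    push_cast
    rw [hpow23]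
    linear_combination (8 * x - 8 * t) * ht3 + (-1 : ZMod (2 ^ β)) * h2t2
      + (-2 : ZMod (2 ^ β)) * hpar x
  refine ⟨C⁻¹, B, ?_, ?_, ?_⟩
  · intro r hr
    simp only [lambdaRels, Set.mem_insert_iff, Set.mem_singleton_iff] at hr
    rcases hr with rfl | rfl | rfl | rfl | rfl
    · rw [map_pow, FreeGroup.lift_apply_of]
      show (C⁻¹) ^ (2 ^ α) = 1
      rw [inv_pow, inv_eq_one]
      have hα8 : (8 : ℕ) * 2 ^ (α - 3) = 2 ^ α := by
        rw [show (8 : ℕ) = 2 ^ 3 from rfl, ← pow_add]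
        congr 1
        omega
      rw [← hα8, pow_mul]
      suffices h8 : C ^ 8 = 1 by rw [h8, one_pow]
      ext x
      have e1 : (C ^ 8) x = C (C (C (C (C (C (C (C x))))))) := by
        simp [pow_succ, Equiv.Perm.mul_apply]
      rw [e1, hC2, hC2, hC2, hC2, Equiv.Perm.one_apply]
      linear_combination x * h8t + 12 * x * h2t2 + (32 * x + 16 * t * x) * ht3
    · rw [map_pow, FreeGroup.lift_apply_of]
      show B ^ (2 ^ β) = 1
      ext x
      rw [← zpow_natCast, hBz, Equiv.Perm.one_apply]
      push_cast
      rw [h2]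
      ring
    · rw [map_pow, map_mul, FreeGroup.lift_apply_of, FreeGroup.lift_apply_of]
      show (C⁻¹ * B) ^ 2 = 1
      have hword3 : C * B⁻¹ * C = B := by
        have hBinv : ∀ x, B⁻¹ x = 1 + x := by
          intro x
          rw [show B⁻¹ = B ^ (-1 : ℤ) by group, hBz]
          push_cast
          ring_nf
        ext x
        rw [Equiv.Perm.mul_apply, Equiv.Perm.mul_apply, hBinv, hBapp, hC, hC]
        simp only [hg_def]
        linear_combination (x ^ 2 - 2 * x ^ 3 + x ^ 4) * ht3 + (1 - 2 * x) * hpar x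
      rw [sq]
      nth_rewrite 2 [← hword3]
      group
    · simp only [map_mul, map_inv, map_zpow, FreeGroup.lift_apply_of]
      show B⁻¹ * C⁻¹ * ((C⁻¹) ^ (3 : ℤ) * B ^ (1 + ε * 2 ^ (β - 2)))⁻¹ = 1
      rw [mul_inv_eq_one]
      have h4' := congrArg (fun z => z⁻¹) hword4
      simp only [mul_inv_rev] at h4'
      rw [h4']
      group
    · simp only [map_mul, map_inv, map_zpow, FreeGroup.lift_apply_of]
      show B * (C⁻¹)⁻¹ * ((C⁻¹) ^ (-3 : ℤ) * B ^ (-1 + ε * 2 ^ (β - 2)))⁻¹ = 1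
      rw [mul_inv_eq_one, inv_inv, hword5]
      group
  · have h0 : C⁻¹ 0 = 0 := by
      conv_lhs => rw [← hC0]
      exact Equiv.Perm.inv_eq_iff_eq.mpr rfl
    exact TCaux.zpow_fix h0
  · intro j hj
    rw [hBz, add_zero, neg_eq_zero] at hj
    have := (ZMod.intCast_zmod_eq_zero_iff_dvd j (2 ^ β)).mp hj
    push_cast at this
    exact this

private lemma TCaux.tau_model (α β : ℕ) (hα : 3 ≤ α) (hβ : 5 ≤ β) (hαβ : α + 1 ≤ β) (ε : ℤ) :
    ∃ X Y : Equiv.Perm (ZMod (2 ^ α)),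
      (∀ r ∈ lambdaRels (2 ^ α) (2 ^ β) 3 (1 + ε * 2 ^ (β - 2)) (-3) (-1 + ε * 2 ^ (β - 2)),
        FreeGroup.lift ![X, Y] r = 1) ∧
      (∀ i : ℤ, (X ^ i) 0 = 0 → (2 ^ α : ℤ) ∣ i) := by
  haveI : NeZero (2 ^ α) := ⟨pow_ne_zero _ two_ne_zero⟩
  have hdvd2 : (2 : ℕ) ∣ 2 ^ α := dvd_pow_self 2 (by omega)
  set par : ZMod (2 ^ α) →+* ZMod 2 := ZMod.castHom hdvd2 (ZMod 2) with hpar_def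
  have hp2 : par 2 = 0 := by
    rw [show (2 : ZMod (2 ^ α)) = 1 + 1 by norm_num, map_add, map_one]
    decide
  have hp3 : par 3 = 1 := by
    rw [show (3 : ZMod (2 ^ α)) = 1 + 2 by norm_num, map_add, map_one, hp2, add_zero]
  have hone : ∀ z : ZMod 2, z ≠ 0 → z = 1 := by decide
  have hone' : ∀ z : ZMod 2, z ≠ 0 → 1 + z = 0 := by decide
  have hmul2 : ∀ z i : ZMod (2 ^ α), par (i - 2 * z) = par i := by
    intro z i
    rw [map_sub, map_mul, hp2, zero_mul, sub_zero]
  have hzero : ∀ e : ℕ, α ≤ e → (2 : ZMod (2 ^ α)) ^ e = 0 := by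
    intro e he
    have : ((2 ^ e : ℕ) : ZMod (2 ^ α)) = 0 :=
      (ZMod.natCast_eq_zero_iff _ _).mpr (pow_dvd_pow 2 he)
    push_cast at this
    exact this
  have h21 : (2 : ZMod (2 ^ α)) * 2 ^ (β - 2) = 0 := by
    rw [← pow_succ']
    exact hzero _ (by omega)
  set X : Equiv.Perm (ZMod (2 ^ α)) := Equiv.addLeft (1 : ZMod (2 ^ α)) with hX_def
  have hXapp : ∀ x, X x = 1 + x := fun _ => rfl
  have hXz : ∀ (n : ℤ) (x : ZMod (2 ^ α)), (X ^ n) x = (n : ZMod (2 ^ α)) + x := by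
    intro n x
    rw [hX_def, Equiv.zsmul_addLeft]
    show (n • (1 : ZMod (2 ^ α))) + x = _
    rw [zsmul_eq_mul]
    ring_nf
  set Y : Equiv.Perm (ZMod (2 ^ α)) :=
    { toFun := fun i => if par i = 0 then i else i - 2
      invFun := fun i => if par i = 0 then i else i + 2
      left_inv := by
        intro i
        by_cases h : par i = 0
        · simp [h]
        · have h2 : par (i - 2) = par i := by rw [map_sub, hp2, sub_zero]
          simp [h, h2]
      right_inv := by
        intro i
        by_cases h : par i = 0
        · simp [h]
        · have h2 : par (i + 2) = par i := by rw [map_add, hp2, add_zero]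
          simp [h, h2] } with hY_def
  have hYapp : ∀ i, Y i = if par i = 0 then i else i - 2 := fun _ => rfl
  have hYinv : ∀ i, Y⁻¹ i = if par i = 0 then i else i + 2 := fun _ => rfl
  have hYz : ∀ (n : ℤ) (i : ZMod (2 ^ α)),
      (Y ^ n) i = if par i = 0 then i else i - 2 * (n : ZMod (2 ^ α)) := by
    intro n
    induction n using Int.induction_on with
    | zero => intro i; split_ifs <;> simp
    | succ n ih =>
      intro i
      rw [zpow_add_one, Equiv.Perm.mul_apply, hYapp]
      by_cases h : par i = 0
      · rw [if_pos h, ih]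
        simp only [if_pos h]
      · have h2 : par (i - 2) = par i := by rw [map_sub, hp2, sub_zero]
        rw [if_neg h, ih, h2]
        simp only [if_neg h]
        push_cast
        ring
    | pred n ih =>
      intro i
      rw [zpow_sub_one, Equiv.Perm.mul_apply, hYinv]
      by_cases h : par i = 0
      · rw [if_pos h, ih]
        simp only [if_pos h]
      · have h2 : par (i + 2) = par i := by rw [map_add, hp2, add_zero]
        rw [if_neg h, ih, h2]
        simp only [if_neg h]
        push_cast
        ring
  refine ⟨X, Y, ?_, ?_⟩
  · intro r hr
    simp only [lambdaRels, Set.mem_insert_iff, Set.mem_singleton_iff] at hr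
    rcases hr with rfl | rfl | rfl | rfl | rfl
    · rw [map_pow, FreeGroup.lift_apply_of]
      show X ^ 2 ^ α = 1
      ext x
      rw [← zpow_natCast, hXz, Equiv.Perm.one_apply]
      push_cast
      rw [hzero α le_rfl]
      ring
    · rw [map_pow, FreeGroup.lift_apply_of]
      show Y ^ 2 ^ β = 1
      ext i
      rw [← zpow_natCast, hYz, Equiv.Perm.one_apply]
      have h2β : (2 : ZMod (2 ^ α)) * ((2 : ZMod (2 ^ α))) ^ β = 0 := by
        rw [← pow_succ']
        exact hzero _ (by omega)
      split_ifs with h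
      · rfl
      · push_cast
        rw [h2β]
        ring
    · rw [map_pow, map_mul, FreeGroup.lift_apply_of, FreeGroup.lift_apply_of]
      show (X * Y) ^ 2 = 1
      ext i
      rw [sq, Equiv.Perm.mul_apply, Equiv.Perm.mul_apply, Equiv.Perm.mul_apply,
        Equiv.Perm.one_apply]
      by_cases h : par i = 0
      · rw [hYapp i, if_pos h, hXapp i]
        have h1 : par (1 + i) = 1 := by rw [map_add, map_one, h, add_zero]
        rw [hYapp (1 + i), if_neg (by rw [h1]; decide), hXapp]
        ring
      · rw [hYapp i, if_neg h, hXapp (i - 2)]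
        have h2 : par (1 + (i - 2)) = 0 := by
          rw [map_add, map_sub, hp2, sub_zero, map_one, hone _ h]
          decide
        rw [hYapp (1 + (i - 2)), if_pos h2, hXapp]
        ring
    · simp only [map_mul, map_inv, map_zpow, FreeGroup.lift_apply_of]
      show Y⁻¹ * X * (X ^ (3 : ℤ) * Y ^ (1 + ε * 2 ^ (β - 2)))⁻¹ = 1
      rw [mul_inv_eq_one, inv_mul_eq_iff_eq_mul]
      ext i
      rw [Equiv.Perm.mul_apply, Equiv.Perm.mul_apply, hYz, hXz, hXapp, hYapp]
      by_cases h : par i = 0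
      · rw [if_pos h]
        have h3 : par (((3 : ℤ) : ZMod (2 ^ α)) + i) = 1 := by
          push_cast
          rw [map_add, hp3, h, add_zero]
        rw [if_neg (by rw [h3]; decide)]
        push_cast
        ring
      · rw [if_neg h]
        have h3 : par (((3 : ℤ) : ZMod (2 ^ α)) +
            (i - 2 * ((1 + ε * 2 ^ (β - 2) : ℤ) : ZMod (2 ^ α)))) = 0 := by
          push_cast
          rw [map_add, hmul2, hp3, hone _ h]
          decide
        rw [if_pos h3]
        push_cast
        linear_combination ((ε : ZMod (2 ^ α))) * h21
    · simp only [map_mul, map_inv, map_zpow, FreeGroup.lift_apply_of]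
      show Y * X⁻¹ * (X ^ (-3 : ℤ) * Y ^ (-1 + ε * 2 ^ (β - 2)))⁻¹ = 1
      rw [mul_inv_eq_one, mul_inv_eq_iff_eq_mul, mul_assoc,
        show X ^ (-3 : ℤ) = (X ^ (3 : ℤ))⁻¹ by group, eq_inv_mul_iff_mul_eq]
      ext i
      rw [Equiv.Perm.mul_apply, Equiv.Perm.mul_apply, hYapp, hXz, hYz, hXapp]
      by_cases h : par i = 0
      · rw [if_pos h]
        have h1 : par (1 + i) = 1 := by rw [map_add, map_one, h, add_zero]
        rw [if_neg (by rw [h1]; decide)]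
        push_cast
        linear_combination ((ε : ZMod (2 ^ α))) * h21
      · rw [if_neg h]
        have h1 : par (1 + i) = 0 := by
          rw [map_add, map_one, hone _ h]
          decide
        rw [if_pos h1]
        push_cast
        ring
  · intro i hi
    rw [hXz, add_zero] at hi
    have := (ZMod.intCast_zmod_eq_zero_iff_dvd i (2 ^ α)).mp hi
    push_cast at this
    exact this

/-- `Λ(2^α, 2^β; 3, 1 + ε·2^(β-2), -3, -1 + ε·2^(β-2))` (for `α ≥ 3`, `β ≥ 5`,
`β ≥ α + 1`, `ε = ±1`) is the automorphism group of a tight chiral polyhedron of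
type `{2^α, 2^β}`. -/
theorem even_centrals_tight_chiral (α β : ℕ) (hα : 3 ≤ α) (hβ : 5 ≤ β)
    (hαβ : α + 1 ≤ β) (ε : ℤ) (hε : ε = 1 ∨ ε = -1) :
    let G := Lambda (2 ^ α) (2 ^ β) 3 (1 + ε * 2 ^ (β - 2)) (-3) (-1 + ε * 2 ^ (β - 2))
    let a : G := PresentedGroup.of 0
    let b : G := PresentedGroup.of 1
    Finite G ∧ orderOf a = 2 ^ α ∧ orderOf b = 2 ^ β ∧ (a * b) ^ 2 = 1 ∧
      Subgroup.zpowers a ⊓ Subgroup.zpowers b = ⊥ ∧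
      (∀ g : G, ∃ i j : ℤ, g = a ^ i * b ^ j) ∧
      ¬ ∃ φ : G ≃* G, φ a = a⁻¹ ∧ φ b = b⁻¹ := by
  intro G a b
  haveI : NeZero (2 ^ α) := ⟨pow_ne_zero _ two_ne_zero⟩
  haveI : NeZero (2 ^ β) := ⟨pow_ne_zero _ two_ne_zero⟩
  -- notation
  have hrel1 : ∀ r ∈ lambdaRels (2 ^ α) (2 ^ β) 3 (1 + ε * 2 ^ (β - 2)) (-3)
      (-1 + ε * 2 ^ (β - 2)),
      PresentedGroup.mk (lambdaRels (2 ^ α) (2 ^ β) 3 (1 + ε * 2 ^ (β - 2)) (-3)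
        (-1 + ε * 2 ^ (β - 2))) r = 1 := by
    intro r hr
    exact (QuotientGroup.eq_one_iff _).mpr (Subgroup.subset_normalClosure hr)
  have R1 : a ^ (2 ^ α) = 1 := by
    have := hrel1 _ (show _ ∈ _ from Set.mem_insert _ _)
    rw [map_pow] at this
    exact this
  have R2 : b ^ (2 ^ β) = 1 := by
    have := hrel1 ((FreeGroup.of 1) ^ 2 ^ β) (by simp [lambdaRels])
    rw [map_pow] at this
    exact this
  have R3 : (a * b) ^ 2 = 1 := by
    have := hrel1 ((FreeGroup.of 0 * FreeGroup.of 1) ^ 2) (by simp [lambdaRels])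
    rw [map_pow, map_mul] at this
    exact this
  have R4 : b⁻¹ * a = a ^ (3 : ℤ) * b ^ (1 + ε * 2 ^ (β - 2)) := by
    have := hrel1 ((FreeGroup.of 1)⁻¹ * FreeGroup.of 0 *
      ((FreeGroup.of 0) ^ (3 : ℤ) * (FreeGroup.of 1) ^ (1 + ε * 2 ^ (β - 2)))⁻¹)
      (by simp [lambdaRels])
    simp only [map_mul, map_inv, map_zpow] at this
    rw [mul_inv_eq_one] at this
    exact this
  have R5 : b * a⁻¹ = a ^ (-3 : ℤ) * b ^ (-1 + ε * 2 ^ (β - 2)) := by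
    have := hrel1 (FreeGroup.of 1 * (FreeGroup.of 0)⁻¹ *
      ((FreeGroup.of 0) ^ (-3 : ℤ) * (FreeGroup.of 1) ^ (-1 + ε * 2 ^ (β - 2)))⁻¹)
      (by simp [lambdaRels])
    simp only [map_mul, map_inv, map_zpow] at this
    rw [mul_inv_eq_one] at this
    exact this
  have bmod : ∀ {s s' : ℤ}, (s : ZMod (2 ^ β)) = (s' : ZMod (2 ^ β)) → b ^ s = b ^ s' :=
    fun h => TCaux.zpow_eq_of_zmod R2 h
  -- ZMod facts
  have hq2 : (2 : ZMod (2 ^ β)) ^ β = 0 := by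
    have := ZMod.natCast_self (2 ^ β)
    push_cast at this
    exact this
  have hqpow0 : ∀ e : ℕ, β ≤ e → (2 : ZMod (2 ^ β)) ^ e = 0 := by
    intro e he
    rw [← Nat.sub_add_cancel he, pow_add, hq2, mul_zero]
  have hpow23 : (2 : ZMod (2 ^ β)) ^ (β - 2) = 2 * 2 ^ (β - 3) := by
    rw [← pow_succ']
    congr 1
    omega
  have hD2 : ((ε : ZMod (2 ^ β)) * 2 ^ (β - 2)) ^ 2 = 0 := by
    have h1 : ((ε : ZMod (2 ^ β)) * 2 ^ (β - 2)) ^ 2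
        = (ε : ZMod (2 ^ β)) ^ 2 * 2 ^ ((β - 2) + (β - 2)) := by
      rw [pow_add]; ring
    rw [h1, hqpow0 _ (by omega), mul_zero]
  have h4T2 : 4 * ((ε : ZMod (2 ^ β)) * 2 ^ (β - 3)) ^ 2 = 0 := by
    have h1 : 4 * ((ε : ZMod (2 ^ β)) * 2 ^ (β - 3)) ^ 2
        = (ε : ZMod (2 ^ β)) ^ 2 * 2 ^ ((β - 3) + (β - 3) + 2) := by
      rw [pow_add, pow_add]; ring
    rw [h1, hqpow0 _ (by omega), mul_zero]
  -- group computations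
  have hba : b * a = a⁻¹ * b⁻¹ := by
    have h := R3
    rw [sq] at h
    calc b * a = a⁻¹ * (a * b * (a * b)) * b⁻¹ := by group
      _ = a⁻¹ * b⁻¹ := by rw [h]; group
  have hCa : b * a ^ (2 : ℤ) = a ^ (2 : ℤ) * b ^ (1 + ε * 2 ^ (β - 2)) := by
    calc b * a ^ (2 : ℤ) = (b * a) * a := by rw [zpow_two, ← mul_assoc]
      _ = (a⁻¹ * b⁻¹) * a := by rw [hba]
      _ = a⁻¹ * (b⁻¹ * a) := by group
      _ = a⁻¹ * (a ^ (3 : ℤ) * b ^ (1 + ε * 2 ^ (β - 2))) := by rw [R4]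
      _ = a ^ (2 : ℤ) * b ^ (1 + ε * 2 ^ (β - 2)) := by group
  have hconj : ∀ s : ℤ, b ^ ((1 + ε * 2 ^ (β - 2)) * s)
      = a ^ (-2 : ℤ) * b ^ s * a ^ (2 : ℤ) := by
    intro s
    have h1 : b ^ (1 + ε * 2 ^ (β - 2)) = a ^ (-2 : ℤ) * b * (a ^ (-2 : ℤ))⁻¹ := by
      calc b ^ (1 + ε * 2 ^ (β - 2))
          = a ^ (-2 : ℤ) * (a ^ (2 : ℤ) * b ^ (1 + ε * 2 ^ (β - 2))) := by group
        _ = a ^ (-2 : ℤ) * (b * a ^ (2 : ℤ)) := by rw [← hCa]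
        _ = a ^ (-2 : ℤ) * b * (a ^ (-2 : ℤ))⁻¹ := by group
    calc b ^ ((1 + ε * 2 ^ (β - 2)) * s) = (b ^ (1 + ε * 2 ^ (β - 2))) ^ s := zpow_mul b _ s
      _ = (a ^ (-2 : ℤ) * b * (a ^ (-2 : ℤ))⁻¹) ^ s := by rw [h1]
      _ = a ^ (-2 : ℤ) * b ^ s * (a ^ (-2 : ℤ))⁻¹ := conj_zpow
      _ = a ^ (-2 : ℤ) * b ^ s * a ^ (2 : ℤ) := by group
  have hE : ∀ s : ℤ, b ^ s * a ^ (2 : ℤ) = a ^ (2 : ℤ) * b ^ ((1 + ε * 2 ^ (β - 2)) * s) := by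
    intro s
    rw [hconj s]
    group
  have hEinv : ∀ s : ℤ, b ^ ((1 + ε * 2 ^ (β - 2)) * s) * a ^ (-2 : ℤ)
      = a ^ (-2 : ℤ) * b ^ s := by
    intro s
    rw [hconj s]
    group
  have hE2 : ∀ m s : ℤ, b ^ s * a ^ (2 * m)
      = a ^ (2 * m) * b ^ (s + ε * 2 ^ (β - 2) * m * s) := by
    intro m
    induction m using Int.induction_on with
    | zero =>
      intro s
      rw [show (2 * (0 : ℤ)) = 0 by ring, show s + ε * 2 ^ (β - 2) * 0 * s = s by ring]
      group
    | succ m ih =>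
      intro s
      rw [show (2 * ((m : ℤ) + 1)) = 2 * m + 2 by ring, zpow_add, ← mul_assoc, ih s,
        mul_assoc, hE (s + ε * 2 ^ (β - 2) * m * s), ← mul_assoc, ← zpow_add]
      rw [show (2 * (m : ℤ) + 2) = 2 * (m + 1) by ring]
      congr 1
      apply bmod
      push_cast
      linear_combination ((m : ZMod (2 ^ β)) * (s : ZMod (2 ^ β))) * hD2
    | pred m ih =>
      intro s
      have h2 : b ^ (s + ε * 2 ^ (β - 2) * (-m) * s) * a ^ (-2 : ℤ)
          = a ^ (-2 : ℤ) * b ^ (s + ε * 2 ^ (β - 2) * (-m - 1) * s) := by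
        rw [bmod (show ((s + ε * 2 ^ (β - 2) * (-m) * s : ℤ) : ZMod (2 ^ β))
          = (((1 + ε * 2 ^ (β - 2)) * (s + ε * 2 ^ (β - 2) * (-m - 1) * s) : ℤ)
            : ZMod (2 ^ β)) from by
          push_cast
          linear_combination (((m : ZMod (2 ^ β)) + 1) * (s : ZMod (2 ^ β))) * hD2)]
        exact hEinv _
      rw [show (2 * (-(m : ℤ) - 1)) = 2 * (-m) + (-2) by ring, zpow_add, ← mul_assoc,
        ih s, mul_assoc, h2, ← mul_assoc, ← zpow_add]
  have hM : ∀ s : ℤ, b ^ s * a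
      = a ^ (1 - 2 * s) * b ^ (ε * 2 ^ (β - 3) * s ^ 2 - (1 + ε * 2 ^ (β - 3)) * s) := by
    have key5 : ∀ s : ℤ, b * a ^ (1 - 2 * s)
        = a ^ (-1 - 2 * s) * b ^ ((-1 + ε * 2 ^ (β - 2))
          + ε * 2 ^ (β - 2) * (1 - s) * (-1 + ε * 2 ^ (β - 2))) := by
      intro s
      calc b * a ^ (1 - 2 * s) = (b * a⁻¹) * a ^ (2 * (1 - s)) := by group
        _ = (a ^ (-3 : ℤ) * b ^ (-1 + ε * 2 ^ (β - 2))) * a ^ (2 * (1 - s)) := by rw [R5]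
        _ = a ^ (-3 : ℤ) * (b ^ (-1 + ε * 2 ^ (β - 2)) * a ^ (2 * (1 - s))) := by group
        _ = a ^ (-3 : ℤ) * (a ^ (2 * (1 - s)) * b ^ ((-1 + ε * 2 ^ (β - 2))
            + ε * 2 ^ (β - 2) * (1 - s) * (-1 + ε * 2 ^ (β - 2)))) := by
          rw [hE2 (1 - s) (-1 + ε * 2 ^ (β - 2))]
        _ = a ^ (-1 - 2 * s) * b ^ ((-1 + ε * 2 ^ (β - 2))
            + ε * 2 ^ (β - 2) * (1 - s) * (-1 + ε * 2 ^ (β - 2))) := by group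
    have key4 : ∀ s : ℤ, b⁻¹ * a ^ (1 - 2 * s)
        = a ^ (3 - 2 * s) * b ^ ((1 + ε * 2 ^ (β - 2))
          + ε * 2 ^ (β - 2) * (-s) * (1 + ε * 2 ^ (β - 2))) := by
      intro s
      calc b⁻¹ * a ^ (1 - 2 * s) = (b⁻¹ * a) * a ^ (2 * (-s)) := by group
        _ = (a ^ (3 : ℤ) * b ^ (1 + ε * 2 ^ (β - 2))) * a ^ (2 * (-s)) := by rw [R4]
        _ = a ^ (3 : ℤ) * (b ^ (1 + ε * 2 ^ (β - 2)) * a ^ (2 * (-s))) := by group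
        _ = a ^ (3 : ℤ) * (a ^ (2 * (-s)) * b ^ ((1 + ε * 2 ^ (β - 2))
            + ε * 2 ^ (β - 2) * (-s) * (1 + ε * 2 ^ (β - 2)))) := by
          rw [hE2 (-s) (1 + ε * 2 ^ (β - 2))]
        _ = a ^ (3 - 2 * s) * b ^ ((1 + ε * 2 ^ (β - 2))
            + ε * 2 ^ (β - 2) * (-s) * (1 + ε * 2 ^ (β - 2))) := by group
    intro s
    induction s using Int.induction_on with
    | zero =>
      rw [show (ε * 2 ^ (β - 3) * (0 : ℤ) ^ 2 - (1 + ε * 2 ^ (β - 3)) * 0 : ℤ) = 0 by ring,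
        show (1 - 2 * (0 : ℤ)) = 1 by ring]
      group
    | succ s ih =>
      calc b ^ ((s : ℤ) + 1) * a = b * (b ^ (s : ℤ) * a) := by
            rw [show ((s : ℤ) + 1) = 1 + (s : ℤ) by ring, zpow_one_add, mul_assoc]
        _ = b * (a ^ (1 - 2 * (s : ℤ)) * b ^ (ε * 2 ^ (β - 3) * (s : ℤ) ^ 2
            - (1 + ε * 2 ^ (β - 3)) * (s : ℤ))) := by rw [ih]
        _ = (b * a ^ (1 - 2 * (s : ℤ))) * b ^ (ε * 2 ^ (β - 3) * (s : ℤ) ^ 2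
            - (1 + ε * 2 ^ (β - 3)) * (s : ℤ)) := by group
        _ = a ^ (-1 - 2 * (s : ℤ)) * b ^ (((-1 + ε * 2 ^ (β - 2))
            + ε * 2 ^ (β - 2) * (1 - (s : ℤ)) * (-1 + ε * 2 ^ (β - 2)))
            + (ε * 2 ^ (β - 3) * (s : ℤ) ^ 2 - (1 + ε * 2 ^ (β - 3)) * (s : ℤ))) := by
          rw [key5 (s : ℤ), mul_assoc, ← zpow_add]
        _ = a ^ (1 - 2 * ((s : ℤ) + 1)) * b ^ (ε * 2 ^ (β - 3) * ((s : ℤ) + 1) ^ 2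
            - (1 + ε * 2 ^ (β - 3)) * ((s : ℤ) + 1)) := by
          rw [show (-1 - 2 * (s : ℤ)) = 1 - 2 * ((s : ℤ) + 1) by ring]
          congr 1
          apply bmod
          push_cast
          rw [hpow23]
          linear_combination (1 - (s : ZMod (2 ^ β))) * h4T2
    | pred s ih =>
      calc b ^ (-(s : ℤ) - 1) * a = b⁻¹ * (b ^ (-(s : ℤ)) * a) := by
            rw [show (-(s : ℤ) - 1) = -1 + -(s : ℤ) by ring, zpow_add, zpow_neg_one, mul_assoc]
        _ = b⁻¹ * (a ^ (1 - 2 * (-(s : ℤ))) * b ^ (ε * 2 ^ (β - 3) * (-(s : ℤ)) ^ 2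
            - (1 + ε * 2 ^ (β - 3)) * (-(s : ℤ)))) := by rw [ih]
        _ = (b⁻¹ * a ^ (1 - 2 * (-(s : ℤ)))) * b ^ (ε * 2 ^ (β - 3) * (-(s : ℤ)) ^ 2
            - (1 + ε * 2 ^ (β - 3)) * (-(s : ℤ))) := by group
        _ = a ^ (3 - 2 * (-(s : ℤ))) * b ^ (((1 + ε * 2 ^ (β - 2))
            + ε * 2 ^ (β - 2) * (-(-(s : ℤ))) * (1 + ε * 2 ^ (β - 2)))
            + (ε * 2 ^ (β - 3) * (-(s : ℤ)) ^ 2 - (1 + ε * 2 ^ (β - 3)) * (-(s : ℤ)))) := by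
          rw [key4 (-(s : ℤ)), mul_assoc, ← zpow_add]
        _ = a ^ (1 - 2 * (-(s : ℤ) - 1)) * b ^ (ε * 2 ^ (β - 3) * (-(s : ℤ) - 1) ^ 2
            - (1 + ε * 2 ^ (β - 3)) * (-(s : ℤ) - 1)) := by
          rw [show (3 - 2 * (-(s : ℤ))) = 1 - 2 * (-(s : ℤ) - 1) by ring]
          congr 1
          apply bmod
          push_cast
          rw [hpow23]
          linear_combination ((s : ZMod (2 ^ β))) * h4T2
  have hPush : ∀ s k : ℤ, ∃ i j : ℤ, b ^ s * a ^ k = a ^ i * b ^ j := by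
    intro s k
    rcases Int.even_or_odd k with ⟨m, hm⟩ | ⟨m, hm⟩
    · exact ⟨2 * m, s + ε * 2 ^ (β - 2) * m * s, by
        rw [hm, show ((m : ℤ) + m) = 2 * m by ring, hE2]⟩
    · refine ⟨1 - 2 * s + 2 * m, (ε * 2 ^ (β - 3) * s ^ 2 - (1 + ε * 2 ^ (β - 3)) * s)
        + ε * 2 ^ (β - 2) * m * (ε * 2 ^ (β - 3) * s ^ 2 - (1 + ε * 2 ^ (β - 3)) * s), ?_⟩
      rw [hm]
      calc b ^ s * a ^ (2 * m + 1) = (b ^ s * a) * a ^ (2 * m) := by group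
        _ = a ^ (1 - 2 * s) * (b ^ (ε * 2 ^ (β - 3) * s ^ 2 - (1 + ε * 2 ^ (β - 3)) * s)
            * a ^ (2 * m)) := by rw [hM s]; group
        _ = a ^ (1 - 2 * s) * (a ^ (2 * m) * b ^ ((ε * 2 ^ (β - 3) * s ^ 2
            - (1 + ε * 2 ^ (β - 3)) * s) + ε * 2 ^ (β - 2) * m * (ε * 2 ^ (β - 3) * s ^ 2
            - (1 + ε * 2 ^ (β - 3)) * s))) := by rw [hE2 m _]
        _ = a ^ (1 - 2 * s + 2 * m) * b ^ ((ε * 2 ^ (β - 3) * s ^ 2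
            - (1 + ε * 2 ^ (β - 3)) * s) + ε * 2 ^ (β - 2) * m * (ε * 2 ^ (β - 3) * s ^ 2
            - (1 + ε * 2 ^ (β - 3)) * s)) := by group
  have hTight : ∀ g : G, ∃ i j : ℤ, g = a ^ i * b ^ j := by
    intro g
    refine PresentedGroup.induction_on (C := fun g => ∃ i j : ℤ, g = a ^ i * b ^ j) g ?_
    intro w
    induction w using FreeGroup.induction_on with
    | C1 => exact ⟨0, 0, by simp⟩
    | of x =>
      fin_cases x
      · refine ⟨1, 0, ?_⟩
        simp only [zpow_one, zpow_zero, mul_one]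
        rfl
      · refine ⟨0, 1, ?_⟩
        simp only [zpow_one, zpow_zero, one_mul]
        rfl
    | inv_of x ih =>
      obtain ⟨i, j, hij⟩ := ih
      obtain ⟨i', j', hij'⟩ := hPush (-j) (-i)
      refine ⟨i', j', ?_⟩
      rw [map_inv, hij, ← hij']
      group
    | mul x y ihx ihy =>
      obtain ⟨i, j, hij⟩ := ihx
      obtain ⟨k, l, hkl⟩ := ihy
      obtain ⟨i', j', hij'⟩ := hPush j k
      refine ⟨i + i', j' + l, ?_⟩
      rw [map_mul, hij, hkl]
      calc a ^ i * b ^ j * (a ^ k * b ^ l) = a ^ i * (b ^ j * a ^ k) * b ^ l := by group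
        _ = a ^ i * (a ^ i' * b ^ j') * b ^ l := by rw [hij']
        _ = a ^ (i + i') * b ^ (j' + l) := by group
  -- finiteness
  have hFin : Finite G := by
    have hsurj : Function.Surjective
        (fun x : ZMod (2 ^ α) × ZMod (2 ^ β) => a ^ (x.1.val : ℤ) * b ^ (x.2.val : ℤ)) := by
      intro g
      obtain ⟨i, j, rfl⟩ := hTight g
      refine ⟨((i : ZMod (2 ^ α)), (j : ZMod (2 ^ β))), ?_⟩
      have h1 : a ^ (((i : ZMod (2 ^ α)).val : ℤ)) = a ^ i := by
        apply TCaux.zpow_eq_of_zmod R1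
        push_cast
        rw [ZMod.natCast_val, ZMod.cast_id]
      have h2 : b ^ (((j : ZMod (2 ^ β)).val : ℤ)) = b ^ j := by
        apply TCaux.zpow_eq_of_zmod R2
        push_cast
        rw [ZMod.natCast_val, ZMod.cast_id]
      simp only [h1, h2]
    exact Finite.of_surjective _ hsurj
  -- homomorphisms to the models
  obtain ⟨A, B, hABrels, hAfix, hBdvd⟩ := TCaux.sigma_model α β hα hβ hαβ ε
  obtain ⟨X, Y, hXYrels, hXdvd⟩ := TCaux.tau_model α β hα hβ hαβ ε
  set σ := PresentedGroup.toGroup hABrels with hσ_def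
  set τ := PresentedGroup.toGroup hXYrels with hτ_def
  have hσa : σ a = A := by
    rw [show a = PresentedGroup.of 0 from rfl, PresentedGroup.toGroup.of]
    rfl
  have hσb : σ b = B := by
    rw [show b = PresentedGroup.of 1 from rfl, PresentedGroup.toGroup.of]
    rfl
  have hτa : τ a = X := by
    rw [show a = PresentedGroup.of 0 from rfl, PresentedGroup.toGroup.of]
    rfl
  -- order of a
  have hOrdA : orderOf a = 2 ^ α := by
    have h1 : orderOf a ∣ 2 ^ α := orderOf_dvd_of_pow_eq_one R1
    have h2 : (2 ^ α : ℤ) ∣ (orderOf a : ℤ) := by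
      apply hXdvd
      have : (X ^ (orderOf a : ℤ)) = 1 := by
        rw [← hτa, ← map_zpow, zpow_natCast, pow_orderOf_eq_one, map_one]
      rw [this]
      rfl
    have h2' : 2 ^ α ∣ orderOf a := by exact_mod_cast h2
    exact Nat.dvd_antisymm h1 h2'
  -- order of b
  have hOrdB : orderOf b = 2 ^ β := by
    have h1 : orderOf b ∣ 2 ^ β := orderOf_dvd_of_pow_eq_one R2
    have h2 : (2 ^ β : ℤ) ∣ (orderOf b : ℤ) := by
      apply hBdvd
      have : (B ^ (orderOf b : ℤ)) = 1 := by
        rw [← hσb, ← map_zpow, zpow_natCast, pow_orderOf_eq_one, map_one]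
      rw [this]
      rfl
    have h2' : 2 ^ β ∣ orderOf b := by exact_mod_cast h2
    exact Nat.dvd_antisymm h1 h2'
  -- trivial intersection
  have hInf : Subgroup.zpowers a ⊓ Subgroup.zpowers b = ⊥ := by
    rw [eq_bot_iff]
    intro g hg
    obtain ⟨i, hi⟩ := Subgroup.mem_zpowers_iff.mp (Subgroup.mem_inf.mp hg).1
    obtain ⟨j, hj⟩ := Subgroup.mem_zpowers_iff.mp (Subgroup.mem_inf.mp hg).2
    have hBj : (B ^ j) 0 = 0 := by
      have h1 : B ^ j = A ^ i := by
        rw [← hσa, ← hσb, ← map_zpow, ← map_zpow, hi, hj]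
      rw [h1, hAfix i]
    have hdvd := hBdvd j hBj
    have hj1 : b ^ j = 1 := by
      have : b ^ j = b ^ (0 : ℤ) := by
        apply bmod
        rw [(ZMod.intCast_zmod_eq_zero_iff_dvd j (2 ^ β)).mpr (by exact_mod_cast hdvd)]
        norm_num
      rw [this, zpow_zero]
    rw [Subgroup.mem_bot, ← hj, hj1]
  -- chirality
  have hChir : ¬ ∃ φ : G ≃* G, φ a = a⁻¹ ∧ φ b = b⁻¹ := by
    rintro ⟨φ, hφa, hφb⟩
    have h1 : b * a⁻¹ = a ^ (-3 : ℤ) * b ^ (-(1 + ε * 2 ^ (β - 2))) := by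
      have h := congrArg φ R4
      simp only [map_mul, map_inv, map_zpow, hφa, hφb, inv_inv] at h
      calc b * a⁻¹ = (a⁻¹) ^ (3 : ℤ) * (b⁻¹) ^ (1 + ε * 2 ^ (β - 2)) := h
        _ = a ^ (-3 : ℤ) * b ^ (-(1 + ε * 2 ^ (β - 2))) := by group
    have h3 : b ^ (-1 + ε * 2 ^ (β - 2)) = b ^ (-(1 + ε * 2 ^ (β - 2))) :=
      mul_left_cancel (R5.symm.trans h1)
    have h2 : b ^ ((-1 + ε * 2 ^ (β - 2)) + (1 + ε * 2 ^ (β - 2))) = 1 := by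
      rw [zpow_add, h3, ← zpow_add,
        show (-(1 + ε * 2 ^ (β - 2)) + (1 + ε * 2 ^ (β - 2)) : ℤ) = 0 by ring, zpow_zero]
    have hdvd : ((orderOf b : ℕ) : ℤ) ∣ ((-1 + ε * 2 ^ (β - 2)) + (1 + ε * 2 ^ (β - 2))) :=
      orderOf_dvd_iff_zpow_eq_one.mpr h2
    rw [hOrdB] at hdvd
    rw [show ((-1 + ε * 2 ^ (β - 2)) + (1 + ε * 2 ^ (β - 2)) : ℤ) = ε * 2 ^ ((β - 2) + 1)
      by rw [pow_succ]; ring] at hdvd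
    push_cast at hdvd
    have hd2 : (2 : ℤ) ^ β ∣ 2 ^ ((β - 2) + 1) := by
      rcases hε with rfl | rfl
      · simpa using hdvd
      · rw [show ((-1 : ℤ) * 2 ^ ((β - 2) + 1)) = -(2 ^ ((β - 2) + 1)) by ring] at hdvd
        exact dvd_neg.mp hdvd
    have hd2' : (2 : ℕ) ^ β ∣ 2 ^ ((β - 2) + 1) := by exact_mod_cast hd2
    have hle := (Nat.pow_dvd_pow_iff_le_right (by norm_num : 1 < 2)).mp hd2'
    omega
  exact ⟨hFin, hOrdA, hOrdB, R3, hInf, hTight, hChir⟩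
end
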